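/- arXiv:1906.04642 — 7 statements merged into one kernel-verified Lean document; each statement's English description precedes it below -/
import Mathlib

section
/- Let X be a Banach space and A, B : ℝ → L(X) continuous with ‖A(t)‖ ≤ M and ‖B(t)‖ ≤ M for all t. Let T(t,s) be the evolution operator of ẋ = A(t)x satisfying ‖T(t,s)‖ ≤ K e^{α(t−s)} for t ≥ s, with K ≥ 1. Suppose ‖∫_{t₁}^{t₂} B(t) dt‖ ≤ δ whenever |t₂ − t₁| ≤ h. Then the evolution operator S(t,s) of ẏ = A(t)y + B(t)y satisfies ‖S(t,s)‖ ≤ (1+δ)K e^{β(t−s)} for t ≥ s, where β = α + 3MKδ + log((1+δ)K)/h. -/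
set_option synthInstance.maxHeartbeats 1000000
set_option maxHeartbeats 2000000
set_option linter.unusedVariables false
set_option linter.unusedSectionVars false

section CoppelHelpers

variable {X : Type*} [NormedAddCommGroup X] [NormedSpace ℝ X]

/-- Forward Gronwall growth estimate. -/
lemma gron_fwd {v d : ℝ → X} {L a b : ℝ} (hL : 0 ≤ L) (hab : a ≤ b)
    (hv : ∀ r ∈ Set.Icc a b, HasDerivAt v (d r) r)
    (hd : ∀ r ∈ Set.Icc a b, ‖d r‖ ≤ L * ‖v r‖) :
    ‖v b‖ ≤ ‖v a‖ * Real.exp (L * (b - a)) := by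
  have h := norm_le_gronwallBound_of_norm_deriv_right_le (f := v) (f' := d)
    (δ := ‖v a‖) (K := L) (ε := 0) (a := a) (b := b)
    (fun r hr => (hv r hr).continuousAt.continuousWithinAt)
    (fun r hr => (hv r (Set.Ico_subset_Icc_self hr)).hasDerivWithinAt)
    le_rfl
    (fun r hr => by
      simpa using hd r (Set.Ico_subset_Icc_self hr))
    b (Set.right_mem_Icc.2 hab)
  rwa [gronwallBound_ε0] at h

/-- Backward Gronwall growth estimate. -/
lemma gron_bwd {v d : ℝ → X} {L a b : ℝ} (hL : 0 ≤ L) (hab : a ≤ b)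
    (hv : ∀ r ∈ Set.Icc a b, HasDerivAt v (d r) r)
    (hd : ∀ r ∈ Set.Icc a b, ‖d r‖ ≤ L * ‖v r‖) :
    ‖v a‖ ≤ ‖v b‖ * Real.exp (L * (b - a)) := by
  have hmem : ∀ r ∈ Set.Icc a b, a + b - r ∈ Set.Icc a b := by
    intro r hr; exact ⟨by linarith [hr.2], by linarith [hr.1]⟩
  have key : ‖v (a + b - b)‖ ≤ ‖v (a + b - a)‖ * Real.exp (L * (b - a)) := by
    apply gron_fwd (v := fun r => v (a + b - r)) (d := fun r => (-1 : ℝ) • d (a + b - r))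
      hL hab
    · intro r hr
      exact (hv _ (hmem r hr)).scomp r ((hasDerivAt_id r).const_sub (a + b))
    · intro r hr
      simp only [norm_smul, norm_neg, norm_one, one_mul]
      exact hd _ (hmem r hr)
  simpa using key

/-- Two-sided uniqueness for linear ODEs with bounded coefficients. -/
lemma ode_uniq {C : ℝ → X →L[ℝ] X} {L : ℝ} (hL : 0 ≤ L)
    (hC : ∀ r, ‖C r‖ ≤ L) {v w : ℝ → X}
    (hv : ∀ r, HasDerivAt v (C r (v r)) r) (hw : ∀ r, HasDerivAt w (C r (w r)) r)
    {p q : ℝ} (hpq : v p = w p) : v q = w q := by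
  set z : ℝ → X := fun r => v r - w r with hz
  have hzd : ∀ r, HasDerivAt z (C r (z r)) r := by
    intro r
    have := (hv r).sub (hw r)
    rw [show C r (z r) = C r (v r) - C r (w r) by simp [hz, map_sub]]
    exact this
  have hzb : ∀ r, ‖C r (z r)‖ ≤ L * ‖z r‖ := fun r =>
    le_trans ((C r).le_opNorm _) (mul_le_mul_of_nonneg_right (hC r) (norm_nonneg _))
  have hzp : z p = 0 := by simp [hz, hpq]
  have : z q = 0 := by
    rcases le_total p q with hle | hle
    · have := gron_fwd (v := z) (d := fun r => C r (z r)) hL hle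
        (fun r _ => hzd r) (fun r _ => hzb r)
      rw [hzp] at this
      simpa using norm_le_zero_iff.1 (by simpa using this)
    · have := gron_bwd (v := z) (d := fun r => C r (z r)) hL hle
        (fun r _ => hzd r) (fun r _ => hzb r)
      rw [hzp] at this
      simpa using norm_le_zero_iff.1 (by simpa using this)
  have h2 : v q - w q = 0 := this
  exact sub_eq_zero.1 h2


variable [CompleteSpace X]

/-- A priori bound on the evolution operator. -/
lemma evol_bound {A : ℝ → X →L[ℝ] X} {M : ℝ} (hM : 0 ≤ M) (hAb : ∀ t, ‖A t‖ ≤ M)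
    {T : ℝ → ℝ → X →L[ℝ] X} (hT0 : ∀ s, T s s = 1)
    (hTderiv : ∀ s (x : X) (t : ℝ), HasDerivAt (fun r => T r s x) (A t (T t s x)) t)
    (q r : ℝ) : ‖T r q‖ ≤ Real.exp (M * |r - q|) := by
  apply ContinuousLinearMap.opNorm_le_bound _ (Real.exp_pos _).le
  intro x
  have hder : ∀ ρ, HasDerivAt (fun r => T r q x) (A ρ (T ρ q x)) ρ := hTderiv q x
  have hbd : ∀ ρ, ‖A ρ (T ρ q x)‖ ≤ M * ‖T ρ q x‖ := fun ρ =>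
    le_trans ((A ρ).le_opNorm _) (mul_le_mul_of_nonneg_right (hAb ρ) (norm_nonneg _))
  rcases le_total q r with hle | hle
  · have := gron_fwd (v := fun r => T r q x) (d := fun ρ => A ρ (T ρ q x)) hM hle
      (fun ρ _ => hder ρ) (fun ρ _ => hbd ρ)
    replace this : ‖T r q x‖ ≤ ‖x‖ * Real.exp (M * (r - q)) := by
      simpa [hT0] using this
    calc ‖T r q x‖ ≤ ‖x‖ * Real.exp (M * (r - q)) := this
      _ = Real.exp (M * |r - q|) * ‖x‖ := by rw [abs_of_nonneg (by linarith)]; ring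
  · have := gron_bwd (v := fun r => T r q x) (d := fun ρ => A ρ (T ρ q x)) hM hle
      (fun ρ _ => hder ρ) (fun ρ _ => hbd ρ)
    replace this : ‖T r q x‖ ≤ ‖x‖ * Real.exp (M * (q - r)) := by
      simpa [hT0] using this
    calc ‖T r q x‖ ≤ ‖x‖ * Real.exp (M * (q - r)) := this
      _ = Real.exp (M * |r - q|) * ‖x‖ := by
          rw [abs_of_nonpos (by linarith), neg_sub]; ring

/-- The evolution operator is continuous in operator norm. -/
lemma evol_cont {A : ℝ → X →L[ℝ] X} (hAc : Continuous A)
    {M : ℝ} (hM : 0 ≤ M) (hAb : ∀ t, ‖A t‖ ≤ M)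
    {T : ℝ → ℝ → X →L[ℝ] X} (hT0 : ∀ s, T s s = 1)
    (hTderiv : ∀ s (x : X) (t : ℝ), HasDerivAt (fun r => T r s x) (A t (T t s x)) t)
    (q : ℝ) : Continuous (fun r => T r q) := by
  rw [continuous_iff_continuousAt]
  intro p
  set Cb : ℝ := Real.exp (M * (|p - q| + 1)) with hCb
  have hCb0 : 0 ≤ M * Cb := by positivity
  have hloc : ∀ p' ∈ Set.Icc (p - 1) (p + 1), ‖T p' q - T p q‖ ≤ M * Cb * |p' - p| := by
    intro p' hp'
    apply ContinuousLinearMap.opNorm_le_bound _ (by positivity)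
    intro x
    have hcont : Continuous fun ρ => A ρ (T ρ q x) := by
      apply hAc.clm_apply
      exact continuous_iff_continuousAt.2 fun ρ => (hTderiv q x ρ).continuousAt
    have hftc : ∫ ρ in p..p', A ρ (T ρ q x) = T p' q x - T p q x :=
      intervalIntegral.integral_eq_sub_of_hasDerivAt
        (fun ρ _ => hTderiv q x ρ) (hcont.intervalIntegrable _ _)
    have hbnd : ∀ ρ ∈ Set.uIoc p p', ‖A ρ (T ρ q x)‖ ≤ M * Cb * ‖x‖ := by
      intro ρ hρ
      have hρ' : ρ ∈ Set.uIcc p p' := Set.uIoc_subset_uIcc hρ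
      have h2 : ρ ∈ Set.Icc (p - 1) (p + 1) := by
        rcases le_total p p' with hc | hc
        · rw [Set.uIcc_of_le hc] at hρ'
          exact ⟨by linarith [hρ'.1, hp'.1, hp'.2], by linarith [hρ'.2, hp'.2]⟩
        · rw [Set.uIcc_of_ge hc] at hρ'
          exact ⟨by linarith [hρ'.1, hp'.1], by linarith [hρ'.2, hp'.2]⟩
      have h1 : |ρ - q| ≤ |p - q| + 1 := by
        have h6 : |ρ - q| ≤ |ρ - p| + |p - q| := abs_sub_le ρ p q
        have h5 : |ρ - p| ≤ 1 := abs_le.2 ⟨by linarith [h2.1], by linarith [h2.2]⟩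
        linarith
      calc ‖A ρ (T ρ q x)‖ ≤ M * (‖T ρ q‖ * ‖x‖) := by
            refine le_trans ((A ρ).le_opNorm _) ?_
            exact mul_le_mul (hAb ρ) ((T ρ q).le_opNorm x) (norm_nonneg _) hM
        _ ≤ M * (Cb * ‖x‖) := by
            refine mul_le_mul_of_nonneg_left (mul_le_mul_of_nonneg_right ?_ (norm_nonneg x)) hM
            refine le_trans (evol_bound hM hAb hT0 hTderiv q ρ) ?_
            exact Real.exp_le_exp.2 (mul_le_mul_of_nonneg_left h1 hM)
        _ = M * Cb * ‖x‖ := by ring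
    have := intervalIntegral.norm_integral_le_of_norm_le_const hbnd
    rw [hftc] at this
    calc ‖(T p' q - T p q) x‖ = ‖T p' q x - T p q x‖ := by
          simp [ContinuousLinearMap.sub_apply]
      _ ≤ M * Cb * ‖x‖ * |p' - p| := this
      _ = M * Cb * |p' - p| * ‖x‖ := by ring
  rw [Metric.continuousAt_iff]
  intro ε hε
  refine ⟨min 1 (ε / (M * Cb + 1)), by positivity, ?_⟩
  intro p' hp'
  rw [dist_eq_norm] at hp' ⊢
  have h1 : |p' - p| < min 1 (ε / (M * Cb + 1)) := by rwa [← Real.norm_eq_abs]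
  have h2 : p' ∈ Set.Icc (p - 1) (p + 1) := by
    rcases abs_lt.1 (lt_of_lt_of_le h1 (min_le_left _ _)) with ⟨ha, hb⟩
    exact ⟨by linarith, by linarith⟩
  calc ‖T p' q - T p q‖ ≤ M * Cb * |p' - p| := hloc p' h2
    _ ≤ (M * Cb + 1) * |p' - p| := by
        have := abs_nonneg (p' - p); nlinarith
    _ < (M * Cb + 1) * (ε / (M * Cb + 1)) := by
        refine mul_lt_mul_of_pos_left (lt_of_lt_of_le h1 (min_le_right _ _)) (by positivity)
    _ = ε := by field_simp


/-- Norm-differentiability of the evolution operator in its first variable. -/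
lemma evol_norm_deriv {A : ℝ → X →L[ℝ] X} (hAc : Continuous A)
    {M : ℝ} (hM : 0 ≤ M) (hAb : ∀ t, ‖A t‖ ≤ M)
    {T : ℝ → ℝ → X →L[ℝ] X} (hT0 : ∀ s, T s s = 1)
    (hTderiv : ∀ s (x : X) (t : ℝ), HasDerivAt (fun r => T r s x) (A t (T t s x)) t)
    (q p : ℝ) : HasDerivAt (fun r => T r q) (A p * T p q) p := by
  have hU : Continuous (fun r => T r q) := evol_cont hAc hM hAb hT0 hTderiv q
  have hAU : Continuous (fun ρ => A ρ * T ρ q) := hAc.mul hU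
  have hkey : (fun p' => T p' q) =
      fun p' => T q q + ∫ ρ in q..p', A ρ * T ρ q := by
    funext p'
    apply ContinuousLinearMap.ext
    intro x
    have hcont : Continuous fun ρ => A ρ (T ρ q x) := by
      apply hAc.clm_apply
      exact continuous_iff_continuousAt.2 fun ρ => (hTderiv q x ρ).continuousAt
    have hftc : ∫ ρ in q..p', A ρ (T ρ q x) = T p' q x - T q q x :=
      intervalIntegral.integral_eq_sub_of_hasDerivAt
        (fun ρ _ => hTderiv q x ρ) (hcont.intervalIntegrable _ _)
    have happ : (∫ ρ in q..p', A ρ * T ρ q) x = ∫ ρ in q..p', (A ρ * T ρ q) x :=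
      ContinuousLinearMap.intervalIntegral_apply (hAU.intervalIntegrable _ _) x
    simp only [ContinuousLinearMap.add_apply, happ, ContinuousLinearMap.mul_apply, hftc]
    abel
  rw [hkey]
  have hftc1 : HasDerivAt (fun p' => ∫ ρ in q..p', A ρ * T ρ q) (A p * T p q) p :=
    intervalIntegral.integral_hasDerivAt_right (hAU.intervalIntegrable _ _)
      hAU.aestronglyMeasurable.stronglyMeasurableAtFilter hAU.continuousAt
  exact hftc1.const_add _

/-- Pointwise cocycle property. -/
lemma evol_cocycle {A : ℝ → X →L[ℝ] X}
    {M : ℝ} (hM : 0 ≤ M) (hAb : ∀ t, ‖A t‖ ≤ M)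
    {T : ℝ → ℝ → X →L[ℝ] X} (hT0 : ∀ s, T s s = 1)
    (hTderiv : ∀ s (x : X) (t : ℝ), HasDerivAt (fun r => T r s x) (A t (T t s x)) t)
    (p q r : ℝ) (x : X) : T p q (T q r x) = T p r x := by
  have := ode_uniq (C := A) hM hAb
    (v := fun ρ => T ρ q (T q r x)) (w := fun ρ => T ρ r x)
    (fun ρ => hTderiv q (T q r x) ρ) (fun ρ => hTderiv r x ρ)
    (p := q) (q := p) (by show T q q (T q r x) = T q r x; rw [hT0]; simp)
  exact this

/-- Norm-differentiability of the evolution operator in its second variable. -/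
lemma evol_inv_deriv {A : ℝ → X →L[ℝ] X} (hAc : Continuous A)
    {M : ℝ} (hM : 0 ≤ M) (hAb : ∀ t, ‖A t‖ ≤ M)
    {T : ℝ → ℝ → X →L[ℝ] X} (hT0 : ∀ s, T s s = 1)
    (hTderiv : ∀ s (x : X) (t : ℝ), HasDerivAt (fun r => T r s x) (A t (T t s x)) t)
    (q u : ℝ) : HasDerivAt (fun r => T q r) (-(T q u * A u)) u := by
  have hmul : ∀ r r', T r r' * T r' r = 1 := by
    intro r r'
    apply ContinuousLinearMap.ext
    intro x
    simp only [ContinuousLinearMap.mul_apply, ContinuousLinearMap.one_apply]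
    rw [evol_cocycle hM hAb hT0 hTderiv r r' r x, hT0]
    simp
  set e : ℝ → (X →L[ℝ] X)ˣ := fun r => ⟨T r q, T q r, hmul r q, hmul q r⟩ with he
  have hfun : (fun r => T q r) = fun r => Ring.inverse (T r q) := by
    funext r
    exact (Ring.inverse_unit (e r)).symm
  rw [hfun]
  have h1 : HasFDerivAt Ring.inverse
      (-ContinuousLinearMap.mulLeftRight ℝ (X →L[ℝ] X) ↑(e u)⁻¹ ↑(e u)⁻¹) (T u q) :=
    hasFDerivAt_ringInverse (e u)
  have h2 : HasDerivAt (fun r => T r q) (A u * T u q) u :=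
    evol_norm_deriv hAc hM hAb hT0 hTderiv q u
  have h3 := h1.comp_hasDerivAt u h2
  refine h3.congr_deriv ?_
  symm
  show -(T q u * A u) = -ContinuousLinearMap.mulLeftRight ℝ (X →L[ℝ] X)
      (↑(e u)⁻¹) (↑(e u)⁻¹) (A u * T u q)
  have hval : (↑(e u)⁻¹ : X →L[ℝ] X) = T q u := rfl
  simp only [ContinuousLinearMap.neg_apply, ContinuousLinearMap.mulLeftRight_apply, hval,
    neg_inj]
  rw [← mul_assoc, mul_assoc (T q u * A u), hmul u q, mul_one]

/-- Integral form of Gronwall's inequality. -/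
lemma int_gronwall {N : ℝ → ℝ} {s t C L : ℝ} (hst : s ≤ t) (hL : 0 < L) (hC : 0 ≤ C)
    (hNc : Continuous N) (hN0 : ∀ u, 0 ≤ N u)
    (hineq : ∀ u ∈ Set.Icc s t, N u ≤ C + L * ∫ r in s..u, N r) :
    N t ≤ C * Real.exp (L * (t - s)) := by
  set Φ : ℝ → ℝ := fun u => ∫ r in s..u, N r with hΦdef
  have hΦ : ∀ u, HasDerivAt Φ (N u) u := fun u =>
    intervalIntegral.integral_hasDerivAt_right (hNc.intervalIntegrable _ _)
      hNc.aestronglyMeasurable.stronglyMeasurableAtFilter hNc.continuousAt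
  have hΦ0 : ∀ u ∈ Set.Icc s t, 0 ≤ Φ u := fun u hu =>
    intervalIntegral.integral_nonneg hu.1 (fun r _ => hN0 r)
  have hg := norm_le_gronwallBound_of_norm_deriv_right_le (f := Φ) (f' := N)
    (δ := 0) (K := L) (ε := C) (a := s) (b := t)
    (fun u hu => (hΦ u).continuousAt.continuousWithinAt)
    (fun u hu => (hΦ u).hasDerivWithinAt)
    (by simp [hΦdef])
    (fun u hu => by
      have h1 : N u ≤ C + L * Φ u := hineq u (Set.Ico_subset_Icc_self hu)
      have e1 : ‖N u‖ = N u := Real.norm_of_nonneg (hN0 u)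
      have e2 : ‖Φ u‖ = Φ u := Real.norm_of_nonneg (hΦ0 u (Set.Ico_subset_Icc_self hu))
      rw [e1, e2]
      linarith)
    t (Set.right_mem_Icc.2 hst)
  rw [gronwallBound_of_K_ne_0 hL.ne'] at hg
  simp only [zero_mul, zero_add] at hg
  have h3 : N t ≤ C + L * Φ t := hineq t (Set.right_mem_Icc.2 hst)
  have h4 : ‖Φ t‖ = Φ t := Real.norm_of_nonneg (hΦ0 t (Set.right_mem_Icc.2 hst))
  rw [h4] at hg
  have h5 : L * Φ t ≤ L * (C / L * (Real.exp (L * (t - s)) - 1)) :=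
    mul_le_mul_of_nonneg_left hg hL.le
  have h6 : L * (C / L * (Real.exp (L * (t - s)) - 1)) =
      C * Real.exp (L * (t - s)) - C := by
    field_simp
  linarith


end CoppelHelpers

/-- Coppel-type robustness, bounded case.
If `T` is the evolution operator of `ẋ = A(t)x`, with `‖T(t,s)‖ ≤ K e^{α(t-s)}`
for `t ≥ s`, and `B` is integrally small (`‖∫_{t₁}^{t₂} B‖ ≤ δ` whenever
`|t₂ - t₁| ≤ h`), then the evolution operator `S` of `ẏ = A(t)y + B(t)y`
satisfies `‖S(t,s)‖ ≤ (1+δ) K e^{β (t-s)}` for `t ≥ s`, where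
`β = α + 3MKδ + log((1+δ)K)/h`. -/
theorem stmt0 {X : Type*} [NormedAddCommGroup X] [NormedSpace ℝ X] [CompleteSpace X]
    (A B : ℝ → X →L[ℝ] X) (hAc : Continuous A) (hBc : Continuous B)
    (M K α δ h : ℝ) (hM : 0 < M) (hK : 1 ≤ K) (hδ : 0 < δ) (hh : 0 < h)
    (hAb : ∀ t, ‖A t‖ ≤ M) (hBb : ∀ t, ‖B t‖ ≤ M)
    (T S : ℝ → ℝ → X →L[ℝ] X)
    (hT0 : ∀ s, T s s = 1)
    (hTderiv : ∀ s (x : X) (t : ℝ), HasDerivAt (fun r => T r s x) (A t (T t s x)) t)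
    (hTbound : ∀ s t, s ≤ t → ‖T t s‖ ≤ K * Real.exp (α * (t - s)))
    (hBint : ∀ t₁ t₂ : ℝ, |t₂ - t₁| ≤ h → ‖∫ t in t₁..t₂, B t‖ ≤ δ)
    (hS0 : ∀ s, S s s = 1)
    (hSderiv : ∀ s (x : X) (t : ℝ),
      HasDerivAt (fun r => S r s x) (A t (S t s x) + B t (S t s x)) t) :
    ∀ s t, s ≤ t →
      ‖S t s‖ ≤ (1 + δ) * K *
        Real.exp ((α + 3 * M * K * δ + Real.log ((1 + δ) * K) / h) * (t - s)) := by
  have hM' : (0:ℝ) ≤ M := hM.le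
  have hKpos : (0:ℝ) < K := lt_of_lt_of_le one_pos hK
  have hone_le : (1:ℝ) ≤ (1 + δ) * K := by nlinarith
  set L : ℝ := 3 * M * K * δ with hLdef
  have hLpos : 0 < L := by positivity
  -- Short-interval estimate
  have key : ∀ s t, s ≤ t → t - s ≤ h →
      ‖S t s‖ ≤ (1 + δ) * K * Real.exp ((α + L) * (t - s)) := by
    intro s t hst hth
    apply ContinuousLinearMap.opNorm_le_bound _ (by positivity)
    intro x
    set y : ℝ → X := fun u => S u s x with hy
    have hyd : ∀ u, HasDerivAt y (A u (y u) + B u (y u)) u := fun u => hSderiv s x u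
    have hycont : Continuous y := continuous_iff_continuousAt.2 fun u => (hyd u).continuousAt
    set N : ℝ → ℝ := fun u => Real.exp (α * (s - u)) * ‖y u‖ with hN
    have hNc : Continuous N := by
      apply Continuous.mul
      · exact Real.continuous_exp.comp (continuous_const.mul (continuous_const.sub continuous_id))
      · exact hycont.norm
    have hN0 : ∀ u, 0 ≤ N u := fun u => by positivity
    have hineq : ∀ t' ∈ Set.Icc s t, N t' ≤ (1 + δ) * K * ‖x‖ + L * ∫ r in s..t', N r := by
      intro t' ht'
      set c : ℝ → (X →L[ℝ] X) := fun u => ∫ r in u..t', B r with hcdef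
      have hcd : ∀ u, HasDerivAt c (-(B u)) u := fun u =>
        intervalIntegral.integral_hasDerivAt_left (hBc.intervalIntegrable _ _)
          hBc.stronglyMeasurable.stronglyMeasurableAtFilter hBc.continuousAt
      have hccont : Continuous c := continuous_iff_continuousAt.2 fun u => (hcd u).continuousAt
      have hcb : ∀ u ∈ Set.Icc s t', ‖c u‖ ≤ δ := by
        intro u hu
        apply hBint u t'
        rw [abs_of_nonneg (by linarith [hu.2])]
        linarith [hu.1, ht'.2]
      set G : ℝ → (X →L[ℝ] X) := fun u => T t' u with hGdef
      have hGd : ∀ u, HasDerivAt G (-(T t' u * A u)) u := fun u =>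
        evol_inv_deriv hAc hM' hAb hT0 hTderiv t' u
      have hGcont : Continuous G := continuous_iff_continuousAt.2 fun u => (hGd u).continuousAt
      have hGb : ∀ u ∈ Set.Icc s t', ‖G u‖ ≤ K * Real.exp (α * (t' - u)) := fun u hu =>
        hTbound u t' hu.2
      set D : ℝ → X := fun u =>
        T t' u (c u (A u (y u) + B u (y u))) - T t' u (A u (c u (y u))) with hDdef
      have hZd : ∀ u, HasDerivAt (fun u => T t' u (y u) + T t' u (c u (y u))) (D u) u := by
        intro u
        have d1 := (hGd u).clm_apply (hyd u)
        have dc := (hcd u).clm_apply (hyd u)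
        have d2 := (hGd u).clm_apply dc
        have hadd := d1.add d2
        refine hadd.congr_deriv ?_
        simp only [hDdef, hGdef, ContinuousLinearMap.mul_apply, ContinuousLinearMap.neg_apply,
          map_add, map_neg, ContinuousLinearMap.add_apply]
        abel
      have hABy : Continuous fun u => A u (y u) + B u (y u) :=
        (hAc.clm_apply hycont).add (hBc.clm_apply hycont)
      have hDcont : Continuous D :=
        (hGcont.clm_apply (hccont.clm_apply hABy)).sub
          (hGcont.clm_apply (hAc.clm_apply (hccont.clm_apply hycont)))
      have hftc : ∫ u in s..t', D u =
          (T t' t' (y t') + T t' t' (c t' (y t'))) - (T t' s (y s) + T t' s (c s (y s))) :=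
        intervalIntegral.integral_eq_sub_of_hasDerivAt (fun u _ => hZd u)
          (hDcont.intervalIntegrable _ _)
      have hct' : c t' = 0 := intervalIntegral.integral_same
      have hys : y s = x := by
        show S s s x = x
        rw [hS0]; rfl
      rw [hct', hT0, hys] at hftc
      simp only [ContinuousLinearMap.one_apply, ContinuousLinearMap.zero_apply, map_zero,
        add_zero] at hftc
      have h5 : y t' = (T t' s x + T t' s (c s x)) + ∫ u in s..t', D u := by
        rw [hftc]; abel
      -- estimate the integrand
      have hDb : ∀ u ∈ Set.Icc s t', ‖D u‖ ≤ L * Real.exp (α * (t' - s)) * N u := by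
        intro u hu
        have hGu := hGb u hu
        have hcu := hcb u hu
        have hby : ‖A u (y u) + B u (y u)‖ ≤ 2 * M * ‖y u‖ := by
          have l1 := (A u).le_opNorm (y u)
          have l2 := (B u).le_opNorm (y u)
          have l3 := norm_add_le (A u (y u)) (B u (y u))
          have l4 := mul_le_mul_of_nonneg_right (hAb u) (norm_nonneg (y u))
          have l5 := mul_le_mul_of_nonneg_right (hBb u) (norm_nonneg (y u))
          linarith
        have e1 : ‖T t' u (c u (A u (y u) + B u (y u)))‖ ≤
            K * Real.exp (α * (t' - u)) * (δ * (2 * M * ‖y u‖)) := by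
          refine le_trans ((T t' u).le_opNorm _) ?_
          have l6 : ‖c u (A u (y u) + B u (y u))‖ ≤ δ * (2 * M * ‖y u‖) :=
            le_trans ((c u).le_opNorm _)
              (mul_le_mul hcu hby (norm_nonneg _) hδ.le)
          refine mul_le_mul hGu l6 (norm_nonneg _) (by positivity)
        have e2 : ‖T t' u (A u (c u (y u)))‖ ≤
            K * Real.exp (α * (t' - u)) * (M * (δ * ‖y u‖)) := by
          refine le_trans ((T t' u).le_opNorm _) ?_
          have l7 : ‖A u (c u (y u))‖ ≤ M * (δ * ‖y u‖) := by
            refine le_trans ((A u).le_opNorm _) ?_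
            refine mul_le_mul (hAb u) ?_ (norm_nonneg _) hM'
            exact le_trans ((c u).le_opNorm _)
              (mul_le_mul_of_nonneg_right hcu (norm_nonneg _))
          refine mul_le_mul hGu l7 (norm_nonneg _) (by positivity)
        have hsplit : ‖D u‖ ≤ ‖T t' u (c u (A u (y u) + B u (y u)))‖ +
            ‖T t' u (A u (c u (y u)))‖ := norm_sub_le _ _
        have hexp : Real.exp (α * (t' - u)) * ‖y u‖ = Real.exp (α * (t' - s)) * N u := by
          rw [hN]
          rw [← mul_assoc, ← Real.exp_add]
          congr 2
          ring
        have : ‖D u‖ ≤ 3 * M * K * δ * (Real.exp (α * (t' - u)) * ‖y u‖) := by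
          have hexp_pos := Real.exp_pos (α * (t' - u))
          nlinarith [norm_nonneg (y u), Real.exp_pos (α * (t' - u))]
        rw [hexp] at this
        calc ‖D u‖ ≤ 3 * M * K * δ * (Real.exp (α * (t' - s)) * N u) := this
          _ = L * Real.exp (α * (t' - s)) * N u := by rw [hLdef]; ring
      have hIb : ‖∫ u in s..t', D u‖ ≤
          L * Real.exp (α * (t' - s)) * ∫ r in s..t', N r := by
        calc ‖∫ u in s..t', D u‖ ≤ ∫ u in s..t', ‖D u‖ :=
              intervalIntegral.norm_integral_le_integral_norm ht'.1
          _ ≤ ∫ u in s..t', L * Real.exp (α * (t' - s)) * N u :=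
              intervalIntegral.integral_mono_on ht'.1
                (hDcont.norm.intervalIntegrable _ _)
                ((continuous_const.mul hNc).intervalIntegrable _ _) hDb
          _ = L * Real.exp (α * (t' - s)) * ∫ r in s..t', N r := by
              rw [intervalIntegral.integral_const_mul]
      -- assemble
      have e1 : ‖T t' s x‖ ≤ K * Real.exp (α * (t' - s)) * ‖x‖ :=
        le_trans ((T t' s).le_opNorm x)
          (mul_le_mul_of_nonneg_right (hTbound s t' ht'.1) (norm_nonneg x))
      have e2 : ‖T t' s (c s x)‖ ≤ K * Real.exp (α * (t' - s)) * (δ * ‖x‖) := by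
        refine le_trans ((T t' s).le_opNorm _) ?_
        refine mul_le_mul (hTbound s t' ht'.1) ?_ (norm_nonneg _) (by positivity)
        exact le_trans ((c s).le_opNorm x)
          (mul_le_mul_of_nonneg_right (hcb s ⟨le_rfl, ht'.1⟩) (norm_nonneg x))
      have hyb : ‖y t'‖ ≤
          Real.exp (α * (t' - s)) * ((1 + δ) * K * ‖x‖ + L * ∫ r in s..t', N r) := by
        calc ‖y t'‖ ≤ ‖T t' s x‖ + ‖T t' s (c s x)‖ + ‖∫ u in s..t', D u‖ := by
              rw [h5]; exact norm_add₃_le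
          _ ≤ K * Real.exp (α * (t' - s)) * ‖x‖ + K * Real.exp (α * (t' - s)) * (δ * ‖x‖) +
              L * Real.exp (α * (t' - s)) * ∫ r in s..t', N r := by
              exact add_le_add (add_le_add e1 e2) hIb
          _ = Real.exp (α * (t' - s)) * ((1 + δ) * K * ‖x‖ + L * ∫ r in s..t', N r) := by
              ring
      calc N t' = Real.exp (α * (s - t')) * ‖y t'‖ := rfl
        _ ≤ Real.exp (α * (s - t')) *
            (Real.exp (α * (t' - s)) * ((1 + δ) * K * ‖x‖ + L * ∫ r in s..t', N r)) :=
            mul_le_mul_of_nonneg_left hyb (Real.exp_pos _).le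
        _ = (1 + δ) * K * ‖x‖ + L * ∫ r in s..t', N r := by
            rw [← mul_assoc, ← Real.exp_add, show α * (s - t') + α * (t' - s) = 0 by ring,
              Real.exp_zero, one_mul]
    have hgr := int_gronwall hst hLpos (by positivity) hNc hN0 hineq
    have hNT : ‖y t‖ = Real.exp (α * (t - s)) * N t := by
      rw [hN]
      rw [← mul_assoc, ← Real.exp_add, show α * (t - s) + α * (s - t) = 0 by ring,
        Real.exp_zero, one_mul]
    have : ‖y t‖ ≤ Real.exp (α * (t - s)) * ((1 + δ) * K * ‖x‖ * Real.exp (L * (t - s))) := by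
      rw [hNT]
      exact mul_le_mul_of_nonneg_left hgr (Real.exp_pos _).le
    calc ‖S t s x‖ = ‖y t‖ := rfl
      _ ≤ Real.exp (α * (t - s)) * ((1 + δ) * K * ‖x‖ * Real.exp (L * (t - s))) := this
      _ = (1 + δ) * K * Real.exp ((α + L) * (t - s)) * ‖x‖ := by
          rw [show (α + L) * (t - s) = α * (t - s) + L * (t - s) by ring, Real.exp_add]
          ring
  -- cocycle for S
  have hSco : ∀ s m t, S t m * S m s = S t s := by
    intro s m t
    apply ContinuousLinearMap.ext
    intro x
    show S t m (S m s x) = S t s x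
    refine ode_uniq (C := fun u => A u + B u) (L := 2 * M) (by linarith)
      (fun r => ?_)
      (v := fun ρ => S ρ m (S m s x)) (w := fun ρ => S ρ s x)
      (fun ρ => by simpa [ContinuousLinearMap.add_apply] using hSderiv m (S m s x) ρ)
      (fun ρ => by simpa [ContinuousLinearMap.add_apply] using hSderiv s x ρ)
      (p := m)
      (by show S m m (S m s x) = S m s x; rw [hS0]; rfl)
    calc ‖A r + B r‖ ≤ ‖A r‖ + ‖B r‖ := norm_add_le _ _
      _ ≤ 2 * M := by linarith [hAb r, hBb r]
  -- induction over intervals of length `h`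
  have step : ∀ n : ℕ, ∀ s t, s ≤ t → t - s ≤ (n + 1) * h →
      ‖S t s‖ ≤ ((1 + δ) * K) ^ (n + 1) * Real.exp ((α + L) * (t - s)) := by
    intro n
    induction n with
    | zero =>
      intro s t hst hth
      simpa [pow_one] using key s t hst (by simpa using hth)
    | succ n ih =>
      intro s t hst hth
      by_cases hcase : t - s ≤ (n + 1) * h
      · refine (ih s t hst hcase).trans ?_
        refine mul_le_mul_of_nonneg_right ?_ (Real.exp_pos _).le
        exact pow_le_pow_right₀ hone_le (by omega)
      · push_neg at hcase
        set m := t - h with hm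
        have hsm : s ≤ m := by
          have h2 : h ≤ (n + 1 : ℝ) * h :=
            le_mul_of_one_le_left hh.le (by push_cast; linarith [Nat.cast_nonneg (α := ℝ) n])
          simp only [hm]; linarith
        have hmt : m ≤ t := by simp only [hm]; linarith
        have h1 : ‖S t s‖ ≤ ‖S t m‖ * ‖S m s‖ := by
          rw [← hSco s m t]; exact norm_mul_le _ _
        have h2 : ‖S t m‖ ≤ (1 + δ) * K * Real.exp ((α + L) * (t - m)) :=
          key m t hmt (by simp [hm])
        have h3 : ‖S m s‖ ≤ ((1 + δ) * K) ^ (n + 1) * Real.exp ((α + L) * (m - s)) := by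
          apply ih s m hsm
          push_cast at hth ⊢
          simp only [hm]; linarith
        calc ‖S t s‖ ≤ ((1 + δ) * K * Real.exp ((α + L) * (t - m))) *
              (((1 + δ) * K) ^ (n + 1) * Real.exp ((α + L) * (m - s))) :=
              h1.trans (mul_le_mul h2 h3 (norm_nonneg _) (by positivity))
          _ = ((1 + δ) * K) ^ (n + 1 + 1) *
              (Real.exp ((α + L) * (t - m)) * Real.exp ((α + L) * (m - s))) := by ring
          _ = ((1 + δ) * K) ^ (n + 1 + 1) * Real.exp ((α + L) * (t - s)) := by
              rw [← Real.exp_add, show (α + L) * (t - m) + (α + L) * (m - s) =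
                (α + L) * (t - s) by ring]
  -- conclusion
  intro s t hst
  have hPpos : (0:ℝ) < (1 + δ) * K := by nlinarith
  set n : ℕ := ⌊(t - s) / h⌋₊ with hn
  have hts : 0 ≤ t - s := by linarith
  have hub : t - s ≤ (n + 1) * h := by
    have hdiv : (t - s) / h < n + 1 := Nat.lt_floor_add_one _
    have := (div_lt_iff₀ hh).1 hdiv
    linarith
  have hlb : (n : ℝ) ≤ (t - s) / h := Nat.floor_le (by positivity)
  have hmain := step n s t hst hub
  have hlog : ((1 + δ) * K) ^ n ≤ Real.exp (Real.log ((1 + δ) * K) / h * (t - s)) := by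
    have hxn : ((1 + δ) * K) ^ n = Real.exp (n * Real.log ((1 + δ) * K)) := by
      rw [Real.exp_nat_mul, Real.exp_log hPpos]
    rw [hxn]
    apply Real.exp_le_exp.2
    have hlogP : 0 ≤ Real.log ((1 + δ) * K) := Real.log_nonneg hone_le
    calc (n : ℝ) * Real.log ((1 + δ) * K) ≤ (t - s) / h * Real.log ((1 + δ) * K) :=
          mul_le_mul_of_nonneg_right hlb hlogP
      _ = Real.log ((1 + δ) * K) / h * (t - s) := by ring
  calc ‖S t s‖ ≤ ((1 + δ) * K) ^ (n + 1) * Real.exp ((α + L) * (t - s)) := hmain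
    _ = (1 + δ) * K * (((1 + δ) * K) ^ n * Real.exp ((α + L) * (t - s))) := by ring
    _ ≤ (1 + δ) * K * (Real.exp (Real.log ((1 + δ) * K) / h * (t - s)) *
        Real.exp ((α + L) * (t - s))) := by
        refine mul_le_mul_of_nonneg_left ?_ (by positivity)
        exact mul_le_mul_of_nonneg_right hlog (Real.exp_pos _).le
    _ = (1 + δ) * K * Real.exp ((α + L + Real.log ((1 + δ) * K) / h) * (t - s)) := by
        rw [← Real.exp_add, show Real.log ((1 + δ) * K) / h * (t - s) + (α + L) * (t - s) =
          (α + L + Real.log ((1 + δ) * K) / h) * (t - s) by ring]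
end

section
/- Under the hypotheses of the perturbation theorem (‖A(t)‖, ‖B(t)‖ ≤ M, ‖T(t,s)‖ ≤ Ke^{α(t−s)}, ‖∫_{t₁}^{t₂}B‖ ≤ δ for |t₂−t₁| ≤ h), if α < 0 and h is large enough and δ small enough so that β = α + 3MKδ + log((1+δ)K)/h < 0, then the perturbed system ẏ = A(t)y + B(t)y is uniformly exponentially (asymptotically) stable: ‖S(t,s)‖ ≤ (1+δ)K e^{β(t−s)} → 0 as t − s → ∞. -/
open Real Set intervalIntegral

set_option synthInstance.maxHeartbeats 1000000
set_option maxHeartbeats 1000000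

section stmt1aux
variable {E : Type*} [NormedAddCommGroup E] [NormedSpace ℝ E]

lemma stmt1_cont_of_hasDerivAt {w d : ℝ → E} (hw : ∀ t, HasDerivAt w (d t) t) :
    Continuous w :=
  continuous_iff_continuousAt.2 fun t => (hw t).continuousAt

lemma stmt1_gron_two {w d : ℝ → E} {L : ℝ} (hL : 0 ≤ L)
    (hw : ∀ t, HasDerivAt w (d t) t) (hd : ∀ t, ‖d t‖ ≤ L * ‖w t‖) (c t : ℝ) :
    ‖w t‖ ≤ Real.exp (L * |t - c|) * ‖w c‖ := by
  have fwd : ∀ (w d : ℝ → E), (∀ t, HasDerivAt w (d t) t) → (∀ t, ‖d t‖ ≤ L * ‖w t‖) →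
      ∀ c t : ℝ, c ≤ t → ‖w t‖ ≤ Real.exp (L * (t - c)) * ‖w c‖ := by
    intro w d hw hd c t hct
    have := norm_le_gronwallBound_of_norm_deriv_right_le (f := w) (f' := d)
      (δ := ‖w c‖) (K := L) (ε := 0) (a := c) (b := t)
      ((stmt1_cont_of_hasDerivAt hw).continuousOn)
      (fun x _ => (hw x).hasDerivWithinAt) le_rfl
      (fun x _ => by simpa using hd x) t ⟨hct, le_rfl⟩
    rwa [gronwallBound_ε0, mul_comm (‖w c‖)] at this
  rcases le_total c t with hct | htc
  · rw [abs_of_nonneg (by linarith)]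
    exact fwd w d hw hd c t hct
  · rw [abs_of_nonpos (by linarith)]
    have hw' : ∀ u, HasDerivAt (fun r => w (2 * c - r)) (-d (2 * c - u)) u := by
      intro u
      have h1 : HasDerivAt (fun r : ℝ => 2 * c - r) (-1) u := by
        simpa using (hasDerivAt_id u).const_sub (2 * c)
      simpa [Function.comp_def] using (hw (2 * c - u)).scomp u h1
    have := fwd (fun r => w (2 * c - r)) (fun u => -d (2 * c - u)) hw'
      (fun u => by simpa using hd (2 * c - u)) c (2 * c - t) (by linarith)
    simpa [show (2 : ℝ) * c - (2 * c - t) = t by ring,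
      show (2 : ℝ) * c - c = c by ring, show 2 * c - t - c = c - t by ring] using this

lemma stmt1_zero_of_hasDerivAt {w d : ℝ → E} {L : ℝ} (hL : 0 ≤ L)
    (hw : ∀ t, HasDerivAt w (d t) t) (hd : ∀ t, ‖d t‖ ≤ L * ‖w t‖) {c : ℝ}
    (hc : w c = 0) (t : ℝ) : w t = 0 := by
  have := stmt1_gron_two hL hw hd c t
  rw [hc, norm_zero, mul_zero] at this
  exact norm_le_zero_iff.1 this


variable {G : ℝ → E →L[ℝ] E} {N : ℝ} {P : ℝ → ℝ → E →L[ℝ] E}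

lemma stmt1_prop_cocycle (hN : 0 ≤ N) (hGb : ∀ t, ‖G t‖ ≤ N)
    (hP0 : ∀ s, P s s = 1)
    (hPd : ∀ s (x : E) (t : ℝ), HasDerivAt (fun r => P r s x) (G t (P t s x)) t)
    (a b c : ℝ) : (P c b).comp (P b a) = P c a := by
  ext x
  have hw : ∀ r, HasDerivAt (fun r => P r a x - P r b (P b a x))
      (G r (P r a x - P r b (P b a x))) r := fun r => by
    simpa [map_sub, Pi.sub_def] using (hPd a x r).sub (hPd b (P b a x) r)
  have hz := stmt1_zero_of_hasDerivAt hN hw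
    (fun r => ((G r).le_opNorm _).trans
      (mul_le_mul_of_nonneg_right (hGb r) (norm_nonneg _)))
    (c := b) (by simp [hP0 b]) c
  have h2 : P c a x = P c b (P b a x) := sub_eq_zero.1 hz
  simpa [ContinuousLinearMap.comp_apply] using h2.symm

lemma stmt1_prop_norm_le (hN : 0 ≤ N) (hGb : ∀ t, ‖G t‖ ≤ N)
    (hP0 : ∀ s, P s s = 1)
    (hPd : ∀ s (x : E) (t : ℝ), HasDerivAt (fun r => P r s x) (G t (P t s x)) t)
    (s t : ℝ) : ‖P t s‖ ≤ Real.exp (N * |t - s|) := by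
  refine (P t s).opNorm_le_bound (by positivity) fun x => ?_
  have := stmt1_gron_two hN (hPd s x)
    (fun r => ((G r).le_opNorm _).trans
      (mul_le_mul_of_nonneg_right (hGb r) (norm_nonneg _))) s t
  simpa [hP0 s] using this

lemma stmt1_prop_hasDerivAt [CompleteSpace E] (hGc : Continuous G) (hN : 0 ≤ N)
    (hGb : ∀ t, ‖G t‖ ≤ N)
    (hP0 : ∀ s, P s s = 1)
    (hPd : ∀ s (x : E) (t : ℝ), HasDerivAt (fun r => P r s x) (G t (P t s x)) t)
    (s u : ℝ) : HasDerivAt (fun r => P r s) ((G u).comp (P u s)) u := by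
  set U : ℝ → E →L[ℝ] E := fun r => P r s with hU
  have hUx : ∀ x, Continuous fun r => U r x := fun x => stmt1_cont_of_hasDerivAt (hPd s x)
  have hUb : ∀ r, ‖U r‖ ≤ Real.exp (N * |r - s|) := fun r =>
    stmt1_prop_norm_le hN hGb hP0 hPd s r
  -- local Lipschitz estimate around any point u₀
  have hlip : ∀ u₀ : ℝ, ∀ a ∈ Metric.closedBall u₀ 1, ∀ b ∈ Metric.closedBall u₀ 1,
      ‖U b - U a‖ ≤ (N * Real.exp (N * (|u₀ - s| + 1))) * |b - a| := by
    intro u₀ a ha b hb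
    set C₀ := Real.exp (N * (|u₀ - s| + 1)) with hC₀
    refine (U b - U a).opNorm_le_bound (by positivity) fun x => ?_
    have hftc : U b x - U a x = ∫ v in a..b, G v (U v x) :=
        (integral_eq_sub_of_hasDerivAt (fun v _ => hPd s x v)
          ((hGc.clm_apply (hUx x)).intervalIntegrable a b)).symm
    rw [ContinuousLinearMap.sub_apply, hftc]
    have hbd : ∀ v ∈ Set.uIoc a b, ‖G v (U v x)‖ ≤ N * C₀ * ‖x‖ := by
      intro v hv
      rw [Set.uIoc, Set.mem_Ioc] at hv
      rw [Metric.mem_closedBall, Real.dist_eq, abs_le] at ha hb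
      have hv' : |v - u₀| ≤ 1 := by
        have hmin : u₀ - 1 ≤ min a b := le_min (by linarith [ha.1]) (by linarith [hb.1])
        have hmax : max a b ≤ u₀ + 1 := max_le (by linarith [ha.2]) (by linarith [hb.2])
        rw [abs_le]; exact ⟨by linarith [hv.1], by linarith [hv.2]⟩
      have hvb : ‖U v‖ ≤ C₀ := by
        refine (hUb v).trans (Real.exp_le_exp.2 (mul_le_mul_of_nonneg_left ?_ hN))
        calc |v - s| ≤ |v - u₀| + |u₀ - s| := by
              simpa using abs_sub_le v u₀ s
          _ ≤ |u₀ - s| + 1 := by linarith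
      calc ‖G v (U v x)‖ ≤ ‖G v‖ * ‖U v x‖ := (G v).le_opNorm _
        _ ≤ N * (C₀ * ‖x‖) := by
            apply mul_le_mul (hGb v) ?_ (norm_nonneg _) hN
            exact ((U v).le_opNorm x).trans
              (mul_le_mul_of_nonneg_right hvb (norm_nonneg x))
        _ = N * C₀ * ‖x‖ := by ring
    calc ‖∫ v in a..b, G v (U v x)‖ ≤ N * C₀ * ‖x‖ * |b - a| :=
          intervalIntegral.norm_integral_le_of_norm_le_const hbd
      _ = N * C₀ * |b - a| * ‖x‖ := by ring
  have hUcont : Continuous U := by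
    rw [continuous_iff_continuousAt]
    intro u₀
    have : LipschitzOnWith (Real.toNNReal (N * Real.exp (N * (|u₀ - s| + 1)))) U
        (Metric.closedBall u₀ 1) := by
      apply LipschitzOnWith.of_dist_le_mul
      intro a ha b hb
      rw [dist_eq_norm, Real.dist_eq]
      exact (hlip u₀ b hb a ha).trans
        (mul_le_mul_of_nonneg_right (Real.le_coe_toNNReal _) (abs_nonneg _))
    exact this.continuousOn.continuousAt (Metric.closedBall_mem_nhds u₀ one_pos)
  have hg : Continuous fun v => (G v).comp (U v) := hGc.clm_comp hUcont
  have key : ∀ a b : ℝ, U b - U a = ∫ v in a..b, (G v).comp (U v) := by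
    intro a b
    ext x
    rw [ContinuousLinearMap.sub_apply,
      ContinuousLinearMap.intervalIntegral_apply (hg.intervalIntegrable a b)]
    have := integral_eq_sub_of_hasDerivAt (fun v _ => hPd s x v)
      ((hGc.clm_apply (hUx x)).intervalIntegrable a b)
    simpa [ContinuousLinearMap.comp_apply] using this.symm
  have hfun : U = fun b => U u + ∫ v in u..b, (G v).comp (U v) := by
    funext b
    rw [← key u b]; abel
  rw [hU] at *
  rw [hfun]
  haveI : SecondCountableTopologyEither ℝ (E →L[ℝ] E) :=
    ⟨Or.inl inferInstance⟩
  exact (intervalIntegral.integral_hasDerivAt_right (hg.intervalIntegrable u u)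
    (hg.stronglyMeasurableAtFilter _ _) hg.continuousAt).const_add (U u)

lemma stmt1_prop_inv_hasDerivAt [CompleteSpace E] (hGc : Continuous G) (hN : 0 ≤ N)
    (hGb : ∀ t, ‖G t‖ ≤ N)
    (hP0 : ∀ s, P s s = 1)
    (hPd : ∀ s (x : E) (t : ℝ), HasDerivAt (fun r => P r s x) (G t (P t s x)) t)
    (s u : ℝ) : HasDerivAt (fun r => P s r) (-((P s u).comp (G u))) u := by
  have hmul : ∀ a b : E →L[ℝ] E, a * b = a.comp b := fun a b => rfl
  have unit1 : ∀ r, (P r s) * (P s r) = 1 := fun r => by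
    rw [hmul, stmt1_prop_cocycle hN hGb hP0 hPd r s r, hP0]
  have unit2 : ∀ r, (P s r) * (P r s) = 1 := fun r => by
    rw [hmul, stmt1_prop_cocycle hN hGb hP0 hPd s r s, hP0]
  set e : ℝ → (E →L[ℝ] E)ˣ := fun r => ⟨P r s, P s r, unit1 r, unit2 r⟩ with he
  have hinv : ∀ r, Ring.inverse (P r s) = P s r := fun r => Ring.inverse_unit (e r)
  have hU : HasDerivAt (fun r => P r s) ((G u).comp (P u s)) u :=
    stmt1_prop_hasDerivAt hGc hN hGb hP0 hPd s u
  have hF : HasFDerivAt Ring.inverse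
      (-ContinuousLinearMap.mulLeftRight ℝ (E →L[ℝ] E) (P s u) (P s u)) (P u s) :=
    hasFDerivAt_ringInverse (e u)
  have hcomp := hF.comp_hasDerivAt u hU
  have hfeq : (fun r => Ring.inverse (P r s)) = fun r => P s r := funext hinv
  rw [Function.comp_def, hfeq] at hcomp
  convert hcomp using 1
  · rfl
  · rfl
  · rfl
  rw [ContinuousLinearMap.neg_apply, ContinuousLinearMap.mulLeftRight_apply]
  rw [← hmul (G u) (P u s), neg_inj, mul_assoc (P s u) (G u * P u s) (P s u),
    mul_assoc (G u) (P u s) (P s u), unit1 u, mul_one]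
  exact (hmul _ _).symm

lemma stmt1_short_time_bound [CompleteSpace E]
    (A B : ℝ → E →L[ℝ] E) (hAc : Continuous A) (hBc : Continuous B)
    (M K α δ h : ℝ) (hM : 0 < M) (hK : 1 ≤ K) (hδ : 0 < δ) (hh : 0 < h)
    (hAb : ∀ t, ‖A t‖ ≤ M) (hBb : ∀ t, ‖B t‖ ≤ M)
    (T S : ℝ → ℝ → E →L[ℝ] E)
    (hT0 : ∀ s, T s s = 1)
    (hTderiv : ∀ s (x : E) (t : ℝ), HasDerivAt (fun r => T r s x) (A t (T t s x)) t)
    (hTbound : ∀ s t, s ≤ t → ‖T t s‖ ≤ K * Real.exp (α * (t - s)))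
    (hBint : ∀ t₁ t₂ : ℝ, |t₂ - t₁| ≤ h → ‖∫ t in t₁..t₂, B t‖ ≤ δ)
    (hS0 : ∀ s, S s s = 1)
    (hSderiv' : ∀ s (x : E) (t : ℝ), HasDerivAt (fun r => S r s x) ((A t + B t) (S t s x)) t)
    (s t : ℝ) (hst : s ≤ t) (hth : t - s ≤ h) :
    ‖S t s‖ ≤ (1 + δ) * K * Real.exp ((α + 3 * M * K * δ) * (t - s)) := by
  haveI : SecondCountableTopologyEither ℝ (E →L[ℝ] E) := ⟨Or.inl inferInstance⟩
  have hK0 : (0:ℝ) < K := lt_of_lt_of_le one_pos hK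
  have cocT : ∀ a b c : ℝ, (T c b).comp (T b a) = T c a :=
    stmt1_prop_cocycle hM.le hAb hT0 hTderiv
  have hTud : ∀ u : ℝ, HasDerivAt (fun r => T s r) (-((T s u).comp (A u))) u :=
    stmt1_prop_inv_hasDerivAt hAc hM.le hAb hT0 hTderiv s
  refine (S t s).opNorm_le_bound (by positivity) fun x => ?_
  set y : ℝ → E := fun u => S u s x with hy
  have hyd : ∀ u, HasDerivAt y ((A u + B u) (y u)) u := fun u => hSderiv' s x u
  have hyc : Continuous y := stmt1_cont_of_hasDerivAt hyd
  set ψ : ℝ → ℝ := fun u => Real.exp (-(α*u)) * ‖y u‖ with hψdef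
  have hψc : Continuous ψ :=
    (Real.continuous_exp.comp ((continuous_const.mul continuous_id).neg)).mul hyc.norm
  set L : ℝ := 3*M*δ*K with hLdef
  have hL0 : 0 < L := by positivity
  set a : ℝ := (1+δ)*K*‖x‖*Real.exp (-(α*s)) with hadef
  have ha0 : 0 ≤ a := by positivity
  -- key inequality for every endpoint t' ∈ [s, s+h]
  have key : ∀ t', s ≤ t' → t' - s ≤ h →
      ‖y t'‖ ≤ (1 + δ) * K * ‖x‖ * Real.exp (α * (t' - s)) +
        (L * Real.exp (α * t')) * ∫ u in s..t', ψ u := by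
    intro t' hst' hth'
    set R : ℝ → E →L[ℝ] E := fun u => (T t' s).comp (T s u) with hR
    have hReq : ∀ u, R u = T t' u := fun u => cocT u s t'
    have hRd : ∀ u, HasDerivAt R (-((R u).comp (A u))) u := by
      intro u
      have h2 := (hasDerivAt_const u (T t' s)).clm_comp (hTud u)
      convert h2 using 1
      ext v
      simp [hR, ContinuousLinearMap.comp_apply, map_neg]
    have hRc : Continuous R := stmt1_cont_of_hasDerivAt hRd
    have hRb : ∀ u, u ≤ t' → ‖R u‖ ≤ K * Real.exp (α * (t' - u)) := fun u hu =>
      (hReq u) ▸ hTbound u t' hu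
    have hRt : R t' = 1 := by rw [hReq, hT0]
    set C : ℝ → E →L[ℝ] E := fun u => ∫ v in u..t', B v with hC
    have hCd : ∀ u, HasDerivAt C (-(B u)) u := by
      intro u
      have h1 : C = fun u => -∫ v in t'..u, B v := by
        funext w; rw [hC]; exact intervalIntegral.integral_symm t' w
      rw [h1]
      exact (intervalIntegral.integral_hasDerivAt_right (hBc.intervalIntegrable t' u)
        (hBc.stronglyMeasurableAtFilter _ _) hBc.continuousAt).neg
    have hCc : Continuous C := stmt1_cont_of_hasDerivAt hCd
    have hCb : ∀ u, s ≤ u → u ≤ t' → ‖C u‖ ≤ δ := fun u hu1 hu2 => by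
      apply hBint u t'
      rw [abs_of_nonneg (by linarith)]
      linarith
    set q : ℝ → E := fun u => y u + C u (y u) with hq
    have hqd : ∀ u, HasDerivAt q
        ((A u + B u) (y u) + ((-(B u)) (y u) + C u ((A u + B u) (y u)))) u :=
      fun u => (hyd u).add ((hCd u).clm_apply (hyd u))
    set z : ℝ → E := fun u => R u (q u) with hz
    set g : ℝ → E := fun u => R u (C u ((A u + B u) (y u)) - A u (C u (y u))) with hg
    have hzd : ∀ u, HasDerivAt z (g u) u := by
      intro u
      have h3 := (hRd u).clm_apply (hqd u)
      convert h3 using 1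
      simp only [hg, hq, ContinuousLinearMap.comp_apply, ContinuousLinearMap.neg_apply,
        ContinuousLinearMap.add_apply, map_add, map_sub, map_neg]
      abel
    have hgc : Continuous g := by
      have c1 : Continuous fun u => (A u + B u) (y u) := (hAc.add hBc).clm_apply hyc
      exact hRc.clm_apply ((hCc.clm_apply c1).sub (hAc.clm_apply (hCc.clm_apply hyc)))
    have hftc : z t' - z s = ∫ u in s..t', g u :=
      (intervalIntegral.integral_eq_sub_of_hasDerivAt (fun u _ => hzd u)
        (hgc.intervalIntegrable s t')).symm
    have hzt : z t' = y t' := by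
      simp [hz, hq, hRt, hC, intervalIntegral.integral_same]
    have hzs : z s = R s (x + C s x) := by
      have hys : y s = x := by simp [hy, hS0 s]
      simp [hz, hq, hys]
    have hyt : y t' = (∫ u in s..t', g u) + R s (x + C s x) := by
      have h4 := sub_eq_iff_eq_add.1 hftc
      rw [hzt, hzs] at h4
      exact h4
    have hb1 : ‖R s (x + C s x)‖ ≤ (1 + δ) * K * ‖x‖ * Real.exp (α * (t' - s)) := by
      calc ‖R s (x + C s x)‖ ≤ ‖R s‖ * ‖x + C s x‖ := (R s).le_opNorm _
        _ ≤ (K * Real.exp (α * (t' - s))) * ((1 + δ) * ‖x‖) := by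
            apply mul_le_mul (hRb s hst') ?_ (norm_nonneg _) (by positivity)
            calc ‖x + C s x‖ ≤ ‖x‖ + ‖C s x‖ := norm_add_le _ _
              _ ≤ ‖x‖ + δ * ‖x‖ := by
                  have := ((C s).le_opNorm x).trans
                    (mul_le_mul_of_nonneg_right (hCb s le_rfl hst') (norm_nonneg x))
                  linarith
              _ = (1 + δ) * ‖x‖ := by ring
        _ = (1 + δ) * K * ‖x‖ * Real.exp (α * (t' - s)) := by ring
    have hb2 : ‖∫ u in s..t', g u‖ ≤ (L * Real.exp (α * t')) * ∫ u in s..t', ψ u := by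
      have hbd : ∀ u ∈ Set.Ioc s t', ‖g u‖ ≤ (L * Real.exp (α * t')) * ψ u := by
        intro u hu
        have hu1 : s ≤ u := hu.1.le
        have hu2 : u ≤ t' := hu.2
        have hCu : ‖C u‖ ≤ δ := hCb u hu1 hu2
        have e1 : ‖C u ((A u + B u) (y u)) - A u (C u (y u))‖ ≤ 3 * M * δ * ‖y u‖ := by
          have e1a : ‖C u ((A u + B u) (y u))‖ ≤ δ * (2 * M * ‖y u‖) := by
            calc ‖C u ((A u + B u) (y u))‖ ≤ ‖C u‖ * ‖(A u + B u) (y u)‖ :=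
                  (C u).le_opNorm _
              _ ≤ δ * (2 * M * ‖y u‖) := by
                  apply mul_le_mul hCu ?_ (norm_nonneg _) hδ.le
                  calc ‖(A u + B u) (y u)‖ ≤ ‖A u + B u‖ * ‖y u‖ := (A u + B u).le_opNorm _
                    _ ≤ (2 * M) * ‖y u‖ := by
                        apply mul_le_mul_of_nonneg_right ?_ (norm_nonneg _)
                        calc ‖A u + B u‖ ≤ ‖A u‖ + ‖B u‖ := norm_add_le _ _
                          _ ≤ 2 * M := by linarith [hAb u, hBb u]
                    _ = 2 * M * ‖y u‖ := by ring
          have e1b : ‖A u (C u (y u))‖ ≤ M * (δ * ‖y u‖) := by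
            calc ‖A u (C u (y u))‖ ≤ ‖A u‖ * ‖C u (y u)‖ := (A u).le_opNorm _
              _ ≤ M * (δ * ‖y u‖) := by
                  apply mul_le_mul (hAb u) ?_ (norm_nonneg _) hM.le
                  exact ((C u).le_opNorm _).trans
                    (mul_le_mul_of_nonneg_right hCu (norm_nonneg _))
          calc ‖C u ((A u + B u) (y u)) - A u (C u (y u))‖
              ≤ ‖C u ((A u + B u) (y u))‖ + ‖A u (C u (y u))‖ := norm_sub_le _ _
            _ ≤ δ * (2 * M * ‖y u‖) + M * (δ * ‖y u‖) := add_le_add e1a e1b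
            _ = 3 * M * δ * ‖y u‖ := by ring
        calc ‖g u‖ ≤ ‖R u‖ * ‖C u ((A u + B u) (y u)) - A u (C u (y u))‖ :=
              (R u).le_opNorm _
          _ ≤ (K * Real.exp (α * (t' - u))) * (3 * M * δ * ‖y u‖) := by
              apply mul_le_mul (hRb u hu2) e1 (norm_nonneg _) (by positivity)
          _ = (L * Real.exp (α * t')) * ψ u := by
              rw [hψdef, hLdef]
              rw [show α * (t' - u) = α * t' + -(α * u) by ring, Real.exp_add]
              ring
      have hae : ∀ᵐ u ∂MeasureTheory.volume.restrict (Set.uIoc s t'),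
          ‖g u‖ ≤ (L * Real.exp (α * t')) * ψ u := by
        rw [Set.uIoc_of_le hst']
        exact (MeasureTheory.ae_restrict_mem measurableSet_Ioc).mono hbd
      have hint : IntervalIntegrable (fun u => (L * Real.exp (α * t')) * ψ u)
          MeasureTheory.volume s t' := (continuous_const.mul hψc).intervalIntegrable s t'
      calc ‖∫ u in s..t', g u‖ ≤ |∫ u in s..t', (L * Real.exp (α * t')) * ψ u| :=
            intervalIntegral.norm_integral_le_abs_of_norm_le hae hint
        _ = ∫ u in s..t', (L * Real.exp (α * t')) * ψ u := by
            apply abs_of_nonneg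
            apply intervalIntegral.integral_nonneg hst'
            intro u _
            have : 0 ≤ ψ u := by rw [hψdef]; positivity
            positivity
        _ = (L * Real.exp (α * t')) * ∫ u in s..t', ψ u :=
            intervalIntegral.integral_const_mul _ _
    calc ‖y t'‖ = ‖(∫ u in s..t', g u) + R s (x + C s x)‖ := by rw [hyt]
      _ ≤ ‖∫ u in s..t', g u‖ + ‖R s (x + C s x)‖ := norm_add_le _ _
      _ ≤ (L * Real.exp (α * t')) * (∫ u in s..t', ψ u) +
          (1 + δ) * K * ‖x‖ * Real.exp (α * (t' - s)) := add_le_add hb2 hb1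
      _ = (1 + δ) * K * ‖x‖ * Real.exp (α * (t' - s)) +
          (L * Real.exp (α * t')) * ∫ u in s..t', ψ u := by ring
  -- Gronwall
  have hψle : ∀ t' ∈ Set.Icc s t, ψ t' ≤ a + L * ∫ u in s..t', ψ u := by
    intro t' ht'
    have hkey := key t' ht'.1 (by linarith [ht'.2])
    have hexp : (0:ℝ) ≤ Real.exp (-(α*t')) := (Real.exp_pos _).le
    have h5 := mul_le_mul_of_nonneg_left hkey hexp
    calc ψ t' = Real.exp (-(α*t')) * ‖y t'‖ := rfl
      _ ≤ Real.exp (-(α*t')) * ((1 + δ) * K * ‖x‖ * Real.exp (α * (t' - s)) +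
          (L * Real.exp (α * t')) * ∫ u in s..t', ψ u) := h5
      _ = a + L * ∫ u in s..t', ψ u := by
          rw [mul_add, hadef]
          congr 1
          · rw [show Real.exp (-(α*t')) * ((1 + δ) * K * ‖x‖ * Real.exp (α * (t' - s)))
                = (1+δ)*K*‖x‖*(Real.exp (-(α*t')) * Real.exp (α * (t' - s))) by ring,
              ← Real.exp_add, show -(α*t') + α*(t'-s) = -(α*s) by ring]
          · rw [show Real.exp (-(α*t')) * ((L * Real.exp (α*t')) * ∫ u in s..t', ψ u)
                = L * (Real.exp (-(α*t')) * Real.exp (α*t')) * ∫ u in s..t', ψ u by ring,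
              ← Real.exp_add, show -(α*t') + α*t' = 0 by ring, Real.exp_zero, mul_one]
  set Ψ : ℝ → ℝ := fun r => ∫ u in s..r, ψ u with hΨ
  have hΨd : ∀ r, HasDerivAt Ψ (ψ r) r := fun r =>
    intervalIntegral.integral_hasDerivAt_right (hψc.intervalIntegrable s r)
      (hψc.stronglyMeasurableAtFilter _ _) hψc.continuousAt
  have hψ0 : ∀ u, 0 ≤ ψ u := fun u => by rw [hψdef]; positivity
  have hΨ0 : ∀ r, s ≤ r → 0 ≤ Ψ r := fun r hr =>
    intervalIntegral.integral_nonneg hr (fun u _ => hψ0 u)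
  have hgron := norm_le_gronwallBound_of_norm_deriv_right_le (f := Ψ) (f' := ψ)
    (δ := 0) (K := L) (ε := a) (a := s) (b := t)
    (stmt1_cont_of_hasDerivAt hΨd).continuousOn
    (fun r _ => (hΨd r).hasDerivWithinAt)
    (by simp [hΨ, intervalIntegral.integral_same])
    (fun r hr => by
      rw [Real.norm_of_nonneg (hψ0 r), Real.norm_of_nonneg (hΨ0 r hr.1)]
      have := hψle r ⟨hr.1, hr.2.le⟩
      linarith)
    t ⟨hst, le_rfl⟩
  rw [gronwallBound_of_K_ne_0 (ne_of_gt hL0)] at hgron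
  rw [Real.norm_of_nonneg (hΨ0 t hst)] at hgron
  have hΨt : Ψ t ≤ a/L * (Real.exp (L*(t-s)) - 1) := by
    have h6 : (0:ℝ) * Real.exp (L*(t-s)) = 0 := by ring
    linarith [hgron]
  have hψt : ψ t ≤ a * Real.exp (L*(t-s)) := by
    have h1 := hψle t ⟨hst, le_rfl⟩
    have h7 : L * Ψ t ≤ a * (Real.exp (L*(t-s)) - 1) := by
      calc L * Ψ t ≤ L * (a/L * (Real.exp (L*(t-s)) - 1)) :=
            mul_le_mul_of_nonneg_left hΨt hL0.le
        _ = a * (Real.exp (L*(t-s)) - 1) := by field_simp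
    linarith
  have h8 : ‖y t‖ = Real.exp (α*t) * ψ t := by
    rw [hψdef]
    rw [show Real.exp (α*t) * (Real.exp (-(α*t)) * ‖y t‖)
        = (Real.exp (α*t) * Real.exp (-(α*t))) * ‖y t‖ by ring,
      ← Real.exp_add, show α*t + -(α*t) = 0 by ring, Real.exp_zero, one_mul]
  calc ‖S t s x‖ = Real.exp (α*t) * ψ t := h8
    _ ≤ Real.exp (α*t) * (a * Real.exp (L*(t-s))) :=
        mul_le_mul_of_nonneg_left hψt (Real.exp_pos _).le
    _ = (1 + δ) * K * Real.exp ((α + 3 * M * K * δ) * (t - s)) * ‖x‖ := by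
        rw [hadef, hLdef,
          show Real.exp (α*t) * ((1+δ)*K*‖x‖*Real.exp (-(α*s)) * Real.exp (3*M*δ*K*(t-s)))
            = (1+δ)*K*(Real.exp (α*t) * Real.exp (-(α*s)) * Real.exp (3*M*δ*K*(t-s)))*‖x‖ by ring,
          ← Real.exp_add, ← Real.exp_add,
          show α*t + -(α*s) + 3*M*δ*K*(t-s) = (α + 3*M*K*δ)*(t-s) by ring]

end stmt1aux

/-- Under the hypotheses of the perturbation theorem, if `α < 0`
and `β = α + 3MKδ + log((1+δ)K)/h < 0`, then the perturbed system
`ẏ = A(t)y + B(t)y` is uniformly exponentially stable: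
`‖S(t,s)‖ ≤ (1+δ)K e^{β(t-s)} → 0` as `t - s → ∞`. -/
theorem stmt1 {X : Type*} [NormedAddCommGroup X] [NormedSpace ℝ X] [CompleteSpace X]
    (A B : ℝ → X →L[ℝ] X) (hAc : Continuous A) (hBc : Continuous B)
    (M K α δ h : ℝ) (hM : 0 < M) (hK : 1 ≤ K) (hδ : 0 < δ) (hh : 0 < h)
    (hAb : ∀ t, ‖A t‖ ≤ M) (hBb : ∀ t, ‖B t‖ ≤ M)
    (T S : ℝ → ℝ → X →L[ℝ] X)
    (hT0 : ∀ s, T s s = 1)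
    (hTderiv : ∀ s (x : X) (t : ℝ), HasDerivAt (fun r => T r s x) (A t (T t s x)) t)
    (hTbound : ∀ s t, s ≤ t → ‖T t s‖ ≤ K * Real.exp (α * (t - s)))
    (hBint : ∀ t₁ t₂ : ℝ, |t₂ - t₁| ≤ h → ‖∫ t in t₁..t₂, B t‖ ≤ δ)
    (hS0 : ∀ s, S s s = 1)
    (hSderiv : ∀ s (x : X) (t : ℝ),
      HasDerivAt (fun r => S r s x) (A t (S t s x) + B t (S t s x)) t)
    (hα : α < 0)
    (hβ : α + 3 * M * K * δ + Real.log ((1 + δ) * K) / h < 0) :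
    (∀ s t, s ≤ t →
      ‖S t s‖ ≤ (1 + δ) * K *
        Real.exp ((α + 3 * M * K * δ + Real.log ((1 + δ) * K) / h) * (t - s))) ∧
    (∀ s : ℝ, Filter.Tendsto (fun t => ‖S t s‖) Filter.atTop (nhds 0)) := by
  have hK0 : (0:ℝ) < K := lt_of_lt_of_le one_pos hK
  have hc1 : (1:ℝ) ≤ (1 + δ) * K := by nlinarith
  have hc0 : (0:ℝ) < (1 + δ) * K := by positivity
  have hSderiv' : ∀ s (x : X) (t : ℝ),
      HasDerivAt (fun r => S r s x) ((A t + B t) (S t s x)) t := fun s x t => by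
    simpa [ContinuousLinearMap.add_apply] using hSderiv s x t
  have hGb2 : ∀ t, ‖A t + B t‖ ≤ 2 * M := fun t =>
    (norm_add_le _ _).trans (by linarith [hAb t, hBb t])
  have cocS : ∀ a b c : ℝ, (S c b).comp (S b a) = S c a :=
    stmt1_prop_cocycle (by positivity) hGb2 hS0 hSderiv'
  set γ : ℝ := α + 3 * M * K * δ with hγdef
  have short : ∀ s t, s ≤ t → t - s ≤ h →
      ‖S t s‖ ≤ (1 + δ) * K * Real.exp (γ * (t - s)) :=
    stmt1_short_time_bound A B hAc hBc M K α δ h hM hK hδ hh hAb hBb T S hT0 hTderiv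
      hTbound hBint hS0 hSderiv'
  -- iterated bound
  have claim2 : ∀ n : ℕ, ∀ s t : ℝ, s ≤ t → t - s ≤ (n + 1 : ℕ) * h →
      ‖S t s‖ ≤ ((1 + δ) * K) ^ (n + 1) * Real.exp (γ * (t - s)) := by
    intro n
    induction n with
    | zero =>
        intro s t hst hle
        simpa using short s t hst (by push_cast at hle; linarith)
    | succ n ih =>
        intro s t hst hle
        by_cases hcase : t - s ≤ (n + 1 : ℕ) * h
        · refine (ih s t hst hcase).trans ?_
          apply mul_le_mul_of_nonneg_right ?_ (Real.exp_pos _).le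
          exact pow_le_pow_right₀ hc1 (by omega)
        · push_neg at hcase
          have hn1 : ((n:ℝ) + 1) * h = ((n + 1 : ℕ) : ℝ) * h := by push_cast; ring
          have hh1 : h ≤ t - s := by
            have : (1:ℝ) ≤ (n:ℝ) + 1 := by linarith [Nat.cast_nonneg (α := ℝ) n]
            push_cast at hcase
            nlinarith
          set m := t - h with hm
          have hsm : s ≤ m := by rw [hm]; linarith
          have hmt : m ≤ t := by rw [hm]; linarith
          have hcomp : S t s = (S t m).comp (S m s) := (cocS s m t).symm
          have h1 : ‖S t m‖ ≤ (1 + δ) * K * Real.exp (γ * h) := by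
            have := short m t hmt (by rw [hm]; ring_nf; exact le_rfl)
            simpa [hm] using this
          have h2 : ‖S m s‖ ≤ ((1 + δ) * K) ^ (n + 1) * Real.exp (γ * (m - s)) := by
            apply ih s m hsm
            rw [hm]
            push_cast at hle ⊢
            linarith
          calc ‖S t s‖ ≤ ‖S t m‖ * ‖S m s‖ := by
                rw [hcomp]; exact ContinuousLinearMap.opNorm_comp_le _ _
            _ ≤ ((1 + δ) * K * Real.exp (γ * h)) *
                (((1 + δ) * K) ^ (n + 1) * Real.exp (γ * (m - s))) := by
                apply mul_le_mul h1 h2 (norm_nonneg _) (by positivity)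
            _ = ((1 + δ) * K) ^ (n + 2) * (Real.exp (γ * h) * Real.exp (γ * (m - s))) := by
                ring
            _ = ((1 + δ) * K) ^ (n + 2) * Real.exp (γ * (t - s)) := by
                rw [← Real.exp_add, show γ * h + γ * (m - s) = γ * (t - s) by rw [hm]; ring]
  -- main bound
  have main : ∀ s t, s ≤ t →
      ‖S t s‖ ≤ (1 + δ) * K *
        Real.exp ((α + 3 * M * K * δ + Real.log ((1 + δ) * K) / h) * (t - s)) := by
    intro s t hst
    set d := t - s with hd
    have hd0 : 0 ≤ d := by rw [hd]; linarith
    set n := ⌊d / h⌋₊ with hn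
    have h1 : d ≤ (n + 1 : ℕ) * h := by
      have := Nat.lt_floor_add_one (d / h)
      push_cast
      nlinarith [(div_lt_iff₀ hh).1 (Nat.lt_floor_add_one (d / h))]
    have h2 : (n : ℝ) * h ≤ d := by
      have := Nat.floor_le (div_nonneg hd0 hh.le)
      calc (n : ℝ) * h ≤ (d / h) * h := by
            apply mul_le_mul_of_nonneg_right this hh.le
        _ = d := by field_simp
    refine (claim2 n s t hst h1).trans ?_
    have hlog : (0:ℝ) ≤ Real.log ((1 + δ) * K) := Real.log_nonneg hc1
    have hpow : ((1 + δ) * K) ^ n ≤ Real.exp ((Real.log ((1 + δ) * K) / h) * d) := by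
      have he : ((1 + δ) * K) ^ n = Real.exp ((n : ℝ) * Real.log ((1 + δ) * K)) := by
        rw [Real.exp_nat_mul, Real.exp_log hc0]
      rw [he]
      apply Real.exp_le_exp.2
      rw [show Real.log ((1 + δ) * K) / h * d = (d / h) * Real.log ((1 + δ) * K) by ring]
      apply mul_le_mul_of_nonneg_right ?_ hlog
      exact (le_div_iff₀ hh).2 h2
    calc ((1 + δ) * K) ^ (n + 1) * Real.exp (γ * d)
        = (1 + δ) * K * (((1 + δ) * K) ^ n * Real.exp (γ * d)) := by ring
      _ ≤ (1 + δ) * K * (Real.exp ((Real.log ((1 + δ) * K) / h) * d) * Real.exp (γ * d)) := by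
          apply mul_le_mul_of_nonneg_left ?_ hc0.le
          exact mul_le_mul_of_nonneg_right hpow (Real.exp_pos _).le
      _ = (1 + δ) * K * Real.exp ((α + 3 * M * K * δ + Real.log ((1 + δ) * K) / h) * d) := by
          rw [← Real.exp_add]
          congr 2
          rw [hγdef]; ring
  refine ⟨main, fun s => ?_⟩
  set β : ℝ := α + 3 * M * K * δ + Real.log ((1 + δ) * K) / h with hβdef
  have htend : Filter.Tendsto (fun t : ℝ => (1 + δ) * K * Real.exp (β * (t - s)))
      Filter.atTop (nhds 0) := by
    have h1 : Filter.Tendsto (fun t : ℝ => t - s) Filter.atTop Filter.atTop :=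
      Filter.tendsto_atTop_add_const_right _ (-s) Filter.tendsto_id
    have h2 : Filter.Tendsto (fun t : ℝ => β * (t - s)) Filter.atTop Filter.atBot := by
      exact Filter.Tendsto.const_mul_atTop_of_neg hβ h1
    have h3 := Real.tendsto_exp_atBot.comp h2
    have h4 := h3.const_mul ((1 + δ) * K)
    simpa using h4
  apply squeeze_zero' (Filter.Eventually.of_forall fun t => norm_nonneg _) ?_ htend
  filter_upwards [Filter.eventually_ge_atTop s] with t ht
  exact main s t ht
end

section
/- Let A, B : ℝ → L(X) be continuous with ‖A(t)‖ ≤ M, ‖B(t)‖ ≤ M, B a generalized almost periodic function with mean value zero, and suppose the evolution operator T(t,s) of ẋ = A(t)x satisfies ‖T(t,s)‖ ≤ Ke^{−α(t−s)} for t ≥ s with α > 0, K ≥ 1. Then there exist K̃ and ω₀ > 0 such that for all ω > ω₀ the evolution operator S_ω(t,s) of ẋ = A(t)x + B(ωt)x satisfies ‖S_ω(t,s)‖ ≤ K̃ e^{−(α/2)(t−s)} for t ≥ s. -/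
open Set intervalIntegral



/-- Uniqueness for the linear ODE with bounded continuous coefficients. -/
lemma lin_ode_unique {X : Type*} [NormedAddCommGroup X] [NormedSpace ℝ X]
    (c : ℝ) (F : ℝ → X →L[ℝ] X) (hF : ∀ t, ‖F t‖ ≤ c)
    (f g : ℝ → X)
    (hf : ∀ t, HasDerivAt f (F t (f t)) t)
    (hg : ∀ t, HasDerivAt g (F t (g t)) t)
    {a b : ℝ} (hab : a ≤ b) (hfg : f a = g a) : f b = g b := by
  have hc : 0 ≤ c := le_trans (norm_nonneg _) (hF a)
  have hlip : ∀ t, LipschitzWith (Real.toNNReal c) (fun y => F t y) := by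
    intro t
    apply LipschitzWith.of_dist_le_mul
    intro x y
    rw [dist_eq_norm, dist_eq_norm, ← map_sub]
    calc ‖F t (x - y)‖ ≤ ‖F t‖ * ‖x - y‖ := (F t).le_opNorm _
    _ ≤ c * ‖x - y‖ := mul_le_mul_of_nonneg_right (hF t) (norm_nonneg _)
    _ = (Real.toNNReal c : ℝ) * ‖x - y‖ := by rw [Real.coe_toNNReal c hc]
  exact ODE_solution_unique (v := fun t y => F t y) hlip
    (fun u _ => (hf u).continuousAt.continuousWithinAt)
    (fun u _ => (hf u).hasDerivWithinAt)
    (fun u _ => (hg u).continuousAt.continuousWithinAt)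
    (fun u _ => (hg u).hasDerivWithinAt) hfg ⟨hab, le_rfl⟩

lemma lin_ode_bound {X : Type*} [NormedAddCommGroup X] [NormedSpace ℝ X]
    (c : ℝ) (z : ℝ → X) (F : ℝ → X →L[ℝ] X) (hF : ∀ t, ‖F t‖ ≤ c)
    (hz : ∀ t, HasDerivAt z (F t (z t)) t) {s t : ℝ} (hst : s ≤ t) :
    ‖z t‖ ≤ ‖z s‖ * Real.exp (c * (t - s)) := by
  have h := norm_le_gronwallBound_of_norm_deriv_right_le
    (f := z) (f' := fun u => F u (z u)) (δ := ‖z s‖) (K := c) (ε := 0) (a := s) (b := t)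
    (fun u _ => (hz u).continuousAt.continuousWithinAt)
    (fun u _ => (hz u).hasDerivWithinAt) le_rfl
    (fun u _ => by
      have h1 := (F u).le_opNorm (z u)
      have h2 := mul_le_mul_of_nonneg_right (hF u) (norm_nonneg (z u))
      linarith)
  have := h t ⟨hst, le_rfl⟩
  rwa [gronwallBound_ε0] at this

/-- Averaging estimate on a finite window. -/
lemma window_est {X : Type*} [NormedAddCommGroup X] [NormedSpace ℝ X] [CompleteSpace X]
    (A B : ℝ → X →L[ℝ] X) (hAc : Continuous A) (hBc : Continuous B)
    (M : ℝ) (hM : 0 < M) (hAb : ∀ t, ‖A t‖ ≤ M) (hBb : ∀ t, ‖B t‖ ≤ M)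
    (L η ε ω : ℝ) (hL : 0 < L) (hη : 0 < η) (hε : 0 < ε) (hω : 0 < ω)
    (havg : ∀ a : ℝ, ‖∫ u in a..(a + η), B (ω * u)‖ ≤ ε * η)
    (s : ℝ) (x : X) (z w : ℝ → X)
    (hz0 : z s = x) (hw0 : w s = x)
    (hzd : ∀ t, HasDerivAt z (A t (z t) + B (ω * t) (z t)) t)
    (hwd : ∀ t, HasDerivAt w (A t (w t)) t) :
    ∀ t ∈ Icc s (s + L), ‖z t - w t‖ ≤
      (L * (ε * Real.exp (2*M*L) + 2*M^2 * Real.exp (2*M*L) * η) + M * Real.exp (2*M*L) * η)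
        * Real.exp (M * L) * ‖x‖ := by
  set C := Real.exp (2*M*L) with hCdef
  have hC0 : 0 < C := Real.exp_pos _
  have hx0 : (0:ℝ) ≤ ‖x‖ := norm_nonneg _
  -- continuity facts
  have hzc : Continuous z := continuous_iff_continuousAt.2 fun t => (hzd t).continuousAt
  have hBωc : Continuous (fun u : ℝ => B (ω * u)) := hBc.comp (continuous_const.mul continuous_id)
  set g : ℝ → X := fun u => B (ω * u) (z u) with hgdef
  have hgc : Continuous g := hBωc.clm_apply hzc
  set I : ℝ → X := fun t => ∫ u in s..t, g u with hIdef
  have hId : ∀ t, HasDerivAt I (g t) t := fun t =>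
    intervalIntegral.integral_hasDerivAt_right (hgc.intervalIntegrable _ _)
      hgc.stronglyMeasurable.stronglyMeasurableAtFilter hgc.continuousAt
  -- a priori bound on z
  have hAB : ∀ u : ℝ, ‖A u + B (ω * u)‖ ≤ 2*M := fun u => by
    calc ‖A u + B (ω * u)‖ ≤ ‖A u‖ + ‖B (ω * u)‖ := norm_add_le _ _
    _ ≤ 2*M := by linarith [hAb u, hBb (ω * u)]
  have hzd' : ∀ t, HasDerivAt z ((A t + B (ω * t)) (z t)) t := fun t => by
    simpa [ContinuousLinearMap.add_apply] using hzd t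
  have hzb : ∀ u ∈ Icc s (s + L), ‖z u‖ ≤ C * ‖x‖ := by
    intro u hu
    have h1 := lin_ode_bound (2*M) z (fun t => A t + B (ω * t)) hAB hzd' hu.1
    rw [hz0] at h1
    have h2 : Real.exp (2*M*(u - s)) ≤ C := by
      apply Real.exp_le_exp.2
      have : u - s ≤ L := by linarith [hu.2]
      nlinarith
    calc ‖z u‖ ≤ ‖x‖ * Real.exp (2*M*(u-s)) := h1
    _ ≤ ‖x‖ * C := by nlinarith
    _ = C * ‖x‖ := mul_comm _ _
  -- Lipschitz bound for z on subintervals of the window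
  have hzlip : ∀ a b : ℝ, s ≤ a → b ≤ s + L → ∀ u ∈ Icc a b,
      ‖z u - z a‖ ≤ 2*M*C*‖x‖ * (u - a) := by
    intro a b ha hb
    apply norm_image_sub_le_of_norm_deriv_le_segment'
      (f' := fun u => A u (z u) + B (ω * u) (z u))
    · exact fun u _ => (hzd u).hasDerivWithinAt
    · intro u hu
      have hu' : u ∈ Icc s (s + L) := ⟨le_trans ha hu.1, le_trans hu.2.le hb⟩
      calc ‖A u (z u) + B (ω * u) (z u)‖ = ‖(A u + B (ω * u)) (z u)‖ := by
            simp [ContinuousLinearMap.add_apply]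
      _ ≤ ‖A u + B (ω * u)‖ * ‖z u‖ := (A u + B (ω * u)).le_opNorm _
      _ ≤ (2*M) * (C * ‖x‖) := by
            apply mul_le_mul (hAB u) (hzb u hu') (norm_nonneg _) (by linarith)
      _ = 2*M*C*‖x‖ := by ring
  -- bound on the oscillatory integral at grid points
  have key : ∀ k : ℕ, s + k*η ≤ s + L →
      ‖I (s + k*η)‖ ≤ (k*η) * (ε*C + 2*M^2*C*η) * ‖x‖ := by
    intro k
    induction k with
    | zero => intro _; simp [hIdef]
    | succ k ih =>
      intro hkL
      push_cast at hkL ⊢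
      set a := s + (k:ℝ)*η with hadef
      set b := s + ((k:ℝ)+1)*η with hbdef
      have hab : a ≤ b := by
        simp only [hadef, hbdef]
        nlinarith
      have hba : b = a + η := by simp only [hadef, hbdef]; ring
      have hbL : b ≤ s + L := hkL
      have haL : a ≤ s + L := le_trans hab hbL
      have hsa : s ≤ a := by
        simp only [hadef]
        nlinarith [Nat.cast_nonneg (α := ℝ) k]
      have ihk := ih haL
      -- split I b = I a + J
      have hsplit : I b = I a + ∫ u in a..b, g u := by
        rw [hIdef]
        exact (intervalIntegral.integral_add_adjacent_intervals
          (hgc.intervalIntegrable _ _) (hgc.intervalIntegrable _ _)).symm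
      -- decompose J
      have hint1 : IntervalIntegrable (fun u => B (ω * u)) MeasureTheory.volume a b :=
        hBωc.intervalIntegrable _ _
      have e1 : (∫ u in a..b, B (ω * u)) (z a) = ∫ u in a..b, (B (ω * u)) (z a) :=
        ContinuousLinearMap.intervalIntegral_apply hint1 (z a)
      have hint2 : IntervalIntegrable (fun u => (B (ω * u)) (z a)) MeasureTheory.volume a b :=
        (hBωc.clm_apply continuous_const).intervalIntegrable _ _
      have e2 : ∫ u in a..b, (B (ω * u)) (z u - z a)
          = (∫ u in a..b, g u) - (∫ u in a..b, B (ω * u)) (z a) := by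
        rw [e1, ← intervalIntegral.integral_sub (hgc.intervalIntegrable _ _) hint2]
        congr 1
        ext u
        rw [map_sub]
      have hJ : (∫ u in a..b, g u)
          = (∫ u in a..b, B (ω * u)) (z a) + ∫ u in a..b, (B (ω * u)) (z u - z a) := by
        rw [e2]; abel
      -- bound first piece
      have hf1 : ‖(∫ u in a..b, B (ω * u)) (z a)‖ ≤ (ε*η) * (C * ‖x‖) := by
        calc ‖(∫ u in a..b, B (ω * u)) (z a)‖
            ≤ ‖∫ u in a..b, B (ω * u)‖ * ‖z a‖ := ContinuousLinearMap.le_opNorm _ _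
        _ ≤ (ε*η) * (C * ‖x‖) := by
            apply mul_le_mul _ (hzb a ⟨hsa, haL⟩) (norm_nonneg _) (by positivity)
            rw [hba]
            exact havg a
      -- bound second piece
      have hf2 : ‖∫ u in a..b, (B (ω * u)) (z u - z a)‖ ≤ (M * (2*M*C*‖x‖*η)) * η := by
        have hb1 : ∀ u ∈ Set.uIoc a b, ‖(B (ω * u)) (z u - z a)‖ ≤ M * (2*M*C*‖x‖*η) := by
          intro u hu
          rw [uIoc_of_le hab] at hu
          have hu' : u ∈ Icc a b := ⟨hu.1.le, hu.2⟩
          have hl := hzlip a b hsa hbL u hu'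
          have hua : u - a ≤ η := by
            have := hu.2
            rw [hba] at this
            linarith
          calc ‖(B (ω * u)) (z u - z a)‖ ≤ ‖B (ω * u)‖ * ‖z u - z a‖ :=
                ContinuousLinearMap.le_opNorm _ _
          _ ≤ M * (2*M*C*‖x‖*η) := by
              apply mul_le_mul (hBb _) _ (norm_nonneg _) hM.le
              calc ‖z u - z a‖ ≤ 2*M*C*‖x‖ * (u - a) := hl
              _ ≤ 2*M*C*‖x‖*η := mul_le_mul_of_nonneg_left hua (by positivity)
        calc ‖∫ u in a..b, (B (ω * u)) (z u - z a)‖ ≤ (M * (2*M*C*‖x‖*η)) * |b - a| :=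
              intervalIntegral.norm_integral_le_of_norm_le_const hb1
        _ = (M * (2*M*C*‖x‖*η)) * η := by
            rw [hba]; rw [abs_of_nonneg (by linarith)]; ring_nf
      -- combine
      have : ‖I b‖ ≤ ‖I a‖ + ((ε*η) * (C * ‖x‖) + (M * (2*M*C*‖x‖*η)) * η) := by
        rw [hsplit, hJ]
        calc ‖I a + ((∫ u in a..b, B (ω * u)) (z a) + ∫ u in a..b, (B (ω * u)) (z u - z a))‖
            ≤ ‖I a‖ + ‖(∫ u in a..b, B (ω * u)) (z a) + ∫ u in a..b, (B (ω * u)) (z u - z a)‖ :=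
              norm_add_le _ _
        _ ≤ ‖I a‖ + (‖(∫ u in a..b, B (ω * u)) (z a)‖
              + ‖∫ u in a..b, (B (ω * u)) (z u - z a)‖) := by
              linarith [norm_add_le ((∫ u in a..b, B (ω * u)) (z a))
                (∫ u in a..b, (B (ω * u)) (z u - z a))]
        _ ≤ ‖I a‖ + ((ε*η) * (C * ‖x‖) + (M * (2*M*C*‖x‖*η)) * η) := by linarith
      calc ‖I b‖ ≤ ‖I a‖ + ((ε*η) * (C * ‖x‖) + (M * (2*M*C*‖x‖*η)) * η) := this
      _ ≤ (k*η) * (ε*C + 2*M^2*C*η) * ‖x‖ + ((ε*η) * (C * ‖x‖) + (M * (2*M*C*‖x‖*η)) * η) :=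
            by linarith [ihk]
      _ = (((k:ℝ)+1)*η) * (ε*C + 2*M^2*C*η) * ‖x‖ := by ring
  -- bound on I everywhere on the window
  have hIb : ∀ t ∈ Icc s (s + L), ‖I t‖ ≤ (L*(ε*C + 2*M^2*C*η) + M*C*η) * ‖x‖ := by
    intro t ht
    have hts : 0 ≤ t - s := by linarith [ht.1]
    obtain ⟨k, hk1, hk2⟩ : ∃ k : ℕ, (k:ℝ)*η ≤ t - s ∧ t - s < ((k:ℝ)+1)*η := by
      refine ⟨Nat.floor ((t - s)/η), ?_, ?_⟩
      · have h := Nat.floor_le (div_nonneg hts hη.le)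
        exact (le_div_iff₀ hη).1 h
      · have h := Nat.lt_floor_add_one ((t - s)/η)
        exact (div_lt_iff₀ hη).1 h
    set a := s + (k:ℝ)*η with hadef
    have hat : a ≤ t := by simp only [hadef]; linarith
    have haL : a ≤ s + L := le_trans hat ht.2
    have hsa : s ≤ a := by
      simp only [hadef]
      nlinarith [Nat.cast_nonneg (α := ℝ) k]
    have h1 := key k haL
    have hsplit : I t = I a + ∫ u in a..t, g u := by
      rw [hIdef]
      exact (intervalIntegral.integral_add_adjacent_intervals
        (hgc.intervalIntegrable _ _) (hgc.intervalIntegrable _ _)).symm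
    have h2 : ‖∫ u in a..t, g u‖ ≤ (M * (C * ‖x‖)) * |t - a| := by
      apply intervalIntegral.norm_integral_le_of_norm_le_const
      intro u hu
      rw [uIoc_of_le hat] at hu
      have hu' : u ∈ Icc s (s + L) := ⟨le_trans hsa hu.1.le, le_trans hu.2 ht.2⟩
      calc ‖g u‖ ≤ ‖B (ω * u)‖ * ‖z u‖ := ContinuousLinearMap.le_opNorm _ _
      _ ≤ M * (C * ‖x‖) := mul_le_mul (hBb _) (hzb u hu') (norm_nonneg _) hM.le
    have h3 : |t - a| ≤ η := by
      rw [abs_of_nonneg (by linarith)]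
      simp only [hadef]
      linarith
    have hkL : (k:ℝ)*η ≤ L := le_trans hk1 (by linarith [ht.2])
    have hcoef : (0:ℝ) ≤ ε*C + 2*M^2*C*η := by positivity
    have h4 : ‖∫ u in a..t, g u‖ ≤ (M * (C * ‖x‖)) * η :=
      le_trans h2 (mul_le_mul_of_nonneg_left h3 (by positivity))
    have h5 : ((k:ℝ)*η) * (ε*C + 2*M^2*C*η) ≤ L * (ε*C + 2*M^2*C*η) :=
      mul_le_mul_of_nonneg_right hkL hcoef
    have h6 := mul_le_mul_of_nonneg_right h5 hx0
    calc ‖I t‖ ≤ ‖I a‖ + ‖∫ u in a..t, g u‖ := by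
          rw [hsplit]; exact norm_add_le _ _
    _ ≤ ((k:ℝ)*η) * (ε*C + 2*M^2*C*η) * ‖x‖ + (M * (C * ‖x‖)) * η := by linarith
    _ ≤ (L * (ε*C + 2*M^2*C*η)) * ‖x‖ + (M * (C * ‖x‖)) * η := by linarith
    _ = (L*(ε*C + 2*M^2*C*η) + M*C*η) * ‖x‖ := by ring
  -- Gronwall on e := z - w - I
  set e : ℝ → X := fun t => z t - w t - I t with hedef
  set ε' := M * ((L*(ε*C + 2*M^2*C*η) + M*C*η) * ‖x‖) with hε'def
  have hed : ∀ t, HasDerivAt e (A t (e t) + A t (I t)) t := by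
    intro t
    have h := ((hzd t).sub (hwd t)).sub (hId t)
    have heq : A t (z t) + B (ω * t) (z t) - A t (w t) - g t
        = A t (e t) + A t (I t) := by
      simp only [hedef, map_sub, hgdef]
      abel
    rwa [heq] at h
  have hIs : I s = 0 := by simp [hIdef]
  have hes : ‖e s‖ ≤ 0 := by simp [hedef, hz0, hw0, hIs]
  have hgron := norm_le_gronwallBound_of_norm_deriv_right_le
    (f := e) (f' := fun t => A t (e t) + A t (I t)) (δ := 0) (K := M) (ε := ε')
    (a := s) (b := s + L)
    (fun u _ => (hed u).continuousAt.continuousWithinAt)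
    (fun u _ => (hed u).hasDerivWithinAt) hes
    (fun u hu => by
      calc ‖A u (e u) + A u (I u)‖ ≤ ‖A u (e u)‖ + ‖A u (I u)‖ := norm_add_le _ _
      _ ≤ M * ‖e u‖ + ε' := by
          have h1 : ‖A u (e u)‖ ≤ M * ‖e u‖ :=
            le_trans (ContinuousLinearMap.le_opNorm _ _)
              (mul_le_mul_of_nonneg_right (hAb u) (norm_nonneg _))
          have h2 : ‖A u (I u)‖ ≤ ε' := by
            rw [hε'def]
            calc ‖A u (I u)‖ ≤ ‖A u‖ * ‖I u‖ := ContinuousLinearMap.le_opNorm _ _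
            _ ≤ M * ((L*(ε*C + 2*M^2*C*η) + M*C*η) * ‖x‖) := by
                apply mul_le_mul (hAb u) (hIb u ⟨hu.1, hu.2.le⟩) (norm_nonneg _) hM.le
          linarith
      )
  intro t ht
  have hge := hgron t ht
  rw [gronwallBound_of_K_ne_0 hM.ne'] at hge
  have hexp : Real.exp (M * (t - s)) ≤ Real.exp (M * L) := by
    apply Real.exp_le_exp.2
    have : t - s ≤ L := by linarith [ht.2]
    exact mul_le_mul_of_nonneg_left this hM.le
  have hee : ‖e t‖ ≤ ε'/M * (Real.exp (M*L) - 1) := by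
    have h1 : (0:ℝ) ≤ ε'/M := by positivity
    calc ‖e t‖ ≤ 0 * Real.exp (M * (t-s)) + ε'/M * (Real.exp (M * (t-s)) - 1) := hge
    _ = ε'/M * (Real.exp (M * (t-s)) - 1) := by ring
    _ ≤ ε'/M * (Real.exp (M*L) - 1) :=
        mul_le_mul_of_nonneg_left (by linarith) h1
  have hzw : z t - w t = e t + I t := by simp [hedef]
  have hIbt := hIb t ht
  have hε'M : ε'/M = (L*(ε*C + 2*M^2*C*η) + M*C*η) * ‖x‖ := by
    rw [hε'def]; field_simp
  calc ‖z t - w t‖ ≤ ‖e t‖ + ‖I t‖ := by rw [hzw]; exact norm_add_le _ _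
  _ ≤ ε'/M * (Real.exp (M*L) - 1) + (L*(ε*C + 2*M^2*C*η) + M*C*η) * ‖x‖ := by linarith
  _ = (L*(ε*C + 2*M^2*C*η) + M*C*η) * ‖x‖ * Real.exp (M*L) := by rw [hε'M]; ring
  _ = (L * (ε * C + 2*M^2 * C * η) + M * C * η) * Real.exp (M * L) * ‖x‖ := by ring



set_option maxHeartbeats 1000000 in
/-- Let `A, B : ℝ → L(X)` be continuous with `‖A(t)‖ ≤ M`,
`‖B(t)‖ ≤ M`, `B` generalized almost periodic with mean value zero (uniformly
in the starting point), and suppose the evolution operator `T(t,s)` of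
`ẋ = A(t)x` satisfies `‖T(t,s)‖ ≤ K e^{−α(t−s)}` for `t ≥ s`, with `α > 0`,
`K ≥ 1`. Then there exist `K̃` and `ω₀ > 0` such that for all `ω > ω₀` the
evolution operator `S_ω(t,s)` of `ẋ = A(t)x + B(ωt)x` satisfies
`‖S_ω(t,s)‖ ≤ K̃ e^{−(α/2)(t−s)}` for `t ≥ s`. -/
theorem stmt10 {X : Type*} [NormedAddCommGroup X] [NormedSpace ℝ X] [CompleteSpace X]
    (A B : ℝ → X →L[ℝ] X) (hAc : Continuous A) (hBc : Continuous B)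
    (M K α : ℝ) (hM : 0 < M) (hK : 1 ≤ K) (hα : 0 < α)
    (hAb : ∀ t, ‖A t‖ ≤ M) (hBb : ∀ t, ‖B t‖ ≤ M)
    (hBuc : UniformContinuous B)
    (hBrange : IsCompact (closure (Set.range B)))
    (hBmean : ∀ ε > (0 : ℝ), ∃ T₀ > (0 : ℝ), ∀ T ≥ T₀, ∀ s : ℝ,
      ‖(1 / T) • ∫ u in s..(s + T), B u‖ ≤ ε)
    (T : ℝ → ℝ → X →L[ℝ] X)
    (hT0 : ∀ s, T s s = 1)
    (hTderiv : ∀ s (x : X) (t : ℝ), HasDerivAt (fun r => T r s x) (A t (T t s x)) t)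
    (hTbound : ∀ s t, s ≤ t → ‖T t s‖ ≤ K * Real.exp (-α * (t - s)))
    (S : ℝ → ℝ → ℝ → X →L[ℝ] X)
    (hS0 : ∀ ω s, S ω s s = 1)
    (hSderiv : ∀ (ω : ℝ) (s : ℝ) (x : X) (t : ℝ),
      HasDerivAt (fun r => S ω r s x) (A t (S ω t s x) + B (ω * t) (S ω t s x)) t) :
    ∃ K' : ℝ, ∃ ω₀ > (0 : ℝ), ∀ ω > ω₀, ∀ s t : ℝ, s ≤ t →
      ‖S ω t s‖ ≤ K' * Real.exp (-(α / 2) * (t - s)) := by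
  have hK0 : 0 < K := lt_of_lt_of_le one_pos hK
  have h2K : (1:ℝ) < 2*K := by linarith
  set L := 2/α * Real.log (2*K) with hLdef
  have hlog : 0 < Real.log (2*K) := Real.log_pos h2K
  have hL : 0 < L := by rw [hLdef]; positivity
  set C := Real.exp (2*M*L) with hCdef
  have hC0 : 0 < C := Real.exp_pos _
  set D := (L * (C + 2*M^2*C) + M*C) * Real.exp (M*L) + 1 with hDdef
  have hD1 : 1 ≤ D := by
    have h0 : (0:ℝ) ≤ (L * (C + 2*M^2*C) + M*C) * Real.exp (M*L) := by positivity
    rw [hDdef]; linarith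
  have hD0 : 0 < D := lt_of_lt_of_le one_pos hD1
  set η := 1/(8*K*D) with hηdef
  have hη : 0 < η := by rw [hηdef]; positivity
  obtain ⟨T₀, hT₀pos, hmean⟩ := hBmean η hη
  refine ⟨C * Real.exp (α/2 * L), max (T₀/η) 1,
    lt_of_lt_of_le one_pos (le_max_right _ _), ?_⟩
  intro ω hω s t hst
  have hω1 : 1 < ω := lt_of_le_of_lt (le_max_right _ _) hω
  have hω0 : 0 < ω := by linarith
  -- norm bound for A + B(ω ·)
  have hAB : ∀ u : ℝ, ‖A u + B (ω * u)‖ ≤ 2*M := fun u => by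
    calc ‖A u + B (ω * u)‖ ≤ ‖A u‖ + ‖B (ω * u)‖ := norm_add_le _ _
    _ ≤ 2*M := by linarith [hAb u, hBb (ω * u)]
  -- averaging bound
  have havg : ∀ a : ℝ, ‖∫ u in a..(a+η), B (ω*u)‖ ≤ η * η := by
    intro a
    have hcc : (∫ u in a..(a+η), B (ω * u)) = ω⁻¹ • ∫ u in ω*a..ω*(a+η), B u :=
      intervalIntegral.integral_comp_mul_left B hω0.ne'
    have h1 : T₀ ≤ ω * η := by
      have h := lt_of_le_of_lt (le_max_left (T₀/η) 1) hω
      exact le_of_lt ((div_lt_iff₀ hη).1 h)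
    have h2 := hmean (ω*η) h1 (ω*a)
    have hpos : (0:ℝ) < ω*η := by positivity
    have h3 : ‖∫ u in ω*a..(ω*a + ω*η), B u‖ ≤ η * (ω*η) := by
      have he := norm_smul ((1:ℝ)/(ω*η)) (∫ u in ω*a..(ω*a + ω*η), B u)
      rw [Real.norm_eq_abs, abs_of_pos (by positivity : (0:ℝ) < 1/(ω*η))] at he
      rw [he] at h2
      have h4 := mul_le_mul_of_nonneg_left h2 hpos.le
      have h5 : (ω*η) * (1/(ω*η) * ‖∫ u in ω*a..(ω*a + ω*η), B u‖)
          = ‖∫ u in ω*a..(ω*a + ω*η), B u‖ := by field_simp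
      rw [h5] at h4
      linarith [h4]
    have he2 := norm_smul (ω⁻¹ : ℝ) (∫ u in ω*a..ω*(a+η), B u)
    rw [Real.norm_eq_abs, abs_of_pos (inv_pos.2 hω0)] at he2
    rw [hcc, he2, show ω*(a+η) = ω*a + ω*η by ring]
    have h6 := mul_le_mul_of_nonneg_left h3 (inv_nonneg.2 hω0.le)
    have h7 : ω⁻¹ * (η * (ω*η)) = η * η := by field_simp
    rw [h7] at h6
    exact h6
  -- window estimate
  have hwin : ∀ s' (x : X), ∀ t' ∈ Icc s' (s'+L),
      ‖S ω t' s' x - T t' s' x‖ ≤ (1/(8*K)) * ‖x‖ := by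
    intro s' x t' ht'
    have h := window_est A B hAc hBc M hM hAb hBb L η η ω hL hη hη hω0 havg s' x
      (fun r => S ω r s' x) (fun r => T r s' x)
      (by simp [hS0]) (by simp [hT0])
      (fun r => hSderiv ω s' x r) (fun r => hTderiv s' x r) t' ht'
    refine le_trans h ?_
    have hcalc : (L * (η*C + 2*M^2*C*η) + M*C*η) * Real.exp (M*L) = η * (D - 1) := by
      rw [hDdef]; ring
    have h8 : η * (D - 1) ≤ η * D := by nlinarith
    have h9 : η * D = 1/(8*K) := by rw [hηdef]; field_simp
    rw [hcalc]
    apply mul_le_mul_of_nonneg_right _ (norm_nonneg x)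
    linarith
  -- contraction over one window
  have hqL : Real.exp (-(α/2) * L) = 1/(2*K) := by
    have he : -(α/2) * L = -Real.log (2*K) := by rw [hLdef]; field_simp
    rw [he, Real.exp_neg, Real.exp_log (by linarith)]
    rw [one_div]
  have hcontr : ∀ s' (x : X), ‖S ω (s'+L) s' x‖ ≤ Real.exp (-(α/2)*L) * ‖x‖ := by
    intro s' x
    have h1 := hwin s' x (s'+L) ⟨by linarith, le_rfl⟩
    have hTn : ‖T (s'+L) s' x‖ ≤ (K * Real.exp (-α*L)) * ‖x‖ := by
      have hb := hTbound s' (s'+L) (by linarith)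
      rw [add_sub_cancel_left] at hb
      exact le_trans ((T (s'+L) s').le_opNorm x)
        (mul_le_mul_of_nonneg_right hb (norm_nonneg _))
    have hexpL : Real.exp (-α*L) = 1/((2*K)*(2*K)) := by
      have he : -α * L = -(Real.log (2*K) + Real.log (2*K)) := by
        rw [hLdef]; field_simp; ring
      rw [he, Real.exp_neg, Real.exp_add, Real.exp_log (by linarith)]
      rw [one_div]
    have hKe : K * Real.exp (-α*L) = 1/(4*K) := by
      rw [hexpL]; field_simp; ring
    have hnorm : ‖S ω (s'+L) s' x‖ ≤ ‖T (s'+L) s' x‖ + ‖S ω (s'+L) s' x - T (s'+L) s' x‖ := by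
      have := norm_add_le (T (s'+L) s' x) (S ω (s'+L) s' x - T (s'+L) s' x)
      simpa using this
    have hfin : (1/(4*K)) * ‖x‖ + (1/(8*K)) * ‖x‖ ≤ (1/(2*K)) * ‖x‖ := by
      have : (1:ℝ)/(4*K) + 1/(8*K) ≤ 1/(2*K) := by
        rw [div_add_div _ _ (by positivity) (by positivity), div_le_div_iff₀ (by positivity) (by positivity)]
        ring_nf
        nlinarith
      nlinarith [norm_nonneg x]
    rw [hqL]
    calc ‖S ω (s'+L) s' x‖ ≤ ‖T (s'+L) s' x‖ + ‖S ω (s'+L) s' x - T (s'+L) s' x‖ := hnorm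
    _ ≤ (K * Real.exp (-α*L)) * ‖x‖ + (1/(8*K)) * ‖x‖ := by linarith [hTn, h1]
    _ = (1/(4*K)) * ‖x‖ + (1/(8*K)) * ‖x‖ := by rw [hKe]
    _ ≤ (1/(2*K)) * ‖x‖ := hfin
  -- cocycle
  have hco : ∀ s' u t' : ℝ, u ≤ t' → ∀ x : X,
      S ω t' u (S ω u s' x) = S ω t' s' x := by
    intro s' u t' hut x
    have := lin_ode_unique (2*M) (fun r => A r + B (ω*r)) hAB
      (fun r => S ω r u (S ω u s' x)) (fun r => S ω r s' x)
      (fun r => by simpa [ContinuousLinearMap.add_apply] using hSderiv ω u (S ω u s' x) r)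
      (fun r => by simpa [ContinuousLinearMap.add_apply] using hSderiv ω s' x r)
      hut (by simp [hS0])
    exact this
  set q := Real.exp (-(α/2)*L) with hqdef
  have hq0 : 0 < q := Real.exp_pos _
  -- iterate the contraction
  have hiter : ∀ n : ℕ, ∀ s' (x : X), ‖S ω (s' + n*L) s' x‖ ≤ q^n * ‖x‖ := by
    intro n
    induction n with
    | zero => intro s' x; simp [hS0]
    | succ n ihn =>
      intro s' x
      have hnn : (0:ℝ) ≤ (n:ℝ)*L := by positivity
      have hu : s' ≤ s' + (n:ℝ)*L := by linarith
      have e : s' + ((n:ℝ)+1)*L = (s' + (n:ℝ)*L) + L := by ring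
      have hcoc := hco s' (s' + (n:ℝ)*L) (s' + ((n:ℝ)+1)*L) (by linarith) x
      have hstep := hcontr (s' + (n:ℝ)*L) (S ω (s' + (n:ℝ)*L) s' x)
      have hin := ihn s' x
      calc ‖S ω (s' + ((n:ℕ)+1:ℕ)*L) s' x‖
          = ‖S ω (s' + ((n:ℝ)+1)*L) s' x‖ := by push_cast; ring_nf
      _ = ‖S ω ((s' + (n:ℝ)*L) + L) (s' + (n:ℝ)*L) (S ω (s' + (n:ℝ)*L) s' x)‖ := by
            rw [← e, hcoc]
      _ ≤ q * ‖S ω (s' + (n:ℝ)*L) s' x‖ := hstep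
      _ ≤ q * (q^n * ‖x‖) := mul_le_mul_of_nonneg_left hin hq0.le
      _ = q^(n+1) * ‖x‖ := by ring
  -- conclude
  apply ContinuousLinearMap.opNorm_le_bound _ (by positivity)
  intro x
  have hts : 0 ≤ t - s := by linarith
  obtain ⟨n, hn1, hn2⟩ : ∃ n : ℕ, (n:ℝ)*L ≤ t - s ∧ t - s < ((n:ℝ)+1)*L := by
    refine ⟨Nat.floor ((t - s)/L), ?_, ?_⟩
    · exact (le_div_iff₀ hL).1 (Nat.floor_le (div_nonneg hts hL.le))
    · exact (div_lt_iff₀ hL).1 (Nat.lt_floor_add_one ((t - s)/L))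
  have hu : s + (n:ℝ)*L ≤ t := by linarith
  have hcoc := hco s (s + (n:ℝ)*L) t hu x
  have hgrow : ‖S ω t (s + (n:ℝ)*L) (S ω (s + (n:ℝ)*L) s x)‖
      ≤ ‖S ω (s + (n:ℝ)*L) s x‖ * Real.exp (2*M*(t - (s + (n:ℝ)*L))) := by
    have hzd : ∀ r, HasDerivAt (fun r' => S ω r' (s + (n:ℝ)*L) (S ω (s + (n:ℝ)*L) s x))
        ((A r + B (ω*r)) (S ω r (s + (n:ℝ)*L) (S ω (s + (n:ℝ)*L) s x))) r := fun r => by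
      simpa [ContinuousLinearMap.add_apply] using
        hSderiv ω (s + (n:ℝ)*L) (S ω (s + (n:ℝ)*L) s x) r
    have := lin_ode_bound (2*M) _ (fun r => A r + B (ω*r)) hAB hzd hu
    simpa [hS0] using this
  have hexp2 : Real.exp (2*M*(t - (s + (n:ℝ)*L))) ≤ C := by
    rw [hCdef]
    apply Real.exp_le_exp.2
    have h1 : t - (s + (n:ℝ)*L) ≤ L := by linarith
    nlinarith
  have hqn : q^n ≤ Real.exp (α/2*L) * Real.exp (-(α/2)*(t-s)) := by
    rw [hqdef, ← Real.exp_nat_mul, ← Real.exp_add]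
    apply Real.exp_le_exp.2
    have h1 : (α/2)*(t-s) ≤ (α/2)*(((n:ℝ)+1)*L) :=
      mul_le_mul_of_nonneg_left hn2.le (by positivity)
    nlinarith
  have hiter' := hiter n s x
  calc ‖S ω t s x‖ = ‖S ω t (s + (n:ℝ)*L) (S ω (s + (n:ℝ)*L) s x)‖ := by rw [hcoc]
  _ ≤ ‖S ω (s + (n:ℝ)*L) s x‖ * Real.exp (2*M*(t - (s + (n:ℝ)*L))) := hgrow
  _ ≤ (q^n * ‖x‖) * C := by
      apply mul_le_mul hiter' hexp2 (Real.exp_pos _).le (by positivity)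
  _ ≤ ((Real.exp (α/2*L) * Real.exp (-(α/2)*(t-s))) * ‖x‖) * C := by
      have := mul_le_mul_of_nonneg_right hqn (norm_nonneg x)
      nlinarith
  _ = C * Real.exp (α/2 * L) * Real.exp (-(α/2) * (t - s)) * ‖x‖ := by ring
end

section
/- In Kakutani's construction, with ε_m = M/K^{m−1} (M > 0, K > 1) and W_ε the weighted shift whose weight α_n equals ε_m when n = 2^{m−1}(2ℓ+1), let L_m be the weighted shift keeping only the weights ε_m at positions n = 2^{m−1}(2ℓ+1) and zero elsewhere. Then W_ε − L_m is nilpotent of index at most 2^m, i.e., (W_ε − L_m)^{2^m} = 0, so its spectral radius is 0. -/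
-- auxiliary: among any 2^m consecutive integers starting at n+1, one has 2-adic valuation m-1
lemma aux_exists_val (m : ℕ) (hm : 1 ≤ m) (n : ℕ) :
    ∃ i < 2 ^ m, (n + i + 1).factorization 2 = m - 1 := by
  set N := 2 ^ m with hN
  set h := 2 ^ (m - 1) with hh
  have hN2 : N = 2 * h := by
    rw [hN, hh, ← pow_succ']
    congr 1
    omega
  have hhpos : 0 < h := Nat.pow_pos (by norm_num)
  have hNpos : 0 < N := Nat.pow_pos (by norm_num)
  have hhN : h < N := by omega
  set q := (n + 1) / N with hq
  set r := (n + 1) % N with hr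
  have hqr : n + 1 = N * q + r := (Nat.div_add_mod _ _).symm
  have hrN : r < N := Nat.mod_lt _ hNpos
  have key : ∀ q' : ℕ, (N * q' + h).factorization 2 = m - 1 := by
    intro q'
    have heq : N * q' + h = 2 ^ (m - 1) * (2 * q' + 1) := by
      rw [hN2, hh]; ring
    rw [heq, Nat.factorization_mul (pow_ne_zero _ two_ne_zero) (by omega),
      Finsupp.add_apply, Nat.Prime.factorization_pow Nat.prime_two,
      Nat.factorization_eq_zero_of_not_dvd (by omega)]
    simp
  by_cases hcase : r ≤ h
  · refine ⟨h - r, by omega, ?_⟩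
    have : n + (h - r) + 1 = N * q + h := by omega
    rw [this, key]
  · refine ⟨N + h - r, by omega, ?_⟩
    have hmul : N * (q + 1) = N * q + N := by ring
    have : n + (N + h - r) + 1 = N * (q + 1) + h := by omega
    rw [this, key]

/-- Kakutani's construction. Write each positive integer
uniquely as `n = 2^(m-1) (2ℓ+1)`; the exponent `m − 1` is `n.factorization 2`.
With `ε_m = M/K^(m−1)` (`M > 0`, `K > 1`), let `W_ε` be the weighted shift on
`ℓ²` whose weight at position `n` is `ε_m` when `n = 2^(m−1)(2ℓ+1)`, and let
`L_m` be the weighted shift keeping only the weights `ε_m` at the positions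
`n = 2^(m−1)(2ℓ+1)` and zero elsewhere. Then `(W_ε − L_m)^(2^m) = 0`, so the
spectral radius of `W_ε − L_m` is `0`.
(The basis vector `lp.single 2 n 1` represents `e_{n+1}`, i.e. position `n+1`.) -/
theorem stmt12 (M K : ℝ) (hM : 0 < M) (hK : 1 < K) (m : ℕ) (hm : 1 ≤ m)
    (W L : lp (fun _ : ℕ => ℝ) 2 →L[ℝ] lp (fun _ : ℕ => ℝ) 2)
    (hW : ∀ n : ℕ,
      W (lp.single 2 n 1) = (M / K ^ ((n + 1).factorization 2)) • lp.single 2 (n + 1) 1)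
    (hL : ∀ n : ℕ,
      L (lp.single 2 n 1) =
        (if (n + 1).factorization 2 = m - 1 then M / K ^ (m - 1) else 0) •
          lp.single 2 (n + 1) 1) :
    (W - L) ^ (2 ^ m) = 0 ∧ spectralRadius ℝ (W - L) = 0 := by
  set T := W - L with hT
  set w : ℕ → ℝ := fun n => (M / K ^ ((n + 1).factorization 2)) -
      (if (n + 1).factorization 2 = m - 1 then M / K ^ (m - 1) else 0) with hw
  have hTsingle : ∀ n : ℕ, T (lp.single 2 n 1) = w n • lp.single 2 (n + 1) 1 := by
    intro n
    simp [hT, hw, hW n, hL n, sub_smul]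
  have hwzero : ∀ n : ℕ, (n + 1).factorization 2 = m - 1 → w n = 0 := by
    intro n hn
    simp [hw, hn]
  have hiter : ∀ k n : ℕ, (T ^ k) (lp.single 2 n 1) =
      (∏ i ∈ Finset.range k, w (n + i)) • lp.single 2 (n + k) 1 := by
    intro k
    induction k with
    | zero => intro n; simp
    | succ k ih =>
      intro n
      rw [pow_succ, ContinuousLinearMap.mul_apply, hTsingle n, map_smul, ih (n + 1),
        Finset.prod_range_succ', smul_smul]
      have h1 : (∏ i ∈ Finset.range k, w (n + 1 + i)) = ∏ i ∈ Finset.range k, w (n + (i + 1)) := by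
        apply Finset.prod_congr rfl
        intro i _
        congr 1
        omega
      have h2 : n + 1 + k = n + (k + 1) := by omega
      rw [h1, h2, mul_comm]
  have hsingle0 : ∀ n : ℕ, (T ^ (2 ^ m)) (lp.single 2 n 1) = 0 := by
    intro n
    rw [hiter]
    obtain ⟨i, hi, hval⟩ := aux_exists_val m hm n
    have : (∏ j ∈ Finset.range (2 ^ m), w (n + j)) = 0 :=
      Finset.prod_eq_zero (Finset.mem_range.mpr hi) (hwzero _ hval)
    rw [this, zero_smul]
  have hpow : T ^ (2 ^ m) = 0 := by
    ext f : 1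
    have hsum : HasSum (fun i : ℕ => lp.single 2 i (f i : ℝ)) f :=
      lp.hasSum_single (by norm_num) f
    have hsum2 : HasSum (fun i : ℕ => (T ^ (2 ^ m)) (lp.single 2 i (f i : ℝ)))
        ((T ^ (2 ^ m)) f) := (T ^ (2 ^ m)).hasSum hsum
    have hterm : ∀ i : ℕ, (T ^ (2 ^ m)) (lp.single 2 i (f i : ℝ)) = 0 := by
      intro i
      have : (lp.single 2 i (f i) : lp (fun _ : ℕ => ℝ) 2) = (f i : ℝ) • lp.single 2 i (1 : ℝ) := by
        rw [← lp.single_smul, smul_eq_mul, mul_one]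
      rw [this, map_smul, hsingle0, smul_zero]
    simp only [hterm] at hsum2
    have := hsum2.unique hasSum_zero
    simpa using this
  refine ⟨hpow, ?_⟩
  have hle := spectrum.spectralRadius_le_pow_nnnorm_pow_one_div ℝ T (2 ^ m - 1)
  rw [Nat.sub_add_cancel Nat.one_le_two_pow, hpow] at hle
  have hrpos : (0 : ℝ) < 1 / ((2 ^ m - 1 : ℕ) + 1 : ℝ) := by positivity
  rw [nnnorm_zero, ENNReal.coe_zero, ENNReal.zero_rpow_of_pos hrpos, zero_mul] at hle
  exact le_antisymm hle zero_le
end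

section
/- In Kakutani's construction, the operator W_ε (weighted shift with weights α_n = M/K^{m−1} when n = 2^{m−1}(2ℓ+1)) has norm ‖W_ε‖ = M, spectral radius ρ(W_ε) = M/K, and ‖L_m‖ = ε_m = M/K^{m−1} → 0 as m → ∞. -/
open scoped ENNReal
noncomputable section

abbrev Hk : Type := lp (fun _ : ℕ => ℝ) 2

namespace Kak

def e (n : ℕ) : Hk := lp.single 2 n (1:ℝ)

lemma single_eq_smul (n : ℕ) (a : ℝ) : (lp.single 2 n a : Hk) = a • e n := by
  rw [e, ← lp.single_smul]
  norm_num

lemma norm_e (n : ℕ) : ‖e n‖ = 1 := by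
  have := lp.norm_single (p := 2) (E := fun _ : ℕ => ℝ) (by norm_num) n (1:ℝ)
  simpa [e] using this

lemma coord (T : Hk →L[ℝ] Hk) (k : ℕ) (c : ℕ → ℝ)
    (hT : ∀ n, T (e n) = c n • e (n+k)) (x : Hk) (i : ℕ) :
    (T x) i = if k ≤ i then c (i-k) * x (i-k) else 0 := by
  have hs : HasSum (fun n => (lp.single 2 n (x n) : Hk)) x :=
    lp.hasSum_single (by norm_num) x
  have hs2 : HasSum (fun n => T (lp.single 2 n (x n))) (T x) := hs.mapL T
  have hs3 : HasSum (fun n => (inner ℝ (e i) (T (lp.single 2 n (x n))) : ℝ))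
      (inner ℝ (e i) (T x) : ℝ) := hs2.mapL (innerSL ℝ (e i))
  have hterm : ∀ n, (inner ℝ (e i) (T (lp.single 2 n (x n))) : ℝ)
      = if n + k = i then c n * x n else 0 := by
    intro n
    rw [single_eq_smul n (x n), map_smul, hT n, inner_smul_right, inner_smul_right, e,
      lp.inner_single_left]
    simp only [RCLike.inner_apply, map_one, one_mul]
    by_cases h : i = n + k
    · subst h
      rw [e, lp.single_apply_self]
      simp only [mul_one, if_true]
      ring
    · rw [e, lp.single_apply_ne 2 _ _ h]
      have : ¬ (n + k = i) := fun h' => h h'.symm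
      simp [this]
  have hcoord : (inner ℝ (e i) (T x) : ℝ) = (T x) i := by
    rw [e, lp.inner_single_left]
    simp [RCLike.inner_apply]
  rw [← hcoord]
  have hs4 : HasSum (fun n => if n + k = i then c n * x n else 0)
      ((inner ℝ (e i) (T x)) : ℝ) := hs3.congr_fun (fun n => (hterm n).symm)
  by_cases hk : k ≤ i
  · rw [if_pos hk]
    refine hs4.unique ?_
    have := hasSum_ite_eq (i - k) (c (i-k) * x (i-k))
    refine this.congr_fun fun n => ?_
    by_cases h : n = i - k
    · subst h
      rw [if_pos rfl, if_pos (by omega)]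
    · rw [if_neg h, if_neg (by omega)]
  · rw [if_neg hk]
    refine hs4.unique ?_
    have : (fun n => if n + k = i then c n * x n else 0) = fun _ => (0:ℝ) := by
      funext n; rw [if_neg (by omega)]
    rw [this]
    exact hasSum_zero

lemma hp2 : ∀ a : ℝ, a ^ (2:ℝ≥0∞).toReal = a ^ (2:ℕ) := fun a => by
  rw [show (2:ℝ≥0∞).toReal = ((2:ℕ):ℝ) by norm_num, Real.rpow_natCast]

lemma norm_le_of_shift (T : Hk →L[ℝ] Hk) (k : ℕ) (c : ℕ → ℝ) (C : ℝ) (hC : 0 ≤ C)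
    (hc : ∀ n, |c n| ≤ C) (hT : ∀ n, T (e n) = c n • e (n+k)) : ‖T‖ ≤ C := by
  refine ContinuousLinearMap.opNorm_le_bound T hC fun x => ?_
  have htp : (0:ℝ) < (2:ℝ≥0∞).toReal := by norm_num
  have h1 := lp.norm_rpow_eq_tsum htp (T x)
  have h2 := lp.norm_rpow_eq_tsum htp x
  have hST : Summable (fun i => ‖(T x) i‖ ^ (2:ℝ≥0∞).toReal) := (lp.memℓp (T x)).summable htp
  have hSx : Summable (fun i => ‖x i‖ ^ (2:ℝ≥0∞).toReal) := (lp.memℓp x).summable htp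
  have hinj : Function.Injective (fun n : ℕ => n + k) := add_left_injective k
  have hre : ∑' i, ‖(T x) i‖ ^ (2:ℝ≥0∞).toReal = ∑' n, ‖(T x) (n + k)‖ ^ (2:ℝ≥0∞).toReal := by
    refine (Function.Injective.tsum_eq hinj ?_).symm
    intro i hi
    by_cases h : k ≤ i
    · exact ⟨i - k, show (i - k) + k = i by omega⟩
    · exfalso
      rw [Function.mem_support, coord T k c hT x i, if_neg h] at hi
      simp [Real.zero_rpow htp.ne'] at hi
  have hval : ∀ n : ℕ, ‖(T x) (n + k)‖ ^ (2:ℝ≥0∞).toReal = ‖c n * x n‖ ^ (2:ℝ≥0∞).toReal := by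
    intro n
    rw [coord T k c hT x (n+k), if_pos (by omega), show n + k - k = n by omega]
  have hmono : ∀ n : ℕ, ‖c n * x n‖ ^ (2:ℝ≥0∞).toReal ≤ C^(2:ℕ) * ‖x n‖ ^ (2:ℝ≥0∞).toReal := by
    intro n
    rw [hp2, hp2]
    have h1 : ‖c n * x n‖ ≤ C * ‖x n‖ := by
      rw [norm_mul]
      exact mul_le_mul_of_nonneg_right (hc n) (norm_nonneg _)
    calc ‖c n * x n‖ ^ (2:ℕ) ≤ (C * ‖x n‖)^(2:ℕ) :=
          pow_le_pow_left₀ (norm_nonneg _) h1 2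
      _ = C^(2:ℕ) * ‖x n‖^(2:ℕ) := by ring
  have hsum2 : Summable (fun n : ℕ => ‖(T x) (n + k)‖ ^ (2:ℝ≥0∞).toReal) :=
    hST.comp_injective hinj
  have key : ‖T x‖ ^ (2:ℝ≥0∞).toReal ≤ (C * ‖x‖) ^ (2:ℝ≥0∞).toReal := by
    rw [h1, hre]
    calc ∑' n, ‖(T x) (n + k)‖ ^ (2:ℝ≥0∞).toReal
        ≤ ∑' n, C^(2:ℕ) * ‖x n‖ ^ (2:ℝ≥0∞).toReal := by
          refine Summable.tsum_le_tsum (fun n => (hval n) ▸ hmono n) hsum2 (hSx.mul_left _)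
      _ = C^(2:ℕ) * ∑' n, ‖x n‖ ^ (2:ℝ≥0∞).toReal := tsum_mul_left
      _ = (C * ‖x‖) ^ (2:ℝ≥0∞).toReal := by
          rw [← h2, hp2, hp2]; ring
  rw [hp2, hp2] at key
  exact (pow_le_pow_iff_left₀ (norm_nonneg _) (by positivity) (by norm_num)).mp key

lemma norm_ge_of_val (T : Hk →L[ℝ] Hk) (n k : ℕ) (c : ℝ)
    (h : T (e n) = c • e (n+k)) : |c| ≤ ‖T‖ := by
  have h1 := T.le_opNorm (e n)
  rw [h, norm_smul, norm_e, norm_e, mul_one, mul_one] at h1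
  rwa [Real.norm_eq_abs] at h1

lemma v2fact_le (n : ℕ) : (Nat.factorial n).factorization 2 ≤ n := by
  haveI : Fact (Nat.Prime 2) := ⟨Nat.prime_two⟩
  have h := sub_one_mul_padicValNat_factorial (p := 2) n
  rw [Nat.factorization_def _ Nat.prime_two]
  omega

lemma digits_pow_sum (j : ℕ) : (Nat.digits 2 (2^j)).sum = 1 := by
  induction j with
  | zero => simp
  | succ j ih =>
    rw [Nat.digits_def' (by norm_num : 1 < 2) (by positivity)]
    have h1 : 2^(j+1) % 2 = 0 := by
      simp [pow_succ, Nat.mul_mod_left]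
    have h2 : 2^(j+1) / 2 = 2^j := by
      rw [pow_succ, Nat.mul_div_cancel _ (by norm_num)]
    rw [h1, h2]
    simpa using ih

lemma v2fact_pow (j : ℕ) : (Nat.factorial (2^j)).factorization 2 = 2^j - 1 := by
  haveI : Fact (Nat.Prime 2) := ⟨Nat.prime_two⟩
  have h := sub_one_mul_padicValNat_factorial (p := 2) (2^j)
  rw [digits_pow_sum j] at h
  rw [Nat.factorization_def _ Nat.prime_two]
  omega

lemma prod_fact (n k : ℕ) :
    Nat.factorial n * ∏ t ∈ Finset.range k, (n+1+t) = Nat.factorial (n+k) := by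
  induction k with
  | zero => simp
  | succ k ih =>
    rw [Finset.prod_range_succ, ← mul_assoc, ih, show n + (k+1) = (n + k) + 1 by omega,
      Nat.factorial_succ]
    ring

lemma sum_v2_ge (n k : ℕ) :
    (Nat.factorial k).factorization 2 ≤ ∑ t ∈ Finset.range k, ((n+1+t).factorization 2) := by
  have hm := prod_fact n k
  have hprodne : (∏ t ∈ Finset.range k, (n+1+t)) ≠ 0 := by positivity
  have hfe : ((∏ t ∈ Finset.range k, (n+1+t)).factorization) 2
      = ∑ t ∈ Finset.range k, ((n+1+t).factorization 2) := by
    rw [Nat.factorization_prod (fun i _ => by positivity)]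
    simp [Finsupp.finset_sum_apply]
  have hdvd : Nat.factorial k * Nat.factorial n ∣ Nat.factorial (k + n) :=
    Nat.factorial_mul_factorial_dvd_factorial_add k n
  have hle := (Nat.factorization_le_iff_dvd (by positivity) (by positivity)).mpr hdvd
  have hle2 := hle 2
  rw [Nat.factorization_mul (by positivity) (by positivity)] at hle2
  have hmf : (Nat.factorial (n+k)).factorization 2 =
      (Nat.factorial n).factorization 2 + ∑ t ∈ Finset.range k, ((n+1+t).factorization 2) := by
    rw [← hm, Nat.factorization_mul (by positivity) hprodne]
    simp [hfe]
  rw [show k + n = n + k by omega] at hle2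
  simp only [Finsupp.coe_add, Pi.add_apply] at hle2
  omega

def al (M K : ℝ) (n : ℕ) : ℝ := M / K ^ ((n+1).factorization 2)

lemma prod_al (M K : ℝ) (n k : ℕ) :
    ∏ t ∈ Finset.range k, al M K (n+t) =
      M^k / K^(∑ t ∈ Finset.range k, ((n+t+1).factorization 2)) := by
  unfold al
  rw [Finset.prod_div_distrib, Finset.prod_pow_eq_pow_sum]
  simp

lemma pow_single (M K : ℝ) (W : Hk →L[ℝ] Hk)
    (hW : ∀ n, W (e n) = al M K n • e (n+1)) :
    ∀ k n, (W^k) (e n) = (∏ t ∈ Finset.range k, al M K (n+t)) • e (n+k) := by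
  intro k
  induction k with
  | zero => intro n; simp
  | succ k ih =>
    intro n
    rw [pow_succ, ContinuousLinearMap.mul_apply, hW n, map_smul, ih (n+1), smul_smul,
      Finset.prod_range_succ']
    have h1 : ∀ t, n + 1 + t = n + (t + 1) := fun t => by omega
    have h2 : n + 1 + k = n + (k + 1) := by omega
    simp only [h1, h2, add_zero]
    rw [mul_comm]

lemma mem_spec (M K : ℝ) (hM : 0 < M) (hK : 1 < K) (W : Hk →L[ℝ] Hk)
    (hW : ∀ n, W (e n) = al M K n • e (n+1)) (l : ℝ) (hl0 : 0 ≤ l) (hl : l * K < M) :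
    l ∈ spectrum ℝ W := by
  have hK0 : (0:ℝ) < K := lt_trans zero_lt_one hK
  have hKne : K ≠ 0 := hK0.ne'
  have hMne : M ≠ 0 := hM.ne'
  set r : ℝ := l * K / M with hr
  have hr0 : 0 ≤ r := by positivity
  have hr1 : r < 1 := by rw [hr, div_lt_one hM]; exact hl
  set vf : ℕ → ℝ := fun n => (l/M)^n * K^((Nat.factorial n).factorization 2) with hvf
  have hvb : ∀ n, |vf n| ≤ r^n := by
    intro n
    have h1 : 0 ≤ vf n := by positivity
    rw [abs_of_nonneg h1, hvf]
    calc (l/M)^n * K^((Nat.factorial n).factorization 2)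
        ≤ (l/M)^n * K^n := by
          refine mul_le_mul_of_nonneg_left ?_ (by positivity)
          exact pow_le_pow_right₀ hK.le (v2fact_le n)
      _ = r^n := by rw [hr, div_pow, div_pow, div_mul_eq_mul_div]; ring_nf
  have hmem : Memℓp vf 2 := by
    apply memℓp_gen
    refine Summable.of_nonneg_of_le (fun n => by positivity) (fun n => ?_)
      ((summable_geometric_of_lt_one (r := r^2) (by positivity) (by nlinarith)).mul_left 1)
    rw [hp2]
    calc ‖vf n‖^(2:ℕ) ≤ (r^n)^(2:ℕ) := by
          refine pow_le_pow_left₀ (norm_nonneg _) ?_ 2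
          rw [Real.norm_eq_abs]; exact hvb n
      _ = 1 * (r^2)^n := by ring
  set v : Hk := ⟨vf, hmem⟩ with hv
  have hvcoe : ∀ n, v n = vf n := fun n => rfl
  have al_vf : ∀ n, al M K n * vf (n+1) = l * vf n := by
    intro n
    have hfac : (Nat.factorial (n+1)).factorization 2
        = (n+1).factorization 2 + (Nat.factorial n).factorization 2 := by
      rw [Nat.factorial_succ, Nat.factorization_mul (by omega) (by positivity)]
      simp
    rw [hvf]
    simp only [al, hfac, pow_add, pow_succ]
    field_simp
  have key : ∀ x : Hk, (inner ℝ v (W x) : ℝ) = l * (inner ℝ v x : ℝ) := by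
    intro x
    have hs : HasSum (fun n => (lp.single 2 n (x n) : Hk)) x :=
      lp.hasSum_single (by norm_num) x
    have hs5 : HasSum (fun n => vf n * x n) (inner ℝ v x : ℝ) := by
      have := hs.mapL (innerSL ℝ v)
      refine this.congr_fun fun n => ?_
      simp only [innerSL_apply_apply, lp.inner_single_right]
      simp [RCLike.inner_apply, hvcoe, mul_comm]
    have hs3 : HasSum (fun n => (inner ℝ v (W (lp.single 2 n (x n))) : ℝ)) (inner ℝ v (W x) : ℝ) :=
      (hs.mapL W).mapL (innerSL ℝ v)
    have hterm : ∀ n, (inner ℝ v (W (lp.single 2 n (x n))) : ℝ) = l * (vf n * x n) := by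
      intro n
      rw [single_eq_smul n (x n), map_smul, hW n, inner_smul_right, inner_smul_right, e,
        lp.inner_single_right]
      have : (inner ℝ (v (n+1)) (1:ℝ) : ℝ) = vf (n+1) := by
        simp [RCLike.inner_apply, hvcoe]
      rw [this, al_vf n]
      ring
    have hs4 : HasSum (fun n => l * (vf n * x n)) (inner ℝ v (W x) : ℝ) :=
      hs3.congr_fun fun n => (hterm n).symm
    exact hs4.unique (hs5.mul_left l)
  rw [spectrum.mem_iff]
  intro hunit
  obtain ⟨u, hu⟩ := hunit
  set x : Hk := (↑u⁻¹ : Hk →L[ℝ] Hk) v with hx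
  have hux : (algebraMap ℝ (Hk →L[ℝ] Hk) l - W) x = v := by
    rw [hx, ← hu, ← ContinuousLinearMap.mul_apply, Units.mul_inv, ContinuousLinearMap.one_apply]
  have hzero : (inner ℝ v v : ℝ) = 0 := by
    have h1 : (inner ℝ v ((algebraMap ℝ (Hk →L[ℝ] Hk) l - W) x) : ℝ) = 0 := by
      rw [Algebra.algebraMap_eq_smul_one]
      simp only [ContinuousLinearMap.sub_apply, ContinuousLinearMap.smul_apply,
        ContinuousLinearMap.one_apply, inner_sub_right, inner_smul_right]
      rw [key x]
      ring
    rwa [hux] at h1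
  have hvne : v ≠ 0 := by
    intro h0
    have : vf 0 = 0 := by
      rw [← hvcoe 0, h0]
      rfl
    simp [hvf] at this
  exact hvne (inner_self_eq_zero.mp hzero)

end Kak

end

/-- Kakutani's construction, norms and spectral radius.
With `ε_m = M/K^(m−1)` (`M > 0`, `K > 1`), the Kakutani weighted shift `W_ε`
(weight `ε_m` at the positions `n = 2^(m−1)(2ℓ+1)`) satisfies `‖W_ε‖ = M` and
`ρ(W_ε) = M/K`; the shifts `L_m` retaining only the `ε_m` weights satisfy
`‖L_m‖ = ε_m = M/K^(m−1) → 0` as `m → ∞`.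
(The basis vector `lp.single 2 n 1` represents `e_{n+1}`, i.e. position `n+1`;
the exponent `m − 1` for position `p` is `p.factorization 2`.) -/
theorem stmt13 (M K : ℝ) (hM : 0 < M) (hK : 1 < K)
    (W : lp (fun _ : ℕ => ℝ) 2 →L[ℝ] lp (fun _ : ℕ => ℝ) 2)
    (hW : ∀ n : ℕ,
      W (lp.single 2 n 1) = (M / K ^ ((n + 1).factorization 2)) • lp.single 2 (n + 1) 1)
    (L : ℕ → (lp (fun _ : ℕ => ℝ) 2 →L[ℝ] lp (fun _ : ℕ => ℝ) 2))
    (hL : ∀ m : ℕ, 1 ≤ m → ∀ n : ℕ,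
      L m (lp.single 2 n 1) =
        (if (n + 1).factorization 2 = m - 1 then M / K ^ (m - 1) else 0) •
          lp.single 2 (n + 1) 1) :
    ‖W‖ = M ∧ spectralRadius ℝ W = ENNReal.ofReal (M / K) ∧
    (∀ m : ℕ, 1 ≤ m → ‖L m‖ = M / K ^ (m - 1)) ∧
    Filter.Tendsto (fun m : ℕ => ‖L m‖) Filter.atTop (nhds 0) := by
  classical
  have hK0 : (0:ℝ) < K := lt_trans zero_lt_one hK
  have hW' : ∀ n, W (Kak.e n) = Kak.al M K n • Kak.e (n+1) := fun n => hW n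
  have hal_pos : ∀ n, 0 < Kak.al M K n := fun n => by unfold Kak.al; positivity
  have hal_le : ∀ n, |Kak.al M K n| ≤ M := by
    intro n
    rw [abs_of_pos (hal_pos n)]
    unfold Kak.al
    have h1 : (1:ℝ) ≤ K ^ ((n+1).factorization 2) := by
      calc (1:ℝ) = K ^ 0 := (pow_zero K).symm
        _ ≤ _ := pow_le_pow_right₀ hK.le (Nat.zero_le _)
    exact div_le_self hM.le h1
  have hWnorm : ‖W‖ = M := by
    refine le_antisymm (Kak.norm_le_of_shift W 1 (Kak.al M K) M hM.le hal_le hW') ?_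
    have h0 := Kak.norm_ge_of_val W 0 1 (Kak.al M K 0) (hW' 0)
    have h1 : Kak.al M K 0 = M := by
      unfold Kak.al
      norm_num
    rwa [h1, abs_of_pos hM] at h0
  have hLnorm : ∀ m, 1 ≤ m → ‖L m‖ = M / K ^ (m-1) := by
    intro m hm
    have hε0 : (0:ℝ) < M / K ^ (m-1) := by positivity
    set c : ℕ → ℝ := fun n => if (n + 1).factorization 2 = m - 1 then M / K ^ (m-1) else 0
      with hc
    have hT : ∀ n, L m (Kak.e n) = c n • Kak.e (n+1) := fun n => hL m hm n
    refine le_antisymm (Kak.norm_le_of_shift (L m) 1 c _ hε0.le ?_ hT) ?_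
    · intro n; rw [hc]; dsimp only; split
      · rw [abs_of_pos hε0]
      · simpa using hε0.le
    · have hn : (2^(m-1) - 1) + 1 = 2^(m-1) := by
        have : 1 ≤ 2^(m-1) := Nat.one_le_two_pow
        omega
      have hfac : ((2^(m-1) - 1) + 1).factorization 2 = m - 1 := by
        rw [hn, Nat.Prime.factorization_pow Nat.prime_two]
        simp
      have h0 := Kak.norm_ge_of_val (L m) (2^(m-1)-1) 1 (c (2^(m-1)-1)) (hT _)
      rw [hc] at h0; dsimp only at h0; rw [if_pos hfac, abs_of_pos hε0] at h0
      exact h0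
  have htend : Filter.Tendsto (fun m : ℕ => ‖L m‖) Filter.atTop (nhds 0) := by
    have hev : (fun m : ℕ => ‖L m‖) =ᶠ[Filter.atTop] fun m => M * (K⁻¹) ^ (m-1) := by
      filter_upwards [Filter.eventually_ge_atTop 1] with m hm
      rw [hLnorm m hm, div_eq_mul_inv, inv_pow]
    refine Filter.Tendsto.congr' hev.symm ?_
    have h1 : Filter.Tendsto (fun m : ℕ => (K⁻¹) ^ m) Filter.atTop (nhds 0) :=
      tendsto_pow_atTop_nhds_zero_of_lt_one (by positivity) (inv_lt_one_of_one_lt₀ hK)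
    have h2 : Filter.Tendsto (fun m : ℕ => m - 1) Filter.atTop Filter.atTop :=
      Filter.tendsto_sub_atTop_nat 1
    have h3 := (h1.comp h2).const_mul M
    simpa using h3
  refine ⟨hWnorm, ?_, hLnorm, htend⟩
  haveI : Nontrivial Hk := ⟨⟨Kak.e 0, 0, fun h => by simpa [h] using Kak.norm_e 0⟩⟩
  have hone : (‖(1 : Hk →L[ℝ] Hk)‖₊ : ℝ≥0∞) = 1 := by
    have h : ‖(1 : Hk →L[ℝ] Hk)‖ = 1 := by
      rw [ContinuousLinearMap.one_def, ContinuousLinearMap.norm_id]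
    rw [← enorm_eq_nnnorm, ← ofReal_norm, h]
    simp
  have hub : spectralRadius ℝ W ≤ ENNReal.ofReal (M/K) := by
    have key : ∀ j : ℕ, spectralRadius ℝ W
        ≤ ENNReal.ofReal ((M/K) * K ^ ((1:ℝ)/((2^j : ℕ):ℝ))) := by
      intro j
      set k := 2^j with hk
      have hk1 : 1 ≤ k := Nat.one_le_two_pow
      set c : ℕ → ℝ := fun n => ∏ t ∈ Finset.range k, Kak.al M K (n+t) with hcdef
      have hpow : ∀ n, (W^k) (Kak.e n) = c n • Kak.e (n+k) :=
        fun n => Kak.pow_single M K W hW' k n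
      set C := M^k / K^(k-1) with hCdef
      have hC0 : 0 < C := by positivity
      have hcb : ∀ n, |c n| ≤ C := by
        intro n
        have hpos : 0 < c n := Finset.prod_pos fun t _ => hal_pos _
        rw [abs_of_pos hpos, hcdef]
        dsimp only
        rw [Kak.prod_al M K n k]
        have hE : k - 1 ≤ ∑ t ∈ Finset.range k, ((n+t+1).factorization 2) := by
          have h1 := Kak.sum_v2_ge n k
          rw [hk, Kak.v2fact_pow j] at h1
          have h2 : ∑ t ∈ Finset.range k, ((n+1+t).factorization 2)
              = ∑ t ∈ Finset.range k, ((n+t+1).factorization 2) :=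
            Finset.sum_congr rfl fun t _ => by rw [show n+1+t = n+t+1 by omega]
          rw [← hk] at h1
          omega
        exact div_le_div_of_nonneg_left (by positivity) (by positivity)
          (pow_le_pow_right₀ hK.le hE)
      have hnorm : ‖W^k‖ ≤ C := Kak.norm_le_of_shift (W^k) k c C hC0.le hcb hpow
      have hs := spectrum.spectralRadius_le_pow_nnnorm_pow_one_div ℝ W (k-1)
      rw [show k - 1 + 1 = k by omega] at hs
      have hcast : ((k - 1 : ℕ):ℝ) + 1 = (k:ℝ) := by
        rw [Nat.cast_sub hk1]; ring
      rw [hcast, hone, ENNReal.one_rpow, mul_one] at hs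
      refine hs.trans ?_
      have h1 : (‖W^k‖₊ : ℝ≥0∞) ≤ ENNReal.ofReal C := by
        rw [← enorm_eq_nnnorm, ← ofReal_norm]
        exact ENNReal.ofReal_le_ofReal hnorm
      calc (‖W^k‖₊ : ℝ≥0∞) ^ ((1:ℝ)/(k:ℝ))
          ≤ (ENNReal.ofReal C) ^ ((1:ℝ)/(k:ℝ)) :=
            ENNReal.rpow_le_rpow h1 (by positivity)
        _ = ENNReal.ofReal (C ^ ((1:ℝ)/(k:ℝ))) := ENNReal.ofReal_rpow_of_pos hC0
        _ = ENNReal.ofReal ((M/K) * K ^ ((1:ℝ)/(k:ℝ))) := by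
            congr 1
            have hCk : C = (M/K)^k * K := by
              have hKk : K^k = K^(k-1) * K := by
                conv_lhs => rw [show k = (k-1)+1 by omega]
                rw [pow_succ]
              rw [hCdef, div_pow]
              field_simp
              rw [hKk]
            rw [hCk, Real.mul_rpow (by positivity) hK0.le,
              ← Real.rpow_natCast (M/K) k, ← Real.rpow_mul (by positivity)]
            rw [mul_one_div, div_self (by positivity : ((k:ℕ):ℝ) ≠ 0), Real.rpow_one]
    have ht : Filter.Tendsto (fun j : ℕ => (1:ℝ)/((2^j : ℕ):ℝ)) Filter.atTop (nhds 0) := by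
      have : (fun j : ℕ => (1:ℝ)/((2^j : ℕ):ℝ)) = fun j : ℕ => ((1:ℝ)/2) ^ j := by
        funext j; push_cast; rw [one_div, one_div, inv_pow]
      rw [this]
      exact tendsto_pow_atTop_nhds_zero_of_lt_one (by norm_num) (by norm_num)
    have hKt : Filter.Tendsto (fun j : ℕ => K ^ ((1:ℝ)/((2^j : ℕ):ℝ)))
        Filter.atTop (nhds 1) := by
      have heq : (fun j : ℕ => K ^ ((1:ℝ)/((2^j : ℕ):ℝ)))
          = fun j : ℕ => Real.exp (Real.log K * ((1:ℝ)/((2^j : ℕ):ℝ))) := by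
        funext j; rw [Real.rpow_def_of_pos hK0]
      rw [heq]
      have h4 := (ht.const_mul (Real.log K)).comp (Filter.tendsto_id (α := ℕ))
      have h5 : Filter.Tendsto (fun j : ℕ => Real.log K * ((1:ℝ)/((2^j : ℕ):ℝ)))
          Filter.atTop (nhds 0) := by simpa using ht.const_mul (Real.log K)
      have := (Real.continuous_exp.continuousAt (x := 0)).tendsto.comp h5
      rw [Real.exp_zero] at this; exact this
    have hreal : Filter.Tendsto (fun j : ℕ => (M/K) * K ^ ((1:ℝ)/((2^j : ℕ):ℝ)))
        Filter.atTop (nhds (M/K)) := by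
      have := hKt.const_mul (M/K)
      simpa using this
    have henn : Filter.Tendsto (fun j : ℕ => ENNReal.ofReal ((M/K) * K ^ ((1:ℝ)/((2^j : ℕ):ℝ))))
        Filter.atTop (nhds (ENNReal.ofReal (M/K))) :=
      (ENNReal.continuous_ofReal.continuousAt.tendsto.comp hreal)
    exact ge_of_tendsto' henn key
  have hlb : ENNReal.ofReal (M/K) ≤ spectralRadius ℝ W := by
    have hmem : ∀ j : ℕ, ((M/K) * ((j:ℝ)/((j:ℝ)+1))) ∈ spectrum ℝ W := by
      intro j
      refine Kak.mem_spec M K hM hK W hW' _ (by positivity) ?_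
      have h1 : (j:ℝ)/((j:ℝ)+1) < 1 := by
        rw [div_lt_one (by positivity)]; linarith
      have h2 : (M/K) * ((j:ℝ)/((j:ℝ)+1)) * K = M * ((j:ℝ)/((j:ℝ)+1)) := by
        field_simp
      rw [h2]
      calc M * ((j:ℝ)/((j:ℝ)+1)) < M * 1 := by
            refine mul_lt_mul_of_pos_left h1 hM
        _ = M := mul_one M
    have hle : ∀ j : ℕ, ENNReal.ofReal ((M/K) * ((j:ℝ)/((j:ℝ)+1))) ≤ spectralRadius ℝ W := by
      intro j
      have h2 : ENNReal.ofReal ((M/K) * ((j:ℝ)/((j:ℝ)+1)))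
          = (‖(M/K) * ((j:ℝ)/((j:ℝ)+1))‖₊ : ℝ≥0∞) := by
        rw [← enorm_eq_nnnorm, ← ofReal_norm, Real.norm_eq_abs, abs_of_nonneg (by positivity)]
      rw [h2]
      exact le_iSup₂ (f := fun k (_ : k ∈ spectrum ℝ W) => (‖k‖₊ : ℝ≥0∞)) _ (hmem j)
    have hreal : Filter.Tendsto (fun j : ℕ => (M/K) * ((j:ℝ)/((j:ℝ)+1)))
        Filter.atTop (nhds (M/K)) := by
      have h3 := (tendsto_natCast_div_add_atTop (1:ℝ)).const_mul (M/K)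
      simpa using h3
    have henn : Filter.Tendsto (fun j : ℕ => ENNReal.ofReal ((M/K) * ((j:ℝ)/((j:ℝ)+1))))
        Filter.atTop (nhds (ENNReal.ofReal (M/K))) :=
      (ENNReal.continuous_ofReal.continuousAt.tendsto.comp hreal)
    exact le_of_tendsto henn (Filter.Eventually.of_forall hle)
  exact le_antisymm hub hlb
end

section
/- Let 0 < R − M/K < R < 1 < R + M/K and A = log(R·I + W_ε) where W_ε is the Kakutani shift (spectrum of R·I + W_ε is the closed disk of radius M/K centered at R). Then for all t ≥ 0, ‖e^{tA}‖ ≥ ρ(e^{tA}) = e^{t log(R + M/K)}, so the semigroup e^{tA} is unstable (its norm grows exponentially since R + M/K > 1). -/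
open Filter Topology
open scoped ENNReal

open scoped ENNReal

lemma aux_norm_exp_le {𝔸 : Type*} [NormedRing 𝔸] [NormedAlgebra ℂ 𝔸] [CompleteSpace 𝔸]
    [NormOneClass 𝔸] (x : 𝔸) : ‖NormedSpace.exp x‖ ≤ Real.exp ‖x‖ := by
  rw [NormedSpace.exp_eq_tsum ℂ]
  have hs : Summable fun n : ℕ => ‖((n.factorial : ℂ))⁻¹ • x ^ n‖ :=
    NormedSpace.norm_expSeries_summable' x
  refine (norm_tsum_le_tsum_norm hs).trans ?_
  have h2 : Real.exp ‖x‖ = ∑' n : ℕ, ((n.factorial : ℝ))⁻¹ • ‖x‖ ^ n := by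
    rw [Real.exp_eq_exp_ℝ, NormedSpace.exp_eq_tsum ℝ]
  rw [h2]
  refine Summable.tsum_le_tsum (fun n => ?_) hs (NormedSpace.expSeries_summable' (𝕂 := ℝ) ‖x‖)
  rw [norm_smul, norm_inv, Complex.norm_natCast, smul_eq_mul]
  exact mul_le_mul_of_nonneg_left (norm_pow_le x n) (by positivity)

lemma aux_upper {𝔸 : Type*} [NormedRing 𝔸] [NormedAlgebra ℂ 𝔸] [CompleteSpace 𝔸]
    [NormOneClass 𝔸] (A : 𝔸) (r t : ℝ) (hr : 1 < r) (ht : 0 < t)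
    (hρ : spectralRadius ℂ (NormedSpace.exp A) = ENNReal.ofReal r) :
    spectralRadius ℂ (NormedSpace.exp ((t : ℂ) • A)) ≤
      ENNReal.ofReal (Real.exp (t * Real.log r)) := by
  have hr0 : (0:ℝ) < r := lt_trans one_pos hr
  have hlogr : 0 ≤ Real.log r := Real.log_nonneg hr.le
  letI : NormedAlgebra ℚ 𝔸 := NormedAlgebra.restrictScalars ℚ ℂ 𝔸
  set B := NormedSpace.exp A with hBdef
  -- real Gelfand formula
  have hG : Tendsto (fun n : ℕ => ‖B ^ n‖ ^ (1/(n:ℝ))) atTop (𝓝 r) := by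
    have h := spectrum.pow_norm_pow_one_div_tendsto_nhds_spectralRadius B
    rw [hρ] at h
    have h2 := (ENNReal.tendsto_toReal (by simp : ENNReal.ofReal r ≠ ⊤)).comp h
    have e1 : (ENNReal.toReal ∘ fun n : ℕ => ENNReal.ofReal (‖B ^ n‖ ^ (1/(n:ℝ)))) =
        fun n : ℕ => ‖B ^ n‖ ^ (1/(n:ℝ)) :=
      funext fun n => ENNReal.toReal_ofReal (Real.rpow_nonneg (norm_nonneg _) _)
    rw [e1, ENNReal.toReal_ofReal hr0.le] at h2
    exact h2
  suffices H : ∀ δ : ℝ, 0 < δ → spectralRadius ℂ (NormedSpace.exp ((t : ℂ) • A)) ≤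
      ENNReal.ofReal (Real.exp (t * Real.log r + δ)) by
    have h0 : Tendsto (fun k : ℕ => t * Real.log r + 1/((k:ℝ)+1)) atTop
        (𝓝 (t * Real.log r + 0)) :=
      tendsto_const_nhds.add tendsto_one_div_add_atTop_nhds_zero_nat
    rw [add_zero] at h0
    have h1 : Tendsto (fun k : ℕ => ENNReal.ofReal (Real.exp (t * Real.log r + 1/((k:ℝ)+1))))
        atTop (𝓝 (ENNReal.ofReal (Real.exp (t * Real.log r)))) :=
      (ENNReal.continuous_ofReal.tendsto _).comp ((Real.continuous_exp.tendsto _).comp h0)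
    exact ge_of_tendsto' h1 (fun k => H _ (by positivity))
  intro δ hδ
  set ε := δ / (2*t) with hεdef
  have hε : 0 < ε := by positivity
  have hexpε : 1 < Real.exp ε := by
    have := Real.add_one_le_exp ε; linarith
  have hlt : r < r * Real.exp ε := by nlinarith
  obtain ⟨N₁, hN₁⟩ := Filter.eventually_atTop.mp (hG.eventually (eventually_le_nhds hlt))
  -- bound on powers of B
  have hBpow : ∀ m : ℕ, max N₁ 1 ≤ m → ‖B ^ m‖ ≤ Real.exp ((m:ℝ) * (Real.log r + ε)) := by
    intro m hm
    have hm1 : 1 ≤ m := le_trans (le_max_right _ _) hm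
    have h1 : ‖B ^ m‖ ^ (1/(m:ℝ)) ≤ r * Real.exp ε := hN₁ m (le_trans (le_max_left _ _) hm)
    have hmpos : (0:ℝ) < m := by exact_mod_cast hm1
    have h2 : (‖B ^ m‖ ^ (1/(m:ℝ))) ^ (m:ℝ) = ‖B ^ m‖ := by
      rw [← Real.rpow_mul (norm_nonneg _), one_div_mul_cancel hmpos.ne', Real.rpow_one]
    rw [← h2]
    calc (‖B ^ m‖ ^ (1/(m:ℝ))) ^ (m:ℝ)
        ≤ (r * Real.exp ε) ^ (m:ℝ) :=
          Real.rpow_le_rpow (Real.rpow_nonneg (norm_nonneg _) _) h1 hmpos.le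
      _ = Real.exp ((m:ℝ) * (Real.log r + ε)) := by
          rw [Real.rpow_def_of_pos (by positivity), Real.log_mul hr0.ne' (Real.exp_pos _).ne',
            Real.log_exp, mul_comm]
  -- choose n
  obtain ⟨n, hn1, hn2⟩ : ∃ n : ℕ, (N₁ + 1 : ℝ)/t ≤ (n:ℝ)+1 ∧ 2*‖A‖/δ ≤ (n:ℝ)+1 := by
    obtain ⟨n, h⟩ := exists_nat_ge (max ((N₁+1:ℝ)/t) (2*‖A‖/δ))
    exact ⟨n, le_trans (le_max_left _ _) (h.trans (by linarith)),
      le_trans (le_max_right _ _) (h.trans (by linarith))⟩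
  set s : ℝ := ((n:ℝ)+1) * t with hsdef
  have hs0 : 0 < s := by positivity
  have hsN : (N₁ + 1 : ℝ) ≤ s := by
    rw [hsdef]; rw [div_le_iff₀ ht] at hn1; linarith
  set m : ℕ := ⌊s⌋₊ with hmdef
  have hmN : max N₁ 1 ≤ m := by
    refine Nat.le_floor (le_trans ?_ hsN)
    rw [Nat.cast_max]
    push_cast
    exact max_le (by linarith) (by linarith [Nat.cast_nonneg (α := ℝ) N₁])
  have hms : (m:ℝ) ≤ s := Nat.floor_le hs0.le
  have hsm1 : s - m ≤ 1 := by
    have := Nat.lt_floor_add_one s; linarith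
  have hsm0 : 0 ≤ s - m := by linarith
  -- decomposition
  have hcomm : Commute (((m:ℝ) : ℂ) • A) (((s - m : ℝ) : ℂ) • A) :=
    ((Commute.refl A).smul_left _).smul_right _
  have hBm : NormedSpace.exp (((m:ℝ) : ℂ) • A) = B ^ m := by
    have : ((m:ℝ) : ℂ) • A = (m : ℕ) • A := by
      rw [← Nat.cast_smul_eq_nsmul ℂ]; norm_num
    rw [this, NormedSpace.exp_nsmul]
  have hsplit : NormedSpace.exp ((s : ℂ) • A)
      = B ^ m * NormedSpace.exp (((s - m : ℝ) : ℂ) • A) := by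
    rw [← hBm, ← NormedSpace.exp_add_of_commute hcomm, ← add_smul]
    norm_num
  have hpow : NormedSpace.exp ((t:ℂ) • A) ^ (n+1) = NormedSpace.exp ((s : ℂ) • A) := by
    rw [← NormedSpace.exp_nsmul, ← Nat.cast_smul_eq_nsmul ℂ, smul_smul]
    congr 1
    push_cast [hsdef]
    ring_nf
  -- norm bound
  have hnorm : ‖NormedSpace.exp ((t:ℂ) • A) ^ (n+1)‖
      ≤ Real.exp (((n:ℝ)+1) * (t * Real.log r + δ)) := by
    rw [hpow, hsplit]
    have hA1 : ‖((s - m : ℝ) : ℂ) • A‖ ≤ ‖A‖ := by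
      rw [norm_smul, Complex.norm_real, Real.norm_of_nonneg hsm0]
      nlinarith [norm_nonneg A]
    have hA2 : ‖A‖ ≤ ((n:ℝ)+1) * (δ/2) := by
      rw [div_le_iff₀ hδ] at hn2; nlinarith
    calc ‖B ^ m * NormedSpace.exp (((s - m : ℝ) : ℂ) • A)‖
        ≤ ‖B ^ m‖ * ‖NormedSpace.exp (((s - m : ℝ) : ℂ) • A)‖ := norm_mul_le _ _
      _ ≤ Real.exp ((m:ℝ) * (Real.log r + ε)) * Real.exp ‖A‖ := by
          refine mul_le_mul (hBpow m hmN) ((aux_norm_exp_le _).trans ?_) (norm_nonneg _)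
            (Real.exp_nonneg _)
          exact Real.exp_le_exp.mpr hA1
      _ = Real.exp ((m:ℝ) * (Real.log r + ε) + ‖A‖) := (Real.exp_add _ _).symm
      _ ≤ Real.exp (((n:ℝ)+1) * (t * Real.log r + δ)) := by
          refine Real.exp_le_exp.mpr ?_
          have hsε : s * ε = ((n:ℝ)+1) * (δ/2) := by
            rw [hsdef, hεdef]; field_simp
          have hmε : (m:ℝ) * (Real.log r + ε) ≤ s * Real.log r + s * ε := by
            nlinarith
          have : s * Real.log r = ((n:ℝ)+1) * (t * Real.log r) := by rw [hsdef]; ring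
          nlinarith
  -- conclude via spectral radius power bound
  have key := spectrum.spectralRadius_le_pow_nnnorm_pow_one_div ℂ
    (NormedSpace.exp ((t:ℂ) • A)) n
  rw [nnnorm_one, ENNReal.coe_one, ENNReal.one_rpow, mul_one] at key
  refine key.trans ?_
  have h1 : (‖NormedSpace.exp ((t:ℂ) • A) ^ (n+1)‖₊ : ℝ≥0∞)
      ≤ ENNReal.ofReal (Real.exp (t * Real.log r + δ)) ^ ((n+1) : ℕ) := by
    rw [← ENNReal.ofReal_pow (Real.exp_pos _).le, ← enorm_eq_nnnorm, ← ofReal_norm]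
    refine ENNReal.ofReal_le_ofReal ?_
    rw [← Real.exp_nat_mul]
    refine hnorm.trans ?_
    push_cast
    exact le_of_eq (by ring_nf)
  calc (‖NormedSpace.exp ((t:ℂ) • A) ^ (n+1)‖₊ : ℝ≥0∞) ^ (1/((n:ℝ)+1))
      ≤ (ENNReal.ofReal (Real.exp (t * Real.log r + δ)) ^ ((n+1) : ℕ)) ^ (1/((n:ℝ)+1)) :=
        ENNReal.rpow_le_rpow h1 (by positivity)
    _ = ENNReal.ofReal (Real.exp (t * Real.log r + δ)) := by
        rw [← ENNReal.rpow_natCast, ← ENNReal.rpow_mul]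
        rw [show (((n+1) : ℕ) : ℝ) * (1/((n:ℝ)+1)) = 1 by push_cast; field_simp]
        exact ENNReal.rpow_one _


lemma aux_le_spectralRadius {𝔸 : Type*} [NormedRing 𝔸] [NormedAlgebra ℂ 𝔸] {a : 𝔸} {z : ℂ}
    (hz : z ∈ spectrum ℂ a) : (‖z‖₊ : ℝ≥0∞) ≤ spectralRadius ℂ a :=
  le_iSup₂ (f := fun k (_ : k ∈ spectrum ℂ a) => (‖k‖₊ : ℝ≥0∞)) z hz

/-- Let `0 < R − M/K < R < 1 < R + M/K` and
`A = log(R·I + W_ε)`, where `W_ε` is the Kakutani shift, so that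
`σ(R·I + W_ε)` is the closed disk of radius `M/K` centered at `R` and
`σ(A) = log(σ(R·I + W_ε))`. Then for all `t ≥ 0`,
`‖e^{tA}‖ ≥ ρ(e^{tA}) = e^{t·log(R + M/K)}`: the semigroup `e^{tA}` is
unstable (its norm grows exponentially since `R + M/K > 1`). -/
theorem stmt14 (M K R : ℝ) (hM : 0 < M) (hK : 1 < K)
    (h1 : 0 < R - M / K) (h2 : R < 1) (h3 : 1 < R + M / K)
    (W : lp (fun _ : ℕ => ℂ) 2 →L[ℂ] lp (fun _ : ℕ => ℂ) 2)
    (hW : ∀ n : ℕ,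
      W (lp.single 2 n 1) =
        ((M : ℂ) / (K : ℂ) ^ ((n + 1).factorization 2)) • lp.single 2 (n + 1) 1)
    (hWspec : spectrum ℂ ((R : ℂ) • (1 : lp (fun _ : ℕ => ℂ) 2 →L[ℂ] lp (fun _ : ℕ => ℂ) 2) + W)
      = Metric.closedBall (R : ℂ) (M / K))
    (A : lp (fun _ : ℕ => ℂ) 2 →L[ℂ] lp (fun _ : ℕ => ℂ) 2)
    (hexp : NormedSpace.exp A =
      (R : ℂ) • (1 : lp (fun _ : ℕ => ℂ) 2 →L[ℂ] lp (fun _ : ℕ => ℂ) 2) + W)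
    (hAspec : spectrum ℂ A = Complex.log '' Metric.closedBall (R : ℂ) (M / K)) :
    ∀ t : ℝ, 0 ≤ t →
      spectralRadius ℂ (NormedSpace.exp (t • A)) =
        ENNReal.ofReal (Real.exp (t * Real.log (R + M / K))) ∧
      Real.exp (t * Real.log (R + M / K)) ≤ ‖NormedSpace.exp (t • A)‖ := by
  haveI : Nontrivial (lp (fun _ : ℕ => ℂ) 2) := by
    have hn1 : ‖(lp.single 2 0 (1:ℂ) : lp (fun _ : ℕ => ℂ) 2)‖ = 1 := by
      have := lp.norm_single (p := 2) (E := fun _ : ℕ => ℂ) (by norm_num) 0 (1:ℂ)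
      simpa using this
    refine ⟨⟨lp.single 2 0 (1:ℂ), 0, fun h => ?_⟩⟩
    rw [h] at hn1
    simp at hn1
  intro t ht
  set r : ℝ := R + M / K with hrdef
  have hr1 : 1 < r := h3
  have hr0 : (0:ℝ) < r := lt_trans one_pos hr1
  have hKpos : (0:ℝ) < K := lt_trans one_pos hK
  have hMK : 0 < M / K := div_pos hM hKpos
  -- r ∈ spectrum of exp A
  have hrmem : (r : ℂ) ∈ spectrum ℂ (NormedSpace.exp A) := by
    rw [hexp, hWspec, Metric.mem_closedBall, Complex.dist_eq]
    have : (r : ℂ) - (R : ℂ) = ((M / K : ℝ) : ℂ) := by push_cast [hrdef]; ring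
    rw [this, Complex.norm_real, Real.norm_of_nonneg hMK.le]
  -- spectral radius of exp A
  have hρB : spectralRadius ℂ (NormedSpace.exp A) = ENNReal.ofReal r := by
    refine le_antisymm ?_ ?_
    · rw [spectralRadius]
      refine iSup₂_le fun z hz => ?_
      rw [hexp, hWspec, Metric.mem_closedBall, Complex.dist_eq] at hz
      rw [← enorm_eq_nnnorm, ← ofReal_norm]
      refine ENNReal.ofReal_le_ofReal ?_
      calc ‖z‖ = ‖(z - (R:ℂ)) + (R:ℂ)‖ := by ring_nf
        _ ≤ ‖z - (R:ℂ)‖ + ‖(R:ℂ)‖ := norm_add_le _ _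
        _ ≤ M / K + R := by
            have : ‖(R:ℂ)‖ = R := by
              rw [Complex.norm_real, Real.norm_of_nonneg (by linarith [hMK])]
            rw [this]; linarith
        _ = r := by rw [hrdef]; ring
    · have := aux_le_spectralRadius hrmem
      refine le_trans (le_of_eq ?_) this
      rw [← enorm_eq_nnnorm, ← ofReal_norm, Complex.norm_real, Real.norm_of_nonneg hr0.le]
  -- log r ∈ spectrum of A
  have hlogmem : Complex.log (r : ℂ) ∈ spectrum ℂ A := by
    rw [hAspec]
    refine ⟨(r : ℂ), ?_, rfl⟩
    rw [Metric.mem_closedBall, Complex.dist_eq]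
    have : (r : ℂ) - (R : ℂ) = ((M / K : ℝ) : ℂ) := by push_cast [hrdef]; ring
    rw [this, Complex.norm_real, Real.norm_of_nonneg hMK.le]
  rcases eq_or_lt_of_le ht with h0 | htpos
  · -- t = 0
    have hz : (0:ℝ) • A = 0 := zero_smul ℝ A
    rw [← h0, hz, NormedSpace.exp_zero]
    constructor
    · refine le_antisymm ?_ ?_
      · refine (spectrum.spectralRadius_le_nnnorm (𝕜 := ℂ) 1).trans ?_
        simp
      · have hone : (1:ℂ) ∈ spectrum ℂ (1 : lp (fun _ : ℕ => ℂ) 2 →L[ℂ] lp (fun _ : ℕ => ℂ) 2) := by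
          rw [spectrum.mem_iff, map_one, sub_self]
          exact fun h => one_ne_zero ((isUnit_zero_iff.mp h).symm)
        have := aux_le_spectralRadius hone
        simpa using this
    · simp
  · -- t > 0
    have hsmul : t • A = (t : ℂ) • A := by rw [← smul_one_smul ℂ t A]; norm_num
    rw [hsmul]
    have htC : (t : ℂ) ≠ 0 := by exact_mod_cast htpos.ne'
    -- lower bound element
    have hzmem : (t : ℂ) * Complex.log (r : ℂ) ∈ spectrum ℂ ((t : ℂ) • A) := by
      have : (t : ℂ) • A = (Units.mk0 (t:ℂ) htC) • A := rfl
      rw [this, spectrum.unit_smul_eq_smul]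
      exact ⟨_, hlogmem, rfl⟩
    have hexpz := spectrum.exp_mem_exp ((t : ℂ) • A) hzmem
    have hval : NormedSpace.exp ((t : ℂ) * Complex.log (r : ℂ))
        = ((Real.exp (t * Real.log r) : ℝ) : ℂ) := by
      rw [← Complex.exp_eq_exp_ℂ, ← Complex.ofReal_log hr0.le, ← Complex.ofReal_mul,
        ← Complex.ofReal_exp]
    rw [hval] at hexpz
    have hlow : ENNReal.ofReal (Real.exp (t * Real.log r))
        ≤ spectralRadius ℂ (NormedSpace.exp ((t : ℂ) • A)) := by
      have := aux_le_spectralRadius hexpz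
      refine le_trans (le_of_eq ?_) this
      rw [← enorm_eq_nnnorm, ← ofReal_norm, Complex.norm_real,
        Real.norm_of_nonneg (Real.exp_nonneg _)]
    have hup := aux_upper A r t hr1 htpos hρB
    have heq : spectralRadius ℂ (NormedSpace.exp ((t : ℂ) • A))
        = ENNReal.ofReal (Real.exp (t * Real.log r)) := le_antisymm hup hlow
    refine ⟨heq, ?_⟩
    have hnorm := spectrum.spectralRadius_le_nnnorm (𝕜 := ℂ) (NormedSpace.exp ((t : ℂ) • A))
    rw [heq, ← enorm_eq_nnnorm, ← ofReal_norm] at hnorm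
    exact (ENNReal.ofReal_le_ofReal_iff (norm_nonneg _)).mp hnorm
end

section
/- There exists a bounded operator A on a separable Hilbert space H with ‖e^{tA}‖ ≥ e^{ωt} for some ω > 0 (unstable), and a sequence of bounded operators B_m with ‖B_m‖ → 0 such that each semigroup e^{t(A+B_m)} is exponentially stable: for each m there exist D_m and ω' > 0 with ‖e^{t(A+B_m)}‖ ≤ D_m e^{−ω' t} for all t ≥ 0. Thus instability of autonomous linear equations in infinite dimensions is not robust under arbitrarily small bounded perturbations. -/
set_option maxHeartbeats 2000000
set_option synthInstance.maxHeartbeats 1000000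

noncomputable section Stmt16Aux

open scoped ENNReal NNReal

namespace Stmt16

abbrev Hil := lp (fun _ : ℕ => ℂ) 2

local notation "⟪" x ", " y "⟫" => @inner ℂ _ _ x y

/-! ### generalities -/

instance : Nontrivial Hil := by
  refine ⟨0, lp.single 2 0 (1:ℂ), fun h => ?_⟩
  have := congrFun (congrArg (fun f : Hil => (f : ℕ → ℂ)) h) 0
  simp only [lp.coeFn_zero, Pi.zero_apply, lp.single_apply] at this
  simp at this

lemma csmul (t : ℝ) (y : Hil) : t • y = ((t:ℂ)) • y := by
  apply lp.ext
  funext n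
  rw [lp.coeFn_smul, lp.coeFn_smul, Pi.smul_apply, Pi.smul_apply]
  show t • _ = (t:ℂ) * _
  rw [Complex.real_smul]

lemma csmul' (t : ℝ) (T : Hil →L[ℂ] Hil) : t • T = ((t:ℂ)) • T := by
  apply ContinuousLinearMap.ext
  intro x
  rw [ContinuousLinearMap.smul_apply, ContinuousLinearMap.smul_apply]
  exact csmul t (T x)

lemma pow_div_factorial_le_exp (x : ℝ) (hx : 0 ≤ x) (n : ℕ) :
    x ^ n / n.factorial ≤ Real.exp x := by
  rw [Real.exp_eq_exp_ℝ, NormedSpace.exp_eq_tsum_div]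
  exact Summable.le_tsum (Real.summable_pow_div_factorial x) n (fun m _ => by positivity)

lemma rpow_toReal_two (a : ℝ) : a ^ (2:ℝ≥0∞).toReal = a ^ (2:ℕ) := by
  rw [show (2:ℝ≥0∞).toReal = ((2:ℕ):ℝ) by norm_num, Real.rpow_natCast]

/-! ### weighted shift operators -/

def shiftFun (σ : ℕ → ℂ) (x : ℕ → ℂ) : ℕ → ℂ
  | 0 => 0
  | n+1 => σ n * x n

lemma memℓp_shiftFun {σ : ℕ → ℂ} {C : ℝ} (hσ : ∀ j, ‖σ j‖ ≤ C) (x : Hil) :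
    Memℓp (shiftFun σ (x : ℕ → ℂ)) 2 := by
  have hC : 0 ≤ C := le_trans (norm_nonneg _) (hσ 0)
  apply memℓp_gen
  have hx : Summable (fun n => ‖(x : ℕ → ℂ) n‖ ^ (2 : ℝ≥0∞).toReal) :=
    (lp.memℓp x).summable (by norm_num)
  rw [← summable_nat_add_iff 1]
  apply hx.mul_left (C ^ (2 : ℝ≥0∞).toReal) |>.of_nonneg_of_le
  · intro n; positivity
  · intro n
    show ‖σ n * (x : ℕ → ℂ) n‖ ^ (2 : ℝ≥0∞).toReal ≤ _
    rw [← Real.mul_rpow hC (norm_nonneg _)]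
    apply Real.rpow_le_rpow (norm_nonneg _) _ (by norm_num)
    rw [norm_mul]
    exact mul_le_mul_of_nonneg_right (hσ n) (norm_nonneg _)

lemma norm_shiftFun_le {σ : ℕ → ℂ} {C : ℝ} (hσ : ∀ j, ‖σ j‖ ≤ C) (x : Hil)
    (h : Memℓp (shiftFun σ (x : ℕ → ℂ)) 2) :
    ‖(⟨shiftFun σ (x : ℕ → ℂ), h⟩ : Hil)‖ ≤ C * ‖x‖ := by
  have hC : 0 ≤ C := le_trans (norm_nonneg _) (hσ 0)
  have h2 : (0:ℝ) < (2 : ℝ≥0∞).toReal := by norm_num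
  have key : ‖(⟨shiftFun σ (x : ℕ → ℂ), h⟩ : Hil)‖ ^ (2 : ℝ≥0∞).toReal
      ≤ (C * ‖x‖) ^ (2 : ℝ≥0∞).toReal := by
    rw [lp.norm_rpow_eq_tsum h2]
    rw [Real.mul_rpow hC (norm_nonneg _), lp.norm_rpow_eq_tsum h2, ← tsum_mul_left]
    have hsum : Summable (fun n => ‖(x : ℕ → ℂ) n‖ ^ (2 : ℝ≥0∞).toReal) :=
      (lp.memℓp x).summable (by norm_num)
    have h0 : (∑' n, ‖shiftFun σ (x : ℕ → ℂ) n‖ ^ (2 : ℝ≥0∞).toReal)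
        = ∑' n, ‖shiftFun σ (x : ℕ → ℂ) (n+1)‖ ^ (2 : ℝ≥0∞).toReal := by
      rw [Summable.tsum_eq_zero_add]
      · simp [shiftFun, Real.zero_rpow (ne_of_gt h2)]
      · exact (memℓp_shiftFun hσ x).summable (by norm_num)
    rw [h0]
    apply Summable.tsum_le_tsum
    · intro n
      show ‖σ n * (x : ℕ → ℂ) n‖ ^ (2 : ℝ≥0∞).toReal ≤ _
      rw [← Real.mul_rpow hC (norm_nonneg _)]
      apply Real.rpow_le_rpow (norm_nonneg _) _ (le_of_lt h2)
      rw [norm_mul]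
      exact mul_le_mul_of_nonneg_right (hσ n) (norm_nonneg _)
    · exact (summable_nat_add_iff 1).2 ((memℓp_shiftFun hσ x).summable (by norm_num))
    · exact hsum.mul_left _
  exact (Real.rpow_le_rpow_iff (norm_nonneg _) (mul_nonneg hC (norm_nonneg x)) h2).1 key

def shiftOp (σ : ℕ → ℂ) {C : ℝ} (hσ : ∀ j, ‖σ j‖ ≤ C) : Hil →L[ℂ] Hil :=
  LinearMap.mkContinuous
    { toFun := fun x => (⟨shiftFun σ (x : ℕ → ℂ), memℓp_shiftFun hσ x⟩ : Hil)
      map_add' := by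
        intro x y
        apply lp.ext
        funext n
        cases n with
        | zero => show (0:ℂ) = 0 + 0; simp
        | succ k =>
          show σ k * ((x + y : Hil) : ℕ → ℂ) k = σ k * (x : ℕ → ℂ) k + σ k * (y : ℕ → ℂ) k
          rw [lp.coeFn_add, Pi.add_apply]; ring
      map_smul' := by
        intro c x
        apply lp.ext
        funext n
        cases n with
        | zero => simp [shiftFun]
        | succ k => simp [shiftFun, lp.coeFn_smul, Pi.smul_apply, smul_eq_mul]; ring }
    C (fun x => norm_shiftFun_le hσ x _)

lemma shiftOp_apply (σ : ℕ → ℂ) {C : ℝ} (hσ : ∀ j, ‖σ j‖ ≤ C) (x : Hil) (n : ℕ) :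
    (shiftOp σ hσ x : ℕ → ℂ) n = shiftFun σ (x : ℕ → ℂ) n := rfl

lemma norm_shiftOp_le (σ : ℕ → ℂ) {C : ℝ} (hσ : ∀ j, ‖σ j‖ ≤ C) (hC : 0 ≤ C) :
    ‖shiftOp σ hσ‖ ≤ C :=
  LinearMap.mkContinuous_norm_le _ hC _

lemma shiftOp_sub (σ τ : ℕ → ℂ) {C C' : ℝ} (hσ : ∀ j, ‖σ j‖ ≤ C) (hτ : ∀ j, ‖τ j‖ ≤ C')
    {C'' : ℝ} (h : ∀ j, ‖σ j - τ j‖ ≤ C'') :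
    shiftOp σ hσ - shiftOp τ hτ = shiftOp (fun j => σ j - τ j) h := by
  apply ContinuousLinearMap.ext
  intro x
  apply lp.ext
  funext n
  have : ((shiftOp σ hσ - shiftOp τ hτ) x : ℕ → ℂ) n
      = (shiftOp σ hσ x : ℕ → ℂ) n - (shiftOp τ hτ x : ℕ → ℂ) n := by
    rw [ContinuousLinearMap.sub_apply, lp.coeFn_sub, Pi.sub_apply]
  rw [this, shiftOp_apply, shiftOp_apply, shiftOp_apply]
  cases n with
  | zero => simp [shiftFun]
  | succ k => simp [shiftFun]; ring

/-! ### the Kakutani-type weights -/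

def nu (j : ℕ) : ℕ := padicValNat 2 (j + 1)
def Sv (j : ℕ) : ℕ := padicValNat 2 (Nat.factorial j)

lemma Sv_succ (j : ℕ) : Sv (j + 1) = Sv j + nu j := by
  unfold Sv nu
  rw [Nat.factorial_succ, padicValNat.mul (Nat.succ_ne_zero j) (Nat.factorial_ne_zero j)]
  ring

lemma Sv_le (j : ℕ) : Sv j ≤ j := by
  have h := sub_one_mul_padicValNat_factorial (p := 2) j
  unfold Sv
  omega

def wr (j : ℕ) : ℝ := ((2:ℝ) ^ nu j)⁻¹

lemma wr_pos (j : ℕ) : 0 < wr j := by unfold wr; positivity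

lemma wr_le_one (j : ℕ) : wr j ≤ 1 := by
  rw [wr, inv_le_one_iff₀]
  right
  exact one_le_pow₀ one_le_two

lemma wr_le_of_dvd {m j : ℕ} (h : 2 ^ m ∣ (j + 1)) : wr j ≤ ((2:ℝ)^m)⁻¹ := by
  have hm : m ≤ nu j := (padicValNat_dvd_iff_le (Nat.succ_ne_zero j)).1 h
  rw [wr]
  apply inv_anti₀ (by positivity)
  exact pow_le_pow_right₀ one_le_two hm

def xr (j : ℕ) : ℝ := ((4:ℝ)⁻¹) ^ j * 2 ^ Sv j

lemma xr_pos (j : ℕ) : 0 < xr j := by unfold xr; positivity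

lemma xr_zero : xr 0 = 1 := by simp [xr, Sv]

lemma xr_le (j : ℕ) : xr j ≤ (2:ℝ)⁻¹ ^ j := by
  have h2 : ((2:ℝ))^ Sv j ≤ 2 ^ j := pow_le_pow_right₀ one_le_two (Sv_le j)
  have : ((4:ℝ)⁻¹) ^ j * 2 ^ Sv j ≤ (4:ℝ)⁻¹ ^ j * 2 ^ j := by
    apply mul_le_mul_of_nonneg_left h2 (by positivity)
  apply le_trans this
  rw [← mul_pow]
  norm_num

lemma xr_eigen (j : ℕ) : xr (j + 1) * wr j = 4⁻¹ * xr j := by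
  rw [xr, xr, wr, Sv_succ, pow_add, pow_succ, pow_add]
  have h2 : ((2:ℝ)) ^ nu j ≠ 0 := by positivity
  field_simp

/-! ### the vector x -/

lemma memℓp_xc : Memℓp (fun j => ((xr j : ℂ))) 2 := by
  apply memℓp_gen
  have hg : Summable (fun j : ℕ => ((4:ℝ)⁻¹) ^ j) :=
    summable_geometric_of_lt_one (by norm_num) (by norm_num)
  apply hg.of_nonneg_of_le (fun j => by positivity)
  intro j
  rw [rpow_toReal_two]
  have h1 : ‖((xr j : ℂ))‖ = xr j := by
    rw [Complex.norm_real, Real.norm_eq_abs, abs_of_pos (xr_pos j)]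
  rw [h1]
  have h2 : xr j ^ (2:ℕ) ≤ ((2:ℝ)⁻¹ ^ j) ^ (2:ℕ) :=
    pow_le_pow_left₀ (le_of_lt (xr_pos j)) (xr_le j) 2
  apply le_trans h2
  rw [← pow_mul, mul_comm, pow_mul]
  norm_num

def xvec : Hil := ⟨fun j => ((xr j : ℂ)), memℓp_xc⟩

lemma xvec_apply (j : ℕ) : (xvec : ℕ → ℂ) j = ((xr j : ℂ)) := rfl

lemma norm_xvec_pos : 0 < ‖xvec‖ := by
  rw [norm_pos_iff]
  intro h
  have h0 : (xvec : ℕ → ℂ) 0 = 0 := by rw [h]; simp [lp.coeFn_zero]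
  rw [xvec_apply, xr_zero] at h0
  norm_num at h0

/-! ### the operators -/

def σV : ℕ → ℂ := fun j => ((8 * wr j : ℝ) : ℂ)

lemma hσV : ∀ j, ‖σV j‖ ≤ (8:ℝ) := by
  intro j
  rw [σV, Complex.norm_real, Real.norm_eq_abs,
    abs_of_pos (by have := wr_pos j; positivity)]
  nlinarith [wr_le_one j, wr_pos j]

def σU (m : ℕ) : ℕ → ℂ := fun j => if 2^m ∣ (j+1) then 0 else σV j

lemma hσU (m : ℕ) : ∀ j, ‖σU m j‖ ≤ (8:ℝ) := by
  intro j
  rw [σU]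
  by_cases h : 2^m ∣ (j+1)
  · rw [if_pos h]; simp
  · rw [if_neg h]; exact hσV j

def Vop : Hil →L[ℂ] Hil := shiftOp σV hσV
def Uop (m : ℕ) : Hil →L[ℂ] Hil := shiftOp (σU m) (hσU m)

def Aop : Hil →L[ℂ] Hil := Vop - 1
def Bop (m : ℕ) : Hil →L[ℂ] Hil := Uop m - Vop

lemma A_plus_B (m : ℕ) : Aop + Bop m = Uop m - 1 := by
  rw [Aop, Bop]; abel

/-! ### lower bound -/

lemma inner_V (z : Hil) : ⟪xvec, Vop z⟫ = 2 * ⟪xvec, z⟫ := by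
  rw [lp.inner_eq_tsum, lp.inner_eq_tsum]
  rw [Summable.tsum_eq_zero_add (lp.summable_inner (𝕜 := ℂ) xvec (Vop z))]
  have h0 : ⟪(xvec : ℕ → ℂ) 0, (Vop z : ℕ → ℂ) 0⟫ = 0 := by
    rw [show (Vop z : ℕ → ℂ) 0 = 0 from rfl]
    exact inner_zero_right _
  rw [h0, zero_add]
  have hterm : ∀ k : ℕ, ⟪(xvec : ℕ → ℂ) (k+1), (Vop z : ℕ → ℂ) (k+1)⟫
      = 2 * ⟪(xvec : ℕ → ℂ) k, (z : ℕ → ℂ) k⟫ := by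
    intro k
    rw [show (Vop z : ℕ → ℂ) (k+1) = σV k * (z : ℕ → ℂ) k from rfl]
    rw [xvec_apply, xvec_apply, RCLike.inner_apply, RCLike.inner_apply, σV]
    rw [Complex.conj_ofReal, Complex.conj_ofReal]
    rw [mul_comm _ (((xr (k+1) : ℝ)) : ℂ), ← mul_assoc, ← Complex.ofReal_mul]
    have : xr (k+1) * (8 * wr k) = 2 * xr k := by
      have := xr_eigen k
      nlinarith [xr_eigen k]
    rw [this]
    push_cast
    ring
  calc ∑' k, ⟪(xvec : ℕ → ℂ) (k+1), (Vop z : ℕ → ℂ) (k+1)⟫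
      = ∑' k, 2 * ⟪(xvec : ℕ → ℂ) k, (z : ℕ → ℂ) k⟫ := tsum_congr hterm
    _ = 2 * ∑' k, ⟪(xvec : ℕ → ℂ) k, (z : ℕ → ℂ) k⟫ := tsum_mul_left

lemma inner_A (z : Hil) : ⟪xvec, Aop z⟫ = ⟪xvec, z⟫ := by
  rw [Aop, ContinuousLinearMap.sub_apply, ContinuousLinearMap.one_apply,
    inner_sub_right, inner_V]
  ring

lemma inner_pow (t : ℝ) (n : ℕ) (z : Hil) :
    ⟪xvec, ((t • Aop) ^ n) z⟫ = (t:ℂ)^n * ⟪xvec, z⟫ := by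
  induction n generalizing z with
  | zero => simp
  | succ k ih =>
    rw [pow_succ', ContinuousLinearMap.mul_apply]
    rw [ContinuousLinearMap.smul_apply]
    rw [csmul, inner_smul_right, inner_A, ih]
    ring

lemma exp_lower (t : ℝ) : Real.exp t ≤ ‖NormedSpace.exp (t • Aop)‖ := by
  set F : (Hil →L[ℂ] Hil) →L[ℂ] ℂ :=
    (innerSL ℂ xvec).comp (ContinuousLinearMap.apply ℂ Hil xvec) with hF
  have hFT : ∀ T : Hil →L[ℂ] Hil, F T = ⟪xvec, T xvec⟫ := fun T => rfl
  have hsum := NormedSpace.expSeries_summable' (𝕂 := ℂ) (t • Aop)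
  have key : F (NormedSpace.exp (t • Aop)) = Complex.exp (t:ℂ) * ⟪xvec, xvec⟫ := by
    rw [NormedSpace.exp_eq_tsum ℂ]
    rw [F.map_tsum hsum]
    have hterm : ∀ n : ℕ, F ((((n.factorial :ℂ))⁻¹) • (t • Aop) ^ n)
        = ((n.factorial:ℂ))⁻¹ * (t:ℂ)^n * ⟪xvec, xvec⟫ := by
      intro n
      rw [map_smul, hFT, inner_pow]
      simp [smul_eq_mul]
      ring
    calc (∑' n : ℕ, F ((((n.factorial:ℂ))⁻¹) • (t • Aop) ^ n))
        = ∑' n : ℕ, ((n.factorial:ℂ))⁻¹ * (t:ℂ)^n * ⟪xvec, xvec⟫ := tsum_congr hterm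
      _ = (∑' n : ℕ, ((n.factorial:ℂ))⁻¹ * (t:ℂ)^n) * ⟪xvec, xvec⟫ := tsum_mul_right
      _ = Complex.exp (t:ℂ) * ⟪xvec, xvec⟫ := by
          congr 1
          rw [Complex.exp_eq_exp_ℂ, NormedSpace.exp_eq_tsum ℂ]
          simp [smul_eq_mul]
  have hnorm : ‖F (NormedSpace.exp (t • Aop))‖ = Real.exp t * ‖xvec‖^2 := by
    rw [key, norm_mul]
    rw [inner_self_eq_norm_sq_to_K (𝕜 := ℂ)]
    rw [Complex.norm_exp_ofReal]
    rw [norm_pow, RCLike.norm_ofReal, abs_of_nonneg (norm_nonneg _)]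
  have hbound : ‖F (NormedSpace.exp (t • Aop))‖
      ≤ ‖xvec‖ * (‖NormedSpace.exp (t • Aop)‖ * ‖xvec‖) := by
    rw [hFT]
    exact le_trans (norm_inner_le_norm _ _)
      (mul_le_mul_of_nonneg_left ((NormedSpace.exp (t • Aop)).le_opNorm xvec) (norm_nonneg _))
  rw [hnorm] at hbound
  have hx := norm_xvec_pos
  have h2 : Real.exp t * ‖xvec‖^2 ≤ ‖NormedSpace.exp (t • Aop)‖ * ‖xvec‖^2 := by nlinarith
  exact le_of_mul_le_mul_right h2 (by positivity)

/-! ### nilpotency of the perturbed operator -/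

lemma pow_coord_zero (m : ℕ) :
    ∀ (N : ℕ) (x : Hil) (n : ℕ), n % 2^m < N → (((Uop m)^N) x : ℕ → ℂ) n = 0 := by
  intro N
  induction N with
  | zero => intro x n h; omega
  | succ N ih =>
    intro x n h
    rw [pow_succ', ContinuousLinearMap.mul_apply]
    cases n with
    | zero => rfl
    | succ k =>
      show σU m k * (((Uop m)^N) x : ℕ → ℂ) k = 0
      by_cases hd : 2^m ∣ (k+1)
      · rw [σU, if_pos hd, zero_mul]
      · rw [ih x k ?_, mul_zero]
        have hM : 0 < 2^m := Nat.pow_pos (by norm_num)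
        have h1 : ¬ ((k+1) % 2^m = 0) := fun hc => hd (Nat.dvd_of_mod_eq_zero hc)
        have h2 : k % 2^m < 2^m := Nat.mod_lt _ hM
        have key := Nat.mod_add_mod k (2^m) 1
        rcases Nat.lt_or_ge (k % 2^m + 1) (2^m) with hlt | hge
        · rw [Nat.mod_eq_of_lt hlt] at key
          omega
        · have hEq : k % 2^m + 1 = 2^m := by omega
          rw [hEq, Nat.mod_self] at key
          omega

lemma U_pow_eq_zero (m : ℕ) : (Uop m) ^ (2^m) = 0 := by
  apply ContinuousLinearMap.ext
  intro x
  rw [ContinuousLinearMap.zero_apply]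
  apply lp.ext
  funext n
  rw [lp.coeFn_zero, Pi.zero_apply]
  exact pow_coord_zero m _ x n (Nat.mod_lt _ (Nat.pow_pos (by norm_num)))

/-! ### upper bound -/

lemma norm_U_pow_le (m n : ℕ) : ‖(Uop m) ^ n‖ ≤ 8 ^ n := by
  induction n with
  | zero =>
    simp only [pow_zero]
    exact ContinuousLinearMap.norm_id_le
  | succ k ih =>
    rw [pow_succ, pow_succ]
    calc ‖(Uop m) ^ k * (Uop m)‖ ≤ ‖(Uop m) ^ k‖ * ‖Uop m‖ := norm_mul_le _ _
      _ ≤ 8 ^ k * 8 := by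
          apply mul_le_mul ih (norm_shiftOp_le _ _ (by norm_num)) (norm_nonneg _) (by positivity)

lemma exp_tU_norm_le (m : ℕ) (t : ℝ) (ht : 0 ≤ t) :
    ‖NormedSpace.exp (t • Uop m)‖
      ≤ (∑ k ∈ Finset.range (2^m), (16:ℝ)^k) * Real.exp (t/2) := by
  have hexp : NormedSpace.exp (t • Uop m)
      = ∑' n : ℕ, ((n.factorial:ℂ))⁻¹ • (t • Uop m)^n :=
    congrFun (NormedSpace.exp_eq_tsum ℂ) _
  rw [hexp]
  have hzero : ∀ n ∉ Finset.range (2^m), ((n.factorial:ℂ))⁻¹ • (t • Uop m) ^ n = 0 := by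
    intro n hn
    rw [Finset.mem_range, not_lt] at hn
    have : (Uop m) ^ n = 0 := by
      rw [show n = 2^m + (n - 2^m) by omega, pow_add, U_pow_eq_zero, zero_mul]
    rw [smul_pow, this, smul_zero, smul_zero]
  rw [tsum_eq_sum hzero]
  apply le_trans (norm_sum_le _ _)
  rw [Finset.sum_mul]
  apply Finset.sum_le_sum
  intro n _
  rw [norm_smul ((n.factorial:ℂ))⁻¹ ((t • Uop m)^n), smul_pow,
    norm_smul (t^n) ((Uop m)^n)]
  have h1 : ‖((n.factorial:ℂ))⁻¹‖ = ((n.factorial:ℝ))⁻¹ := by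
    rw [norm_inv, Complex.norm_natCast]
  have h2 : ‖t ^ n‖ = t ^ n := by
    rw [Real.norm_eq_abs, abs_of_nonneg (by positivity)]
  rw [h1, h2]
  calc ((n.factorial:ℝ))⁻¹ * (t ^ n * ‖(Uop m) ^ n‖)
      ≤ ((n.factorial:ℝ))⁻¹ * (t ^ n * 8 ^ n) := by
        apply mul_le_mul_of_nonneg_left _ (by positivity)
        exact mul_le_mul_of_nonneg_left (norm_U_pow_le m n) (by positivity)
    _ = 16 ^ n * ((t/2) ^ n / n.factorial) := by
        rw [div_pow]
        have h16 : (16:ℝ)^n = 2^n * 8^n := by rw [← mul_pow]; norm_num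
        rw [h16]
        have h2n : (2:ℝ)^n ≠ 0 := by positivity
        field_simp
    _ ≤ 16 ^ n * Real.exp (t/2) :=
        mul_le_mul_of_nonneg_left (pow_div_factorial_le_exp _ (by positivity) n) (by positivity)

lemma exp_split_norm (m : ℕ) (t : ℝ) (ht : 0 ≤ t) :
    ‖NormedSpace.exp (t • (Uop m - 1))‖
      ≤ (∑ k ∈ Finset.range (2^m), (16:ℝ)^k) * Real.exp (-(1/2) * t) := by
  have hsplit : t • (Uop m - 1) = (-t : ℝ) • (1 : Hil →L[ℂ] Hil) + t • Uop m := by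
    rw [smul_sub, neg_smul, sub_eq_add_neg, add_comm]
  have hcomm : Commute ((-t : ℝ) • (1 : Hil →L[ℂ] Hil)) (t • Uop m) :=
    (Commute.one_left (t • Uop m)).smul_left (-t)
  letI : NormedAlgebra ℚ (Hil →L[ℂ] Hil) := NormedAlgebra.restrictScalars ℚ ℂ _
  rw [hsplit, NormedSpace.exp_add_of_commute hcomm]
  have h1 : NormedSpace.exp ((-t : ℝ) • (1 : Hil →L[ℂ] Hil))
      = Complex.exp (-t:ℂ) • (1 : Hil →L[ℂ] Hil) := by
    rw [csmul', show ((-t:ℝ):ℂ) • (1 : Hil →L[ℂ] Hil) = algebraMap ℂ _ ((-t:ℝ):ℂ) from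
      (Algebra.algebraMap_eq_smul_one _).symm]
    rw [← NormedSpace.algebraMap_exp_comm, ← Complex.exp_eq_exp_ℂ]
    rw [Algebra.algebraMap_eq_smul_one]
    push_cast
    ring_nf
  rw [h1]
  calc ‖(Complex.exp (-t:ℂ) • (1 : Hil →L[ℂ] Hil)) * NormedSpace.exp (t • Uop m)‖
      ≤ ‖Complex.exp (-t:ℂ) • (1 : Hil →L[ℂ] Hil)‖ * ‖NormedSpace.exp (t • Uop m)‖ :=
        norm_mul_le _ _
    _ ≤ Real.exp (-t) * ((∑ k ∈ Finset.range (2^m), (16:ℝ)^k) * Real.exp (t/2)) := by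
        apply mul_le_mul _ (exp_tU_norm_le m t ht) (norm_nonneg _) (Real.exp_nonneg _)
        rw [norm_smul (Complex.exp (-t:ℂ)) (1 : Hil →L[ℂ] Hil)]
        have : ‖Complex.exp (-t:ℂ)‖ = Real.exp (-t) := by
          rw [show ((-t:ℂ)) = ((-t:ℝ):ℂ) by push_cast; ring,
            Complex.norm_exp_ofReal]
        rw [this]
        calc Real.exp (-t) * ‖(1 : Hil →L[ℂ] Hil)‖ ≤ Real.exp (-t) * 1 :=
              mul_le_mul_of_nonneg_left ContinuousLinearMap.norm_id_le (Real.exp_nonneg _)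
          _ = Real.exp (-t) := mul_one _
    _ = (∑ k ∈ Finset.range (2^m), (16:ℝ)^k) * Real.exp (-(1/2) * t) := by
        rw [mul_comm (Real.exp (-t)), mul_assoc, ← Real.exp_add]
        have harg : t/2 + -t = -(1/2) * t := by ring
        rw [harg]

/-! ### smallness of the perturbations -/

lemma norm_B_le (m : ℕ) : ‖Bop m‖ ≤ 8 * ((2:ℝ)⁻¹)^m := by
  have hdiff : ∀ j, ‖σU m j - σV j‖ ≤ 8 * ((2:ℝ)⁻¹)^m := by
    intro j
    rw [σU]
    by_cases h : 2^m ∣ (j+1)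
    · rw [if_pos h, zero_sub, norm_neg, σV, Complex.norm_real, Real.norm_eq_abs,
        abs_of_pos (by have := wr_pos j; positivity)]
      have h1 := wr_le_of_dvd h
      have h2 : ((2:ℝ)^m)⁻¹ = ((2:ℝ)⁻¹)^m := by rw [← inv_pow]
      nlinarith [h2 ▸ h1]
    · rw [if_neg h, sub_self, norm_zero]
      positivity
  rw [Bop, Uop, Vop, shiftOp_sub _ _ _ _ hdiff]
  exact norm_shiftOp_le _ _ (by positivity)

end Stmt16

end Stmt16Aux



/-- There exists a bounded operator `A` on an
infinite-dimensional separable Hilbert space (here `ℓ²(ℕ, ℂ)`) with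
`‖e^{tA}‖ ≥ e^{ωt}` for some `ω > 0` (so the semigroup `e^{tA}` is unstable),
and a sequence of bounded operators `B_m` with `‖B_m‖ → 0` such that each
semigroup `e^{t(A + B_m)}` is exponentially stable. Thus instability of
autonomous linear equations in infinite dimensions is not robust under
arbitrarily small bounded perturbations. -/
theorem stmt16 :
    ∃ (A : lp (fun _ : ℕ => ℂ) 2 →L[ℂ] lp (fun _ : ℕ => ℂ) 2) (ω : ℝ), 0 < ω ∧
      (∀ t : ℝ, 0 ≤ t → Real.exp (ω * t) ≤ ‖NormedSpace.exp (t • A)‖) ∧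
      ∃ B : ℕ → (lp (fun _ : ℕ => ℂ) 2 →L[ℂ] lp (fun _ : ℕ => ℂ) 2),
        Filter.Tendsto (fun m => ‖B m‖) Filter.atTop (nhds 0) ∧
        ∀ m : ℕ, ∃ D > (0 : ℝ), ∃ ω' > (0 : ℝ), ∀ t : ℝ, 0 ≤ t →
          ‖NormedSpace.exp (t • (A + B m))‖ ≤ D * Real.exp (-ω' * t) := by
  refine ⟨Stmt16.Aop, 1, one_pos, ?_, Stmt16.Bop, ?_, ?_⟩
  · intro t ht
    rw [one_mul]
    exact Stmt16.exp_lower t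
  · apply squeeze_zero (fun m => norm_nonneg _) Stmt16.norm_B_le
    have h : Filter.Tendsto (fun m : ℕ => ((2:ℝ)⁻¹)^m) Filter.atTop (nhds 0) :=
      tendsto_pow_atTop_nhds_zero_of_lt_one (by norm_num) (by norm_num)
    simpa using h.const_mul (8:ℝ)
  · intro m
    refine ⟨∑ k ∈ Finset.range (2^m), (16:ℝ)^k, ?_, 1/2, by norm_num, ?_⟩
    · exact Finset.sum_pos (fun k _ => by positivity)
        ⟨0, Finset.mem_range.2 (Nat.pow_pos (by norm_num))⟩
    · intro t ht
      rw [Stmt16.A_plus_B m]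
      have h := Stmt16.exp_split_norm m t ht
      have harg : -(1/2 : ℝ) * t = -(1:ℝ)/2 * t := by ring
      calc ‖NormedSpace.exp (t • (Stmt16.Uop m - 1))‖
          ≤ (∑ k ∈ Finset.range (2^m), (16:ℝ)^k) * Real.exp (-(1/2) * t) := h
        _ = (∑ k ∈ Finset.range (2^m), (16:ℝ)^k) * Real.exp (-(1/2) * t) := rfl
end
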